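/- arXiv:2002.08719 — 11 statements merged into one kernel-verified Lean document; each statement's English description precedes it below -/
import Mathlib

section
/- Suppose either r > 1/2 and D, b > 0, or r = 1/2 and b > D > 0. Then there exist constants K₁, K₂ > 0 such that for all real numbers x, y with 0 < x ≤ y one has (D·x·y² + b·(1+x)^{2r}·y²)/(1+y²) − 2b·(1+x)^{2r}·y⁴/(1+y²)² + K₂·D·(1+x)^{2r}·y⁴/((1+y²)²·(1+log(1+y²))) ≤ K₁. -/
private lemma aux_final (D b K₁ K₂ A x y : ℝ)
    (hKDA : 0 ≤ K₂ * D * A)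
    (hN : (D * x + b * A) * y ^ 2 * (1 + y ^ 2) + (K₂ * D - 2 * b) * A * y ^ 4
          ≤ K₁ * (1 + y ^ 2) ^ 2) :
    (D * x * y ^ 2 + b * A * y ^ 2) / (1 + y ^ 2)
      - 2 * b * A * y ^ 4 / (1 + y ^ 2) ^ 2
      + K₂ * D * A * y ^ 4 / ((1 + y ^ 2) ^ 2 * (1 + Real.log (1 + y ^ 2))) ≤ K₁ := by
  have hP : (0:ℝ) < 1 + y ^ 2 := by positivity
  have hL : (0:ℝ) ≤ Real.log (1 + y ^ 2) := Real.log_nonneg (by nlinarith [sq_nonneg y])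
  have hP2 : (0:ℝ) < (1 + y ^ 2) ^ 2 := by positivity
  have h3 : K₂ * D * A * y ^ 4 / ((1 + y ^ 2) ^ 2 * (1 + Real.log (1 + y ^ 2)))
      ≤ K₂ * D * A * y ^ 4 / (1 + y ^ 2) ^ 2 := by
    apply div_le_div_of_nonneg_left (mul_nonneg hKDA (by positivity)) hP2
    nlinarith [mul_nonneg hP2.le hL]
  have heq : (D * x * y ^ 2 + b * A * y ^ 2) / (1 + y ^ 2)
      - 2 * b * A * y ^ 4 / (1 + y ^ 2) ^ 2
      + K₂ * D * A * y ^ 4 / (1 + y ^ 2) ^ 2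
      = ((D * x + b * A) * y ^ 2 * (1 + y ^ 2) + (K₂ * D - 2 * b) * A * y ^ 4)
        / (1 + y ^ 2) ^ 2 := by
    field_simp
    ring
  have hfin : ((D * x + b * A) * y ^ 2 * (1 + y ^ 2) + (K₂ * D - 2 * b) * A * y ^ 4)
      / (1 + y ^ 2) ^ 2 ≤ K₁ := by
    rw [div_le_iff₀ hP2]
    linarith
  linarith [heq ▸ hfin]

set_option maxHeartbeats 1000000 in
/-- Lemma 7.1: the key elementary inequality behind the result that strong
multiplicative noise prevents blow-up for the stochastic Euler–Poincaré equations. -/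
theorem noise_prevents_blowup_key_inequality
    (r D b : ℝ)
    (h : (1/2 < r ∧ 0 < D ∧ 0 < b) ∨ (r = 1/2 ∧ D < b ∧ 0 < D)) :
    ∃ K₁ K₂ : ℝ, 0 < K₁ ∧ 0 < K₂ ∧
      ∀ x y : ℝ, 0 < x → x ≤ y →
        (D * x * y ^ 2 + b * (1 + x) ^ (2 * r) * y ^ 2) / (1 + y ^ 2)
          - 2 * b * (1 + x) ^ (2 * r) * y ^ 4 / (1 + y ^ 2) ^ 2
          + K₂ * D * (1 + x) ^ (2 * r) * y ^ 4
              / ((1 + y ^ 2) ^ 2 * (1 + Real.log (1 + y ^ 2))) ≤ K₁ := by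
  rcases h with ⟨hr, hD, hb⟩ | ⟨hr, hDb, hD⟩
  · -- case r > 1/2
    obtain ⟨M₀, hM₀def⟩ : ∃ M₀ : ℝ, M₀ = max 1 ((2 * D / b) ^ (1 / (2 * r - 1))) := ⟨_, rfl⟩
    have hM₀1 : (1:ℝ) ≤ M₀ := hM₀def ▸ le_max_left _ _
    have hM₀pos : (0:ℝ) < M₀ := lt_of_lt_of_le one_pos hM₀1
    obtain ⟨F, hFdef⟩ : ∃ F : ℝ, F = (4:ℝ) ^ (2 * r) := ⟨_, rfl⟩
    have h4pos : (0:ℝ) < F := hFdef ▸ Real.rpow_pos_of_pos (by norm_num) _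
    refine ⟨D * M₀ + 3 / 2 * b * F + 1, b / (4 * D), ?_, by positivity, ?_⟩
    · nlinarith [mul_pos hb h4pos, mul_pos hD hM₀pos]
    intro x y hx hxy
    have hx1 : (0:ℝ) < 1 + x := by linarith
    have hA0 : (0:ℝ) ≤ (1 + x) ^ (2 * r) := Real.rpow_nonneg hx1.le _
    have hA1 : (1:ℝ) ≤ (1 + x) ^ (2 * r) := Real.one_le_rpow (by linarith) (by linarith)
    have hKD : b / (4 * D) * D = b / 4 := by field_simp
    have h2r1 : (0:ℝ) < 2 * r - 1 := by linarith
    -- key bound : D * x ≤ (b/2) * A + D * M₀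
    have hDx : D * x ≤ b / 2 * (1 + x) ^ (2 * r) + D * M₀ := by
      by_cases hcase : 1 + x ≤ M₀
      · have h1 : D * x ≤ D * M₀ := by nlinarith
        nlinarith [mul_nonneg hb.le hA0]
      · push_neg at hcase
        have hbase : (2 * D / b) ^ (1 / (2 * r - 1)) < 1 + x :=
          lt_of_le_of_lt (hM₀def ▸ le_max_right _ _) hcase
        have h1 : 2 * D / b ≤ (1 + x) ^ (2 * r - 1) := by
          have h2 := Real.rpow_le_rpow (Real.rpow_nonneg (by positivity) _) hbase.le h2r1.le
          rwa [← Real.rpow_mul (by positivity), one_div,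
            inv_mul_cancel₀ h2r1.ne', Real.rpow_one] at h2
        rw [div_le_iff₀ hb] at h1
        have hsplit : (1 + x) ^ (2 * r) = (1 + x) ^ (2 * r - 1) * (1 + x) := by
          have h3 := Real.rpow_add hx1 (2 * r - 1) 1
          rw [Real.rpow_one, show 2 * r - 1 + 1 = 2 * r by ring] at h3
          exact h3
        rw [hsplit]
        have hApos : (0:ℝ) ≤ (1 + x) ^ (2 * r - 1) := Real.rpow_nonneg hx1.le _
        nlinarith [mul_nonneg hD.le hM₀pos.le]
    apply aux_final
    · positivity
    rw [hKD, show y ^ 4 = (y ^ 2) ^ 2 by ring]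
    have hA4 : x ^ 2 ≤ y ^ 2 → (1 + x) ^ (2 * r) ≤ F ∨ (6:ℝ) ≤ y ^ 2 := by
      intro hxs
      by_cases hbig : (6:ℝ) ≤ y ^ 2
      · exact Or.inr hbig
      · push_neg at hbig
        have hx3 : x ≤ 3 := by nlinarith
        exact Or.inl (hFdef ▸ Real.rpow_le_rpow hx1.le (by linarith) (by linarith))
    obtain ⟨A, hAdef⟩ : ∃ A, A = (1 + x) ^ (2 * r) := ⟨_, rfl⟩
    rw [← hAdef] at hDx hA0 hA1 hA4 ⊢
    obtain ⟨s, hsdef⟩ : ∃ s, s = y ^ 2 := ⟨_, rfl⟩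
    rw [← hsdef] at hA4 ⊢
    have hs0 : (0:ℝ) ≤ s := hsdef ▸ sq_nonneg y
    have hxs : x ^ 2 ≤ s := by rw [hsdef]; nlinarith
    rcases hA4 hxs with hA4 | hbig
    · -- small s : A ≤ F
      linarith [mul_le_mul_of_nonneg_right hDx (mul_nonneg hs0 (by linarith : (0:ℝ) ≤ 1 + s)),
        mul_nonneg (mul_nonneg hb.le hA0) (sq_nonneg s),
        mul_le_mul_of_nonneg_left
          (mul_le_mul hA4 (by nlinarith : s * (1 + s) ≤ (1 + s) ^ 2)
            (mul_nonneg hs0 (by linarith)) h4pos.le)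
          (by positivity : (0:ℝ) ≤ 3 / 2 * b),
        mul_nonneg (mul_pos hD hM₀pos).le
          (by nlinarith : (0:ℝ) ≤ (1 + s) ^ 2 - s * (1 + s)),
        sq_nonneg (1 + s)]
    · -- large s : 6 ≤ s
      linarith [mul_le_mul_of_nonneg_right hDx (mul_nonneg hs0 (by linarith : (0:ℝ) ≤ 1 + s)),
        mul_nonneg (mul_nonneg (mul_nonneg hb.le hA0) hs0)
          (by linarith : (0:ℝ) ≤ s / 4 - 3 / 2),
        mul_nonneg (mul_pos hD hM₀pos).le
          (by nlinarith : (0:ℝ) ≤ (1 + s) ^ 2 - s * (1 + s)),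
        mul_nonneg (by positivity : (0:ℝ) ≤ 3 / 2 * b * F + 1) (sq_nonneg (1 + s))]
  · -- case r = 1/2
    subst hr
    have hb : (0:ℝ) < b := lt_trans hD hDb
    have hbD : (0:ℝ) < b - D := by linarith
    refine ⟨(D + b) * (2 + 2 * (D + b) / (b - D)) + 1, (b - D) / (2 * D), ?_, by positivity, ?_⟩
    · positivity
    intro x y hx hxy
    have hx1 : (0:ℝ) < 1 + x := by linarith
    rw [show (2:ℝ) * (1 / 2) = 1 by norm_num, Real.rpow_one]
    have hKD : (b - D) / (2 * D) * D = (b - D) / 2 := by field_simp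
    apply aux_final
    · rw [hKD]; nlinarith
    rw [hKD, show y ^ 4 = (y ^ 2) ^ 2 by ring]
    have hyA : y ≤ 1 + y ^ 2 := by nlinarith [sq_nonneg (y - 1)]
    have hA2 : 1 + x ≤ 2 + y ^ 2 := by linarith
    obtain ⟨s, hsdef⟩ : ∃ s, s = y ^ 2 := ⟨_, rfl⟩
    rw [← hsdef] at hA2 ⊢
    have hs0 : (0:ℝ) ≤ s := hsdef ▸ sq_nonneg y
    have hDx : D * x ≤ D * (1 + x) := by nlinarith
    by_cases hbig : 2 * (D + b) ≤ (b - D) * s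
    · linarith [mul_le_mul_of_nonneg_right hDx (mul_nonneg hs0 (by linarith : (0:ℝ) ≤ 1 + s)),
        mul_nonneg (mul_nonneg hx1.le hs0)
          (by linarith : (0:ℝ) ≤ (b - D) / 2 * s - (D + b)),
        mul_nonneg (by positivity :
          (0:ℝ) ≤ (D + b) * (2 + 2 * (D + b) / (b - D)) + 1) (sq_nonneg (1 + s))]
    · push_neg at hbig
      have hsS : s ≤ 2 + 2 * (D + b) / (b - D) - 2 := by
        rw [show 2 + 2 * (D + b) / (b - D) - 2 = 2 * (D + b) / (b - D) by ring,
          le_div_iff₀ hbD]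
        nlinarith
      linarith [mul_le_mul_of_nonneg_right hDx (mul_nonneg hs0 (by linarith : (0:ℝ) ≤ 1 + s)),
        mul_nonneg (mul_nonneg (by linarith : (0:ℝ) ≤ (3 * b + D) / 2) hx1.le) (sq_nonneg s),
        mul_le_mul_of_nonneg_left
          (mul_le_mul hA2 (by nlinarith : s * (1 + s) ≤ (1 + s) ^ 2)
            (mul_nonneg hs0 (by linarith)) (by linarith : (0:ℝ) ≤ 2 + s))
          (by positivity : (0:ℝ) ≤ D + b),
        mul_le_mul_of_nonneg_left
          (mul_le_mul_of_nonneg_right (by linarith : 2 + s ≤ 2 + 2 * (D + b) / (b - D))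
            (sq_nonneg (1 + s)))
          (by positivity : (0:ℝ) ≤ D + b),
        sq_nonneg (1 + s)]
end

section
/- Let v : ℝ → ℝ be continuously differentiable and 2π-periodic. Then for every x ∈ [0,2π], ∫₀^{2π} G_𝕋(x−y) ( v(y)² + ½ v'(y)² ) dy ≥ ½ v(x)². -/
open MeasureTheory

noncomputable section

def GT (z : ℝ) : ℝ :=
  Real.cosh (z - 2 * Real.pi * (⌊z / (2 * Real.pi)⌋ : ℝ) - Real.pi)
    / (2 * Real.sinh Real.pi)

lemma two_pi_pos' : (0:ℝ) < 2 * Real.pi := by positivity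

lemma GT_eq_pos {z : ℝ} (h0 : 0 ≤ z) (h2 : z ≤ 2 * Real.pi) :
    GT z = Real.cosh (z - Real.pi) / (2 * Real.sinh Real.pi) := by
  rcases eq_or_lt_of_le h2 with h | h
  · have hf : ⌊z / (2 * Real.pi)⌋ = 1 := by
      rw [h, div_self (ne_of_gt two_pi_pos')]; exact Int.floor_one
    unfold GT
    rw [hf, h]
    have e1 : 2*Real.pi - 2*Real.pi*((1:ℤ):ℝ) - Real.pi = -Real.pi := by push_cast; ring
    have e2 : 2*Real.pi - Real.pi = Real.pi := by ring
    rw [e1, e2, Real.cosh_neg]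
  · have hf : ⌊z / (2 * Real.pi)⌋ = 0 := by
      rw [Int.floor_eq_zero_iff]
      exact ⟨div_nonneg h0 (le_of_lt two_pi_pos'), (div_lt_one two_pi_pos').2 h⟩
    unfold GT
    rw [hf]
    norm_num

lemma GT_eq_neg {z : ℝ} (h0 : -(2 * Real.pi) ≤ z) (h2 : z ≤ 0) :
    GT z = Real.cosh (z + Real.pi) / (2 * Real.sinh Real.pi) := by
  rcases eq_or_lt_of_le h2 with h | h
  · have hf : ⌊z / (2 * Real.pi)⌋ = 0 := by rw [h]; simp
    unfold GT
    rw [hf, h]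
    have e1 : (0:ℝ) - 2*Real.pi*((0:ℤ):ℝ) - Real.pi = -Real.pi := by push_cast; ring
    have e2 : (0:ℝ) + Real.pi = Real.pi := by ring
    rw [e1, e2, Real.cosh_neg]
  · have hf : ⌊z / (2 * Real.pi)⌋ = -1 := by
      rw [Int.floor_eq_iff]
      constructor
      · push_cast
        rw [neg_le, ← neg_div, div_le_one two_pi_pos']
        linarith
      · push_cast
        norm_num
        exact div_neg_of_neg_of_pos h two_pi_pos'
    unfold GT
    rw [hf]
    have e1 : z - 2*Real.pi*((-1:ℤ):ℝ) - Real.pi = z + Real.pi := by push_cast; ring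
    rw [e1]

lemma key_bound (v : ℝ → ℝ) (hv : ContDiff ℝ 1 v) (a b c : ℝ) (hab : a ≤ b) :
    Real.sinh (b - c) * v b ^ 2 / 2 - Real.sinh (a - c) * v a ^ 2 / 2
      ≤ ∫ y in a..b, Real.cosh (y - c) * (v y ^ 2 + (1 / 2) * (deriv v y) ^ 2) := by
  have hdv : Differentiable ℝ v := hv.differentiable one_ne_zero
  have hdc : Continuous (deriv v) := hv.continuous_deriv le_rfl
  set F' : ℝ → ℝ := fun y =>
    Real.cosh (y - c) * v y ^ 2 / 2 + Real.sinh (y - c) * (v y * deriv v y) with hF'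
  have hF : ∀ y : ℝ, HasDerivAt (fun t => Real.sinh (t - c) * v t ^ 2 / 2) (F' y) y := by
    intro y
    have h1 : HasDerivAt (fun t : ℝ => Real.sinh (t - c)) (Real.cosh (y - c)) y := by
      have := (Real.hasDerivAt_sinh (y - c)).comp y ((hasDerivAt_id y).sub_const c)
      simp only [mul_one] at this
      exact this
    have h2 : HasDerivAt (fun t => v t ^ 2) (2 * v y * deriv v y) y := by
      have := (hdv y).hasDerivAt.pow 2
      rw [show (2 * v y * deriv v y) = ((2:ℕ):ℝ) * v y ^ (2 - 1) * deriv v y by norm_num]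
      exact this
    have h3 := (h1.mul h2).div_const 2
    have e : F' y = (Real.cosh (y - c) * v y ^ 2 + Real.sinh (y - c) * (2 * v y * deriv v y)) / 2 := by
      simp only [hF']
      ring
    rw [e]
    exact h3
  have hcF' : Continuous F' := by
    apply Continuous.add
    · exact ((Real.continuous_cosh.comp (continuous_id.sub continuous_const)).mul
        ((hdv.continuous).pow 2)).div_const 2
    · exact (Real.continuous_sinh.comp (continuous_id.sub continuous_const)).mul
        ((hdv.continuous).mul hdc)
  have hcg : Continuous fun y => Real.cosh (y - c) * (v y ^ 2 + (1 / 2) * (deriv v y) ^ 2) := by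
    exact (Real.continuous_cosh.comp (continuous_id.sub continuous_const)).mul
      (((hdv.continuous).pow 2).add ((continuous_const.mul (hdc.pow 2))))
  have hFTC := intervalIntegral.integral_eq_sub_of_hasDerivAt
    (fun y _ => hF y) (hcF'.intervalIntegrable a b)
  have hmono : (∫ y in a..b, F' y)
      ≤ ∫ y in a..b, Real.cosh (y - c) * (v y ^ 2 + (1 / 2) * (deriv v y) ^ 2) := by
    apply intervalIntegral.integral_mono_on hab (hcF'.intervalIntegrable a b)
      (hcg.intervalIntegrable a b)
    intro y _
    have hcp := Real.cosh_pos (y - c)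
    have hcs := Real.cosh_sq (y - c)
    have hid : Real.cosh (y - c) *
        (2 * (Real.cosh (y - c) * (v y ^ 2 + (1 / 2) * (deriv v y) ^ 2) - F' y))
        = (Real.cosh (y - c) * v y - Real.sinh (y - c) * deriv v y) ^ 2
          + (deriv v y) ^ 2 := by
      simp only [hF']
      linear_combination (deriv v y) ^ 2 * hcs
    nlinarith [sq_nonneg (Real.cosh (y - c) * v y - Real.sinh (y - c) * deriv v y),
      sq_nonneg (deriv v y)]
  rw [hFTC] at hmono
  exact hmono

/-- The key convolution lower bound `G_𝕋 * (v² + ½ v_x²) ≥ ½ v²` for `C¹`,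
`2π`-periodic functions `v`. -/
theorem green_convolution_lower_bound
    (v : ℝ → ℝ) (hv : ContDiff ℝ 1 v) (hper : ∀ x, v (x + 2 * Real.pi) = v x)
    (x : ℝ) (hx : x ∈ Set.Icc (0 : ℝ) (2 * Real.pi)) :
    (1 / 2) * (v x) ^ 2
      ≤ ∫ y in (0 : ℝ)..(2 * Real.pi),
          GT (x - y) * ((v y) ^ 2 + (1 / 2) * (deriv v y) ^ 2) := by
  obtain ⟨hx0, hx2⟩ := hx
  have hs : 0 < Real.sinh Real.pi := Real.sinh_pos_iff.2 Real.pi_pos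
  have h2s : (0:ℝ) < 2 * Real.sinh Real.pi := by linarith
  have hdv : Differentiable ℝ v := hv.differentiable one_ne_zero
  have hdc : Continuous (deriv v) := hv.continuous_deriv le_rfl
  set W : ℝ → ℝ := fun y => (v y) ^ 2 + (1 / 2) * (deriv v y) ^ 2 with hWdef
  have hWc : Continuous W := ((hdv.continuous).pow 2).add (continuous_const.mul (hdc.pow 2))
  have e1 : Set.EqOn (fun y => GT (x - y) * W y)
      (fun y => (2 * Real.sinh Real.pi)⁻¹ * (Real.cosh (y - (x - Real.pi)) * W y))
      (Set.uIcc 0 x) := by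
    intro y hy
    rw [Set.uIcc_of_le hx0] at hy
    have h0 : 0 ≤ x - y := by linarith [hy.2]
    have h2 : x - y ≤ 2 * Real.pi := by linarith [hy.1]
    simp only
    rw [GT_eq_pos h0 h2]
    have : x - y - Real.pi = -(y - (x - Real.pi)) := by ring
    rw [this, Real.cosh_neg]
    ring
  have e2 : Set.EqOn (fun y => GT (x - y) * W y)
      (fun y => (2 * Real.sinh Real.pi)⁻¹ * (Real.cosh (y - (x + Real.pi)) * W y))
      (Set.uIcc x (2 * Real.pi)) := by
    intro y hy
    rw [Set.uIcc_of_le hx2] at hy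
    have h0 : -(2 * Real.pi) ≤ x - y := by linarith [hy.2]
    have h2 : x - y ≤ 0 := by linarith [hy.1]
    simp only
    rw [GT_eq_neg h0 h2]
    have : x - y + Real.pi = -(y - (x + Real.pi)) := by ring
    rw [this, Real.cosh_neg]
    ring
  have hc1 : Continuous fun y =>
      (2 * Real.sinh Real.pi)⁻¹ * (Real.cosh (y - (x - Real.pi)) * W y) :=
    continuous_const.mul
      ((Real.continuous_cosh.comp (continuous_id.sub continuous_const)).mul hWc)
  have hc2 : Continuous fun y =>
      (2 * Real.sinh Real.pi)⁻¹ * (Real.cosh (y - (x + Real.pi)) * W y) :=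
    continuous_const.mul
      ((Real.continuous_cosh.comp (continuous_id.sub continuous_const)).mul hWc)
  have hi1 : IntervalIntegrable (fun y => GT (x - y) * W y) volume 0 x := by
    rw [intervalIntegrable_iff]
    refine IntegrableOn.congr_fun ?_ (fun y hy => (e1 (Set.uIoc_subset_uIcc hy)).symm)
      measurableSet_uIoc
    rw [← intervalIntegrable_iff]
    exact hc1.intervalIntegrable 0 x
  have hi2 : IntervalIntegrable (fun y => GT (x - y) * W y) volume x (2 * Real.pi) := by
    rw [intervalIntegrable_iff]
    refine IntegrableOn.congr_fun ?_ (fun y hy => (e2 (Set.uIoc_subset_uIcc hy)).symm)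
      measurableSet_uIoc
    rw [← intervalIntegrable_iff]
    exact hc2.intervalIntegrable x (2 * Real.pi)
  rw [← intervalIntegral.integral_add_adjacent_intervals hi1 hi2,
    intervalIntegral.integral_congr e1, intervalIntegral.integral_congr e2,
    intervalIntegral.integral_const_mul, intervalIntegral.integral_const_mul]
  have k1 := key_bound v hv 0 x (x - Real.pi) hx0
  have k2 := key_bound v hv x (2 * Real.pi) (x + Real.pi) hx2
  have a1 : x - (x - Real.pi) = Real.pi := by ring
  have a2 : (0:ℝ) - (x - Real.pi) = Real.pi - x := by ring
  have a3 : 2 * Real.pi - (x + Real.pi) = Real.pi - x := by ring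
  have a4 : x - (x + Real.pi) = -Real.pi := by ring
  rw [a1, a2] at k1
  rw [a3, a4, Real.sinh_neg] at k2
  have hv2 : v (2 * Real.pi) = v 0 := by simpa using hper 0
  rw [hv2] at k2
  have hsum : Real.sinh Real.pi * v x ^ 2
      ≤ (∫ y in (0:ℝ)..x, Real.cosh (y - (x - Real.pi)) * W y)
        + ∫ y in x..(2 * Real.pi), Real.cosh (y - (x + Real.pi)) * W y := by
    have := add_le_add k1 k2
    calc Real.sinh Real.pi * v x ^ 2
        = (Real.sinh Real.pi * v x ^ 2 / 2 - Real.sinh (Real.pi - x) * v 0 ^ 2 / 2)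
          + (Real.sinh (Real.pi - x) * v 0 ^ 2 / 2 - -Real.sinh Real.pi * v x ^ 2 / 2) := by
          ring
      _ ≤ _ := this
  calc (1 / 2) * (v x) ^ 2
      = (2 * Real.sinh Real.pi)⁻¹ * (Real.sinh Real.pi * v x ^ 2) := by
        field_simp
    _ ≤ (2 * Real.sinh Real.pi)⁻¹ *
        ((∫ y in (0:ℝ)..x, Real.cosh (y - (x - Real.pi)) * W y)
          + ∫ y in x..(2 * Real.pi), Real.cosh (y - (x + Real.pi)) * W y) :=
        mul_le_mul_of_nonneg_left hsum (le_of_lt (inv_pos.2 h2s))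
    _ = _ := by rw [mul_add]

end
end

section
/- Let v : [0,2π] → ℝ be continuously differentiable. Then for every x ∈ [0,2π]: (i) ∫₀^x e^{−y} ( v(y)² + ½ v'(y)² ) dy ≥ −½ e^{−x} v(x)² + ½ v(0)², and (ii) ∫₀^x e^{y} ( v(y)² + ½ v'(y)² ) dy ≥ ½ e^{x} v(x)² − ½ v(0)². -/
open MeasureTheory

/-- Exponential-weight integral inequalities on `[0,x]` for `C¹` functions `v`:
(i) `∫₀ˣ e^{-y}(v² + ½ v'²) dy ≥ -½ e^{-x} v(x)² + ½ v(0)²`, and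
(ii) `∫₀ˣ e^{y}(v² + ½ v'²) dy ≥ ½ e^{x} v(x)² - ½ v(0)²`. -/
theorem exp_weight_integral_lower_bounds_left
    (v : ℝ → ℝ) (hv : ContDiff ℝ 1 v)
    (x : ℝ) (hx : x ∈ Set.Icc (0 : ℝ) (2 * Real.pi)) :
    (-(1 / 2) * Real.exp (-x) * (v x) ^ 2 + (1 / 2) * (v 0) ^ 2
        ≤ ∫ y in (0 : ℝ)..x,
            Real.exp (-y) * ((v y) ^ 2 + (1 / 2) * (deriv v y) ^ 2)) ∧
    ((1 / 2) * Real.exp x * (v x) ^ 2 - (1 / 2) * (v 0) ^ 2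
        ≤ ∫ y in (0 : ℝ)..x,
            Real.exp y * ((v y) ^ 2 + (1 / 2) * (deriv v y) ^ 2)) := by
  obtain ⟨hx0, -⟩ := hx
  have hvc : Continuous v := hv.continuous
  have hdc : Continuous (deriv v) := hv.continuous_deriv le_rfl
  have hdv : ∀ y, HasDerivAt v (deriv v y) y := fun y =>
    (hv.differentiable one_ne_zero y).hasDerivAt
  have hv2 : ∀ y, HasDerivAt (fun y => (v y) ^ 2) (2 * v y * deriv v y) y := by
    intro y
    simpa [mul_comm, mul_assoc, mul_left_comm] using ((hdv y).fun_pow 2)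
  have hen : ∀ y : ℝ, HasDerivAt (fun y : ℝ => Real.exp (-y)) (-Real.exp (-y)) y := by
    intro y
    simpa using (hasDerivAt_neg' y).exp
  have hienc : Continuous (fun y : ℝ => Real.exp (-y) * ((v y) ^ 2 + (1 / 2) * (deriv v y) ^ 2)) :=
    (Real.continuous_exp.comp continuous_neg).mul
      ((hvc.pow 2).add (continuous_const.mul (hdc.pow 2)))
  have hiepc : Continuous (fun y : ℝ => Real.exp y * ((v y) ^ 2 + (1 / 2) * (deriv v y) ^ 2)) :=
    Real.continuous_exp.mul ((hvc.pow 2).add (continuous_const.mul (hdc.pow 2)))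
  constructor
  · -- part (i)
    have hF : ∀ y, HasDerivAt (fun y => -(1 / 2) * Real.exp (-y) * (v y) ^ 2)
        (Real.exp (-y) * ((1 / 2) * (v y) ^ 2 - v y * deriv v y)) y := by
      intro y
      have := ((hen y).const_mul (-(1 / 2) : ℝ)).fun_mul (hv2 y)
      exact this.congr_deriv (by ring)
    have hgc : Continuous (fun y : ℝ => Real.exp (-y) * ((1 / 2) * (v y) ^ 2 - v y * deriv v y)) :=
      (Real.continuous_exp.comp continuous_neg).mul
        ((continuous_const.mul (hvc.pow 2)).sub (hvc.mul hdc))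
    have hftc := intervalIntegral.integral_eq_sub_of_hasDerivAt
      (fun y _ => hF y) (hgc.intervalIntegrable 0 x)
    have hmono : (∫ y in (0 : ℝ)..x, Real.exp (-y) * ((1 / 2) * (v y) ^ 2 - v y * deriv v y))
        ≤ ∫ y in (0 : ℝ)..x, Real.exp (-y) * ((v y) ^ 2 + (1 / 2) * (deriv v y) ^ 2) := by
      apply intervalIntegral.integral_mono_on hx0 (hgc.intervalIntegrable 0 x)
        (hienc.intervalIntegrable 0 x)
      intro y _
      have h1 := (Real.exp_pos (-y)).le
      nlinarith [mul_nonneg h1 (sq_nonneg (v y + deriv v y))]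
    calc -(1 / 2) * Real.exp (-x) * (v x) ^ 2 + (1 / 2) * (v 0) ^ 2
        = (-(1 / 2) * Real.exp (-x) * (v x) ^ 2) - (-(1 / 2) * Real.exp (-0) * (v 0) ^ 2) := by
          simp
      _ = ∫ y in (0 : ℝ)..x, Real.exp (-y) * ((1 / 2) * (v y) ^ 2 - v y * deriv v y) := hftc.symm
      _ ≤ _ := hmono
  · -- part (ii)
    have hF : ∀ y, HasDerivAt (fun y => (1 / 2) * Real.exp y * (v y) ^ 2)
        (Real.exp y * ((1 / 2) * (v y) ^ 2 + v y * deriv v y)) y := by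
      intro y
      have := ((Real.hasDerivAt_exp y).const_mul ((1 / 2) : ℝ)).fun_mul (hv2 y)
      exact this.congr_deriv (by ring)
    have hgc : Continuous (fun y : ℝ => Real.exp y * ((1 / 2) * (v y) ^ 2 + v y * deriv v y)) :=
      Real.continuous_exp.mul ((continuous_const.mul (hvc.pow 2)).add (hvc.mul hdc))
    have hftc := intervalIntegral.integral_eq_sub_of_hasDerivAt
      (fun y _ => hF y) (hgc.intervalIntegrable 0 x)
    have hmono : (∫ y in (0 : ℝ)..x, Real.exp y * ((1 / 2) * (v y) ^ 2 + v y * deriv v y))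
        ≤ ∫ y in (0 : ℝ)..x, Real.exp y * ((v y) ^ 2 + (1 / 2) * (deriv v y) ^ 2) := by
      apply intervalIntegral.integral_mono_on hx0 (hgc.intervalIntegrable 0 x)
        (hiepc.intervalIntegrable 0 x)
      intro y _
      have h1 := (Real.exp_pos y).le
      nlinarith [mul_nonneg h1 (sq_nonneg (v y - deriv v y))]
    calc (1 / 2) * Real.exp x * (v x) ^ 2 - (1 / 2) * (v 0) ^ 2
        = ((1 / 2) * Real.exp x * (v x) ^ 2) - ((1 / 2) * Real.exp 0 * (v 0) ^ 2) := by
          simp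
      _ = ∫ y in (0 : ℝ)..x, Real.exp y * ((1 / 2) * (v y) ^ 2 + v y * deriv v y) := hftc.symm
      _ ≤ _ := hmono
end

section
/- Let T* ∈ (0,∞], N > 0, let β : [0,T*) → (0,∞) be continuous, and let M : [0,T*) → ℝ be locally Lipschitz with M'(t) + (β(t)/2) M(t)² ≤ β(t) N for almost every t ∈ (0,T*). If 0 < ε < 1/2 and M(t₀) < −√(N/ε) for some t₀ ∈ [0,T*), then M(t) ≤ −√(N/ε) for all t ∈ [t₀,T*). -/
open MeasureTheory

open Set

set_option maxHeartbeats 1000000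

lemma integral_deriv_le_of_monotone' {f : ℝ → ℝ} (hf : Monotone f) (hcont : Continuous f)
    {a b : ℝ} (hab : a ≤ b) :
    IntegrableOn (deriv f) (Ioc a b) volume ∧
      ∫ x in Ioc a b, deriv f x ≤ f b - f a := by
  set μ := hf.stieltjesFunction.measure with hμ
  have hae : ∀ᵐ x ∂volume, deriv f x = (Measure.rnDeriv μ volume x).toReal :=
    hf.ae_hasDerivAt.mono fun x hx => hx.deriv
  have hSF : ∀ x, hf.stieltjesFunction x = f x := by
    intro x
    rw [hf.stieltjesFunction_eq]
    exact rightLim_eq_of_tendsto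
      (hcont.continuousAt.continuousWithinAt)
  have hμIoc : μ (Ioc a b) = ENNReal.ofReal (f b - f a) := by
    rw [hμ, StieltjesFunction.measure_Ioc, hSF, hSF]
  have hμne : μ (Ioc a b) ≠ ⊤ := by rw [hμIoc]; exact ENNReal.ofReal_ne_top
  have hint : IntegrableOn (fun x => (Measure.rnDeriv μ volume x).toReal) (Ioc a b) volume :=
    Measure.integrableOn_toReal_rnDeriv hμne
  have hint' : IntegrableOn (deriv f) (Ioc a b) volume :=
    hint.congr_fun_ae (ae_restrict_of_ae (hae.mono fun x hx => hx.symm))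
  refine ⟨hint', ?_⟩
  calc ∫ x in Ioc a b, deriv f x
      = ∫ x in Ioc a b, (Measure.rnDeriv μ volume x).toReal :=
        integral_congr_ae (ae_restrict_of_ae hae)
    _ ≤ (μ (Ioc a b)).toReal := Measure.setIntegral_toReal_rnDeriv_le hμne
    _ = f b - f a := by
        rw [hμIoc, ENNReal.toReal_ofReal (sub_nonneg.mpr (hf hab))]

lemma lipschitz_nonincreasing' {g : ℝ → ℝ} {L : NNReal} (hg : LipschitzWith L g)
    {a b : ℝ} (hab : a ≤ b)
    (hd : ∀ᵐ s ∂(volume.restrict (Ioc a b)), deriv g s ≤ 0) : g b ≤ g a := by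
  set h : ℝ → ℝ := fun s => (L : ℝ) * s - g s with hh
  have hmono : Monotone h := by
    intro x y hxy
    have := hg.dist_le_mul x y
    rw [Real.dist_eq, Real.dist_eq] at this
    have h1 := abs_le.1 this
    have h2 : |x - y| = y - x := by rw [abs_sub_comm]; exact abs_of_nonneg (by linarith)
    simp only [hh]
    rw [h2] at h1
    nlinarith [h1.1, h1.2]
  have hcont : Continuous h := (continuous_const.mul continuous_id).sub hg.continuous
  obtain ⟨hint, hle⟩ := integral_deriv_le_of_monotone' hmono hcont hab
  have haderel : ∀ᵐ s ∂volume, deriv h s = (L : ℝ) - deriv g s := by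
    filter_upwards [hmono.ae_hasDerivAt] with s hs
    have hgd : HasDerivAt g
        ((L : ℝ) * 1 - (Measure.rnDeriv hmono.stieltjesFunction.measure volume s).toReal) s := by
      have hge : g = fun x => (L : ℝ) * x - h x := by funext x; simp only [hh]; ring
      rw [hge]
      exact ((hasDerivAt_id s).const_mul (L : ℝ)).sub hs
    rw [hs.deriv, hgd.deriv]
    ring
  have hLae : ∀ᵐ s ∂(volume.restrict (Ioc a b)), (L : ℝ) ≤ deriv h s := by
    filter_upwards [ae_restrict_of_ae haderel, hd] with s h1 h2
    rw [h1]; linarith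
  have hconst : (L : ℝ) * (b - a) = ∫ _ in Ioc a b, (L : ℝ) := by
    rw [setIntegral_const, measureReal_def, Real.volume_Ioc, ENNReal.toReal_ofReal (sub_nonneg.mpr hab),
      smul_eq_mul, mul_comm]
  have hmonoint : ∫ _ in Ioc a b, (L : ℝ) ≤ ∫ s in Ioc a b, deriv h s :=
    integral_mono_ae
      (integrableOn_const (by rw [Real.volume_Ioc]; exact ENNReal.ofReal_ne_top))
      hint hLae
  have : (L : ℝ) * (b - a) ≤ h b - h a := by
    rw [hconst]; exact hmonoint.trans hle
  simp only [hh] at this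
  linarith

/-- Forward invariance of `{M ≤ -√(N/ε)}` for the Riccati-type differential
inequality `M' + (β/2) M² ≤ β N` a.e. on `(0,T*)`, where `T* ∈ (0,∞]`,
`β : [0,T*) → (0,∞)` is continuous and `M : [0,T*) → ℝ` is locally Lipschitz. -/
theorem riccati_forward_invariance
    (Tstar : EReal) (hT : 0 < Tstar) (N : ℝ) (hN : 0 < N)
    (β M : ℝ → ℝ)
    (hβc : ContinuousOn β {t : ℝ | 0 ≤ t ∧ (t : EReal) < Tstar})
    (hβpos : ∀ t : ℝ, 0 ≤ t → (t : EReal) < Tstar → 0 < β t)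
    (hMlip : ∀ a b : ℝ, 0 ≤ a → (b : EReal) < Tstar →
      ∃ L : NNReal, LipschitzOnWith L M (Set.Icc a b))
    (hineq : ∀ᵐ (t : ℝ) ∂volume, 0 < t → (t : EReal) < Tstar →
      DifferentiableAt ℝ M t ∧ deriv M t + β t / 2 * (M t) ^ 2 ≤ β t * N)
    (ε : ℝ) (hε0 : 0 < ε) (hε : ε < 1 / 2)
    (t₀ : ℝ) (ht₀ : 0 ≤ t₀) (ht₀T : (t₀ : EReal) < Tstar)
    (hM0 : M t₀ < -Real.sqrt (N / ε)) :
    ∀ t : ℝ, t₀ ≤ t → (t : EReal) < Tstar → M t ≤ -Real.sqrt (N / ε) := by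
  intro t htt₀ htT
  by_contra hMt
  push_neg at hMt
  set c := Real.sqrt (N / ε) with hc
  have hc0 : 0 < c := Real.sqrt_pos.mpr (by positivity)
  have h2N : (0:ℝ) ≤ 2 * N := by linarith
  have hNε : 2 * N < N / ε := by
    rw [lt_div_iff₀ hε0]; nlinarith
  have hc2 : Real.sqrt (2 * N) < c := Real.sqrt_lt_sqrt h2N hNε
  have hsq2N : Real.sqrt (2 * N) ^ 2 = 2 * N := Real.sq_sqrt h2N
  obtain ⟨L, hL⟩ := hMlip 0 t le_rfl htT
  have hMc : ContinuousOn M (Icc 0 t) := hL.continuousOn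
  have h0t : (0:ℝ) ≤ t := le_trans ht₀ htt₀
  set A := Icc t₀ t ∩ M ⁻¹' Iic (-c) with hA
  have hAclosed : IsClosed A :=
    (hMc.mono (Icc_subset_Icc ht₀ le_rfl)).preimage_isClosed_of_isClosed
      isClosed_Icc isClosed_Iic
  have hAne : A.Nonempty := ⟨t₀, ⟨le_rfl, htt₀⟩, hM0.le⟩
  have hAbdd : BddAbove A := ⟨t, fun x hx => hx.1.2⟩
  set t₁ := sSup A with ht₁def
  have ht₁A : t₁ ∈ A := hAclosed.csSup_mem hAne hAbdd
  have ht₁Icc : t₁ ∈ Icc t₀ t := ht₁A.1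
  have hMt₁ : M t₁ ≤ -c := ht₁A.2
  have ht₁t : t₁ < t := lt_of_le_of_ne ht₁Icc.2 (fun h => by rw [h] at hMt₁; linarith)
  have h0t₁ : 0 ≤ t₁ := le_trans ht₀ ht₁Icc.1
  have hgt : ∀ s, t₁ < s → s ≤ t → -c < M s := by
    intro s hs1 hs2
    by_contra hle
    push_neg at hle
    have hsA : s ∈ A := ⟨⟨le_trans ht₁Icc.1 hs1.le, hs2⟩, hle⟩
    exact absurd (le_csSup hAbdd hsA) (not_le.mpr hs1)
  -- the threshold θ
  set θ := (-c + -Real.sqrt (2 * N)) / 2 with hθdef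
  have hθ1 : -c < θ := by rw [hθdef]; linarith
  have hθ2 : θ < -Real.sqrt (2 * N) := by rw [hθdef]; linarith
  -- choose t₂
  have hLpos : (0:ℝ) < (L:ℝ) + 1 := by positivity
  have hdpos : 0 < (θ - M t₁) / ((L:ℝ) + 1) := div_pos (by linarith) hLpos
  set t₂ := min t (t₁ + (θ - M t₁) / ((L:ℝ) + 1)) with ht₂def
  have ht₁₂ : t₁ < t₂ := lt_min ht₁t (by linarith)
  have ht₂t : t₂ ≤ t := min_le_left _ _
  have ht₂d : t₂ - t₁ ≤ (θ - M t₁) / ((L:ℝ) + 1) := by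
    have := min_le_right t (t₁ + (θ - M t₁) / ((L:ℝ) + 1))
    rw [← ht₂def] at this
    linarith
  -- on [t₁, t₂] the function M stays below θ
  have hMθ : ∀ s, t₁ ≤ s → s ≤ t₂ → M s < θ := by
    intro s hs1 hs2
    have hsIcc : s ∈ Icc (0:ℝ) t := ⟨le_trans h0t₁ hs1, le_trans hs2 ht₂t⟩
    have ht₁Icc' : t₁ ∈ Icc (0:ℝ) t := ⟨h0t₁, ht₁Icc.2⟩
    have hdist := hL.dist_le_mul s hsIcc t₁ ht₁Icc'
    rw [Real.dist_eq, Real.dist_eq, abs_of_nonneg (by linarith : (0:ℝ) ≤ s - t₁)] at hdist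
    have h1 := (abs_le.1 hdist).2
    have h2 : s - t₁ ≤ (θ - M t₁) / ((L:ℝ) + 1) := by linarith
    have h3 : (L:ℝ) * (s - t₁) ≤ (L:ℝ) * ((θ - M t₁) / ((L:ℝ) + 1)) :=
      mul_le_mul_of_nonneg_left h2 (L.coe_nonneg)
    have h4 : (L:ℝ) * ((θ - M t₁) / ((L:ℝ) + 1)) < θ - M t₁ := by
      rw [mul_div_assoc'] at *
      rw [div_lt_iff₀ hLpos]
      nlinarith [L.coe_nonneg]
    linarith
  -- Lipschitz extension
  obtain ⟨g, hg, hEq⟩ := hL.extend_real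
  -- a.e. derivative nonpositivity on (t₁, t₂]
  have hd : ∀ᵐ s ∂(volume.restrict (Ioc t₁ t₂)), deriv g s ≤ 0 := by
    have hnull : ∀ᵐ s ∂volume, s ≠ t₂ := by
      have : volume ({t₂} : Set ℝ) = 0 := measure_singleton t₂
      exact (MeasureTheory.compl_mem_ae_iff.mpr this : _)
    filter_upwards [ae_restrict_mem measurableSet_Ioc, ae_restrict_of_ae hnull,
      ae_restrict_of_ae hineq] with s hs hsne hsineq
    have hsOoo : s ∈ Ioo t₁ t₂ := ⟨hs.1, lt_of_le_of_ne hs.2 hsne⟩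
    have hs0 : 0 < s := lt_of_le_of_lt h0t₁ hsOoo.1
    have hst : s < t := lt_of_lt_of_le hsOoo.2 ht₂t
    have hsT : (s : EReal) < Tstar := lt_of_lt_of_le (EReal.coe_lt_coe_iff.mpr hst) htT.le
    obtain ⟨hdiff, hle⟩ := hsineq hs0 hsT
    have hβs : 0 < β s := hβpos s hs0.le hsT
    have hMs : M s < θ := hMθ s hsOoo.1.le hsOoo.2.le
    have hMs2 : 2 * N < (M s) ^ 2 := by
      have h5 : Real.sqrt (2 * N) < -M s := by linarith
      have h6 := pow_lt_pow_left₀ h5 (Real.sqrt_nonneg (2 * N)) two_ne_zero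
      rw [hsq2N, neg_pow] at h6
      simpa using h6
    have hderivM : deriv M s ≤ 0 := by
      have h7 : β s / 2 * (2 * N) < β s / 2 * (M s) ^ 2 :=
        mul_lt_mul_of_pos_left hMs2 (by linarith)
      have h8 : β s / 2 * (2 * N) = β s * N := by ring
      linarith
    have hgM : deriv g s = deriv M s := by
      have hmem : Icc (0:ℝ) t ∈ nhds s := Icc_mem_nhds hs0 hst
      have : g =ᶠ[nhds s] M := by
        filter_upwards [hmem] with x hx
        exact (hEq hx).symm
      rw [this.deriv_eq]
    rw [hgM]
    exact hderivM
  have hfin : g t₂ ≤ g t₁ := lipschitz_nonincreasing' hg ht₁₂.le hd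
  have hgt₂ : g t₂ = M t₂ := (hEq ⟨le_trans h0t₁ ht₁₂.le, ht₂t⟩).symm
  have hgt₁ : g t₁ = M t₁ := (hEq ⟨h0t₁, ht₁Icc.2⟩).symm
  have : M t₂ ≤ -c := by rw [← hgt₂]; rw [hgt₁] at hfin; linarith
  exact absurd this (not_le.mpr (hgt t₂ ht₁₂ ht₂t))
end

section
/- Let T* ∈ (0,∞], K > 0, let β : [0,T*) → (0,∞) be continuous, and let M : [0,T*) → ℝ be locally Lipschitz with M'(t) ≤ β(t) K − (β(t)/2) M(t)² for almost every t ∈ (0,T*). If M(0) < −√(2K), then M(t) ≤ −√(2K) for all t ∈ [0,T*). -/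
open MeasureTheory Set Filter
open scoped Topology

/-- A Lipschitz-on-`[a,b]` function whose derivative is nonpositive a.e. on `(a,b)`
is decreasing from `a` to `b`. -/
lemma lipschitz_antitone_of_ae_deriv_nonpos {L : NNReal} {M : ℝ → ℝ} {a b : ℝ} (hab : a ≤ b)
    (hlip : LipschitzOnWith L M (Set.Icc a b))
    (hd : ∀ᵐ x ∂volume, x ∈ Set.Ioo a b → DifferentiableAt ℝ M x ∧ deriv M x ≤ 0) :
    M b ≤ M a := by
  have hLpos : (0:ℝ) < (L:ℝ) + 1 := by positivity
  -- reduce to an ε-perturbed bound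
  suffices H : ∀ ε : ℝ, 0 < ε → M b ≤ M a + ((L:ℝ) + 1) * ε + ε * (b - a) by
    have H' : ∀ ε : ℝ, 0 < ε → M b ≤ M a + ε := by
      intro ε hε
      set C : ℝ := ((L:ℝ) + 1) + (b - a) with hC
      have hCpos : 0 < C := by
        have h0 : (0:ℝ) ≤ b - a := sub_nonneg.2 hab
        positivity
      have := H (ε / C) (by positivity)
      calc M b ≤ M a + ((L:ℝ) + 1) * (ε / C) + (ε / C) * (b - a) := this
        _ = M a + (ε / C) * C := by ring
        _ = M a + ε := by rw [div_mul_cancel₀ _ hCpos.ne']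
    exact le_of_forall_pos_le_add H'
  intro ε hε
  -- the bad set
  set E : Set ℝ :=
    {x | ¬ (x ∈ Set.Ioo a b → DifferentiableAt ℝ M x ∧ deriv M x ≤ 0)} ∪ {a} with hE
  have hE0 : volume E = 0 :=
    measure_union_null (ae_iff.mp hd) (measure_singleton a)
  obtain ⟨U, hEU, hUopen, hUμ⟩ :=
    Set.exists_isOpen_lt_of_lt E (ENNReal.ofReal ε)
      (by rw [hE0]; exact ENNReal.ofReal_pos.mpr hε)
  -- the auxiliary sliding measure function
  set v : ℝ → ℝ := fun x => (volume (U ∩ Set.Ioc a x)).toReal with hv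
  have hfin : ∀ x : ℝ, volume (U ∩ Set.Ioc a x) ≠ ⊤ := fun x =>
    ne_top_of_le_ne_top (by simp [Real.volume_Ioc]) (measure_mono inter_subset_right)
  have hva : v a = 0 := by simp [hv]
  have hmono : ∀ x z : ℝ, x ≤ z → v x ≤ v z := fun x z hxz =>
    ENNReal.toReal_mono (hfin z)
      (measure_mono (inter_subset_inter_right _ (Set.Ioc_subset_Ioc_right hxz)))
  have hsub : ∀ x z : ℝ, x ≤ z → v z ≤ v x + (z - x) := by
    intro x z hxz
    have h1 : volume (U ∩ Set.Ioc a z) ≤ volume (U ∩ Set.Ioc a x) + volume (Set.Ioc x z) := by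
      refine le_trans (measure_mono ?_) (measure_union_le _ _)
      rintro w ⟨hwU, hwa, hwz⟩
      rcases le_or_gt w x with h | h
      · exact Or.inl ⟨hwU, hwa, h⟩
      · exact Or.inr ⟨h, hwz⟩
    have h2 := ENNReal.toReal_mono
      (ENNReal.add_ne_top.2 ⟨hfin x, by simp [Real.volume_Ioc]⟩) h1
    rw [ENNReal.toReal_add (hfin x) (by simp [Real.volume_Ioc])] at h2
    simpa [hv, Real.volume_Ioc, ENNReal.toReal_ofReal (sub_nonneg.2 hxz)] using h2
  have hgrow : ∀ x z : ℝ, a ≤ x → x ≤ z → Set.Ioc x z ⊆ U → v x + (z - x) ≤ v z := by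
    intro x z hax hxz hsubU
    have hdisj : Disjoint (U ∩ Set.Ioc a x) (Set.Ioc x z) := by
      refine Set.disjoint_left.2 ?_
      rintro w ⟨_, _, hwx⟩ ⟨hxw, _⟩
      exact absurd hwx (not_le.2 hxw)
    have hsubset : (U ∩ Set.Ioc a x) ∪ Set.Ioc x z ⊆ U ∩ Set.Ioc a z := by
      rintro w (⟨hwU, hwa, hwx⟩ | hw)
      · exact ⟨hwU, hwa, hwx.trans hxz⟩
      · exact ⟨hsubU hw, lt_of_le_of_lt hax hw.1, hw.2⟩
    have h1 : volume (U ∩ Set.Ioc a x) + volume (Set.Ioc x z) ≤ volume (U ∩ Set.Ioc a z) := by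
      rw [← measure_union hdisj measurableSet_Ioc]
      exact measure_mono hsubset
    have h2 := ENNReal.toReal_mono (hfin z) h1
    rw [ENNReal.toReal_add (hfin x) (by simp [Real.volume_Ioc])] at h2
    simpa [hv, Real.volume_Ioc, ENNReal.toReal_ofReal (sub_nonneg.2 hxz)] using h2
  -- continuity of v
  have hvcont : ContinuousOn v (Set.Icc a b) := by
    have : LipschitzWith 1 v := by
      refine LipschitzWith.of_dist_le_mul ?_
      intro x z
      rcases le_total x z with h | h
      · rw [Real.dist_eq, Real.dist_eq, abs_of_nonpos (by linarith [hmono x z h]),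
          abs_of_nonpos (by linarith)]
        have := hsub x z h
        push_cast; linarith
      · rw [Real.dist_eq, Real.dist_eq, abs_of_nonneg (by linarith [hmono z x h]),
          abs_of_nonneg (by linarith)]
        have := hsub z x h
        push_cast; linarith
    exact this.continuous.continuousOn
  -- the perturbed function
  set g : ℝ → ℝ := fun x => M x - ((L:ℝ) + 1) * v x with hg
  have hgcont : ContinuousOn g (Set.Icc a b) :=
    hlip.continuousOn.sub (continuousOn_const.mul hvcont)
  -- fencing argument
  have key : ∀ ⦃x⦄, x ∈ Set.Icc a b → g x ≤ (fun y => g a + ε * (y - a)) x := by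
    refine image_le_of_liminf_slope_right_le_deriv_boundary hgcont (by simp)
      ((continuousOn_const).add (continuousOn_const.mul
        ((continuousOn_id).sub continuousOn_const))) (B' := fun _ => ε) ?_ ?_
    · intro x _
      have h1 : HasDerivWithinAt (fun y : ℝ => y - a) 1 (Set.Ici x) x :=
        (hasDerivWithinAt_id x _).sub_const a
      have h2 := (h1.const_mul ε).const_add (g a)
      simpa using h2
    · intro x hx r hr
      by_cases hxU : x ∈ U
      · -- inside the open cover: slope at most -1
        obtain ⟨η, hη, hball⟩ := Metric.isOpen_iff.1 hUopen x hxU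
        have hxb : x < b := hx.2
        have hmem : Set.Ioc x (min (x + η/2) b) ∈ 𝓝[>] x := by
          refine Ioc_mem_nhdsGT_of_mem ⟨le_rfl, ?_⟩
          exact lt_min (by linarith) hxb
        refine ((eventually_of_mem hmem ?_)).frequently
        intro z hz
        have hxz : x < z := hz.1
        have hzb : z ≤ b := hz.2.trans (min_le_right _ _)
        have hIoc : Set.Ioc x z ⊆ U := by
          intro w hw
          apply hball
          rw [Metric.mem_ball, Real.dist_eq, abs_of_pos (by linarith [hw.1])]
          have : z ≤ x + η/2 := le_trans hz.2 (min_le_left _ _)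
          linarith [hw.2, hw.1]
        have hML : M z - M x ≤ (L:ℝ) * (z - x) := by
          have := hlip.dist_le_mul z ⟨hx.1.trans hxz.le, hzb⟩ x ⟨hx.1, hxb.le⟩
          have habs : |z - x| = z - x := abs_of_pos (by linarith)
          rw [Real.dist_eq, Real.dist_eq, habs] at this
          calc M z - M x ≤ |M z - M x| := le_abs_self _
            _ ≤ (L:ℝ) * (z - x) := this
        have hVg : z - x ≤ v z - v x := by
          have := hgrow x z hx.1 hxz.le hIoc; linarith
        have hslope : slope g x z ≤ -1 := by
          rw [slope_def_field, div_le_iff₀ (by linarith)]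
          have : g z - g x = (M z - M x) - ((L:ℝ) + 1) * (v z - v x) := by
            simp only [hg]; ring
          rw [this]
          nlinarith [hVg, hML]
        calc slope g x z ≤ -1 := hslope
          _ < r := by linarith
      · -- good point: derivative exists and is ≤ 0
        have hxE : x ∉ E := fun h => hxU (hEU h)
        have hxa : x ≠ a := by
          intro h; exact hxE (Or.inr (by simp [h]))
        have hxIoo : x ∈ Set.Ioo a b := ⟨lt_of_le_of_ne hx.1 (Ne.symm hxa), hx.2⟩
        have hgood : DifferentiableAt ℝ M x ∧ deriv M x ≤ 0 := by
          by_contra h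
          exact hxE (Or.inl (fun _ => by tauto))
        have hslopeM : Tendsto (slope M x) (𝓝[>] x) (𝓝 (deriv M x)) :=
          (hasDerivAt_iff_tendsto_slope.1 hgood.1.hasDerivAt).mono_left
            (nhdsWithin_mono x (fun y hy => ne_of_gt hy))
        have hev : ∀ᶠ z in 𝓝[>] x, slope M x z < r :=
          hslopeM.eventually_lt_const (lt_of_le_of_lt hgood.2 (hε.trans hr))
        refine ((hev.and self_mem_nhdsWithin).mono ?_).frequently
        rintro z ⟨hzr, hzx⟩
        have hxz : x < z := hzx
        have hvz : v x ≤ v z := hmono x z hxz.le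
        have : slope g x z ≤ slope M x z := by
          rw [slope_def_field, slope_def_field, div_le_div_iff_of_pos_right (by linarith)]
          simp only [hg]
          nlinarith [hvz]
        linarith
  -- conclude
  have hb := key (Set.right_mem_Icc.2 hab)
  have hvb : v b ≤ ε := by
    have h1 : volume (U ∩ Set.Ioc a b) ≤ ENNReal.ofReal ε :=
      le_trans (measure_mono inter_subset_left) hUμ.le
    exact ENNReal.toReal_le_of_le_ofReal hε.le h1
  have hvb0 : 0 ≤ v b := ENNReal.toReal_nonneg
  simp only [hg, hva, mul_zero, sub_zero] at hb
  nlinarith [hb, hvb, hLpos]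

/-- Proposition 7.2 (deterministic core): if `M' ≤ β K - (β/2) M²` a.e. on
`(0,T*)` with `β : [0,T*) → (0,∞)` continuous, `M : [0,T*) → ℝ` locally
Lipschitz, `K > 0` and `M(0) < -√(2K)`, then `M(t) ≤ -√(2K)` on `[0,T*)`. -/
theorem riccati_stays_below
    (Tstar : EReal) (hT : 0 < Tstar) (K : ℝ) (hK : 0 < K)
    (β M : ℝ → ℝ)
    (hβc : ContinuousOn β {t : ℝ | 0 ≤ t ∧ (t : EReal) < Tstar})
    (hβpos : ∀ t : ℝ, 0 ≤ t → (t : EReal) < Tstar → 0 < β t)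
    (hMlip : ∀ a b : ℝ, 0 ≤ a → (b : EReal) < Tstar →
      ∃ L : NNReal, LipschitzOnWith L M (Set.Icc a b))
    (hineq : ∀ᵐ (t : ℝ) ∂volume, 0 < t → (t : EReal) < Tstar →
      DifferentiableAt ℝ M t ∧ deriv M t ≤ β t * K - β t / 2 * (M t) ^ 2)
    (hM0 : M 0 < -Real.sqrt (2 * K)) :
    ∀ t : ℝ, 0 ≤ t → (t : EReal) < Tstar → M t ≤ -Real.sqrt (2 * K) := by
  intro t ht hTt
  set c : ℝ := -Real.sqrt (2 * K) with hc
  have hsqrtpos : 0 < Real.sqrt (2 * K) := Real.sqrt_pos.mpr (by linarith)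
  have hcneg : c < 0 := by simp only [hc]; linarith
  have hc2 : c ^ 2 = 2 * K := by
    rw [hc, neg_pow, Real.sq_sqrt (by linarith)]; ring
  by_contra hcon
  push_neg at hcon
  have ht0' : 0 < t := by
    rcases lt_or_eq_of_le ht with h | h
    · exact h
    · exfalso; rw [← h] at hcon; linarith
  obtain ⟨L, hlip⟩ := hMlip 0 t le_rfl hTt
  have hMcont : ContinuousOn M (Set.Icc 0 t) := hlip.continuousOn
  set A : Set ℝ := Set.Icc 0 t ∩ M ⁻¹' Set.Ici c with hA
  have htA : t ∈ A := ⟨Set.right_mem_Icc.2 ht, hcon.le⟩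
  have hAbdd : BddBelow A := ⟨0, fun s hs => hs.1.1⟩
  have hAclosed : IsClosed A :=
    hMcont.preimage_isClosed_of_isClosed isClosed_Icc isClosed_Ici
  set t0 : ℝ := sInf A with ht0
  have ht0A : t0 ∈ A := hAclosed.csInf_mem ⟨t, htA⟩ hAbdd
  have hMt0 : c ≤ M t0 := ht0A.2
  have ht0pos : 0 < t0 := by
    rcases lt_or_eq_of_le ht0A.1.1 with h | h
    · exact h
    · exfalso; rw [← h] at hMt0; linarith
  have hbefore : ∀ s : ℝ, 0 ≤ s → s < t0 → M s < c := by
    intro s hs hst0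
    by_contra hMs
    push_neg at hMs
    have : s ∈ A := ⟨⟨hs, hst0.le.trans ht0A.1.2⟩, hMs⟩
    exact absurd (csInf_le hAbdd this) (not_le.2 hst0)
  have hlip0 : LipschitzOnWith L M (Set.Icc 0 t0) :=
    hlip.mono (Set.Icc_subset_Icc le_rfl ht0A.1.2)
  have hae : ∀ᵐ x ∂volume, x ∈ Set.Ioo 0 t0 → DifferentiableAt ℝ M x ∧ deriv M x ≤ 0 := by
    filter_upwards [hineq] with x hx hxI
    have hx0 : 0 < x := hxI.1
    have hxt : x < t := lt_of_lt_of_le hxI.2 ht0A.1.2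
    have hxT : (x : EReal) < Tstar :=
      lt_trans (EReal.coe_lt_coe_iff.2 hxt) hTt
    obtain ⟨hdiff, hder⟩ := hx hx0 hxT
    refine ⟨hdiff, ?_⟩
    have hMx : M x < c := hbefore x hx0.le hxI.2
    have hsq : 2 * K ≤ (M x) ^ 2 := by nlinarith
    have hβ : 0 < β x := hβpos x hx0.le hxT
    calc deriv M x ≤ β x * K - β x / 2 * (M x) ^ 2 := hder
      _ ≤ 0 := by nlinarith
  have := lipschitz_antitone_of_ae_deriv_nonpos ht0A.1.1 hlip0 hae
  linarith
end

section
/- Let T* ∈ (0,∞], K > 0, let β : [0,T*) → (0,∞) be continuous, and let M : [0,T*) → ℝ be locally Lipschitz with M'(t) ≤ β(t) K − (β(t)/2) M(t)² for almost every t ∈ (0,T*) and M(0) < −√(2K). Then for all t ∈ [0,T*): 1/M(t) − 1/M(0) ≥ (1/2 − K/M(0)²) ∫₀ᵗ β(s) ds. -/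
open MeasureTheory Set Filter

/-- FTC-type inequality for a globally Lipschitz function with a.e. derivative bound. -/
lemma lipschitz_sub_le_integral (g φ : ℝ → ℝ) (L : NNReal) (a b : ℝ) (hab : a ≤ b)
    (hg : LipschitzWith L g)
    (hφ : IntegrableOn φ (Ioo a b))
    (hd : ∀ᵐ x ∂volume, x ∈ Ioo a b → DifferentiableAt ℝ g x ∧ deriv g x ≤ φ x) :
    g b - g a ≤ ∫ x in Ioo a b, φ x := by
  set h : ℝ → ℝ := fun x => (L : ℝ) * x - g x with hh
  have hmono : Monotone h := by
    intro x y hxy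
    have hd1 := hg.dist_le_mul x y
    simp only [Real.dist_eq] at hd1
    have h1 := (abs_le.1 hd1).1
    have h2 : |x - y| = y - x := by rw [abs_sub_comm]; exact abs_of_nonneg (by linarith)
    show (L : ℝ) * x - g x ≤ (L : ℝ) * y - g y
    rw [h2] at h1
    linarith
  have hcont : Continuous h := by
    exact (continuous_const.mul continuous_id).sub hg.continuous
  set μh := hmono.stieltjesFunction.measure with hμh
  set r : ℝ → ℝ := fun x => (μh.rnDeriv volume x).toReal with hr
  have hstj : ∀ x, hmono.stieltjesFunction x = h x := by
    intro x
    rw [hmono.stieltjesFunction_eq]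
    exact rightLim_eq_of_tendsto (h := nhdsGT_neBot x) (hcont.continuousAt.tendsto.mono_left nhdsWithin_le_nhds)
  have hderiv : ∀ᵐ x ∂volume, HasDerivAt h (r x) x := by
    filter_upwards [hmono.ae_hasDerivAt] with x hx
    exact hx
  -- a.e. on Ioo a b : (L : ℝ) - φ x ≤ r x
  have hle : ∀ᵐ x ∂(volume.restrict (Ioo a b)), (L : ℝ) - φ x ≤ r x := by
    rw [ae_restrict_iff' measurableSet_Ioo]
    filter_upwards [hderiv, hd] with x hx1 hx2 hx
    obtain ⟨hdiff, hbound⟩ := hx2 hx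
    have hgd : HasDerivAt g ((L : ℝ) - r x) x := by
      have : HasDerivAt (fun y => (L : ℝ) * y - h y) ((L : ℝ) - r x) x := by
        have := ((hasDerivAt_id x).const_mul (L : ℝ)).sub hx1
        simp only [mul_one] at this
        exact this
    -- fun y => L * y - h y = g
      convert this using 1
      ext y; simp [hh]
    have : deriv g x = (L : ℝ) - r x := hgd.deriv
    linarith [hbound, this.symm.le]
  -- r is integrable on Ioo a b
  have hfin : μh (Ioo a b) ≠ ⊤ := by
    refine ne_of_lt (lt_of_le_of_lt (measure_mono Ioo_subset_Icc_self) ?_)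
    rw [hμh, StieltjesFunction.measure_Icc]
    exact ENNReal.ofReal_lt_top
  have hlint : ∫⁻ x in Ioo a b, μh.rnDeriv volume x ∂volume ≠ ⊤ :=
    ne_of_lt (lt_of_le_of_lt (Measure.setLIntegral_rnDeriv_le _) hfin.lt_top)
  have hrint : IntegrableOn r (Ioo a b) volume := by
    exact integrable_toReal_of_lintegral_ne_top (μh.measurable_rnDeriv volume).aemeasurable.restrict hlint
  -- ∫ r ≤ μh (Ioo a b)
  have h1 : ∫ x in Ioo a b, r x ∂volume ≤ (μh (Ioo a b)).toReal := by
    rw [hr]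
    rw [integral_toReal (μh.measurable_rnDeriv volume).aemeasurable.restrict
      (ae_restrict_of_ae (μh.rnDeriv_lt_top volume))]
    exact ENNReal.toReal_mono hfin (Measure.setLIntegral_rnDeriv_le _)
  have h2 : (μh (Ioo a b)).toReal ≤ h b - h a := by
    have hIcc : μh (Icc a b) = ENNReal.ofReal (h b - h a) := by
      rw [hμh, StieltjesFunction.measure_Icc, hstj b]
      congr 1
      have heq : Function.leftLim (hmono.stieltjesFunction : ℝ → ℝ) a = h a := by
        have h5 : (hmono.stieltjesFunction : ℝ → ℝ) = h := funext hstj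
        rw [h5]
        exact leftLim_eq_of_tendsto (h := nhdsLT_neBot a) (hcont.continuousAt.tendsto.mono_left nhdsWithin_le_nhds)
      rw [heq]
    calc (μh (Ioo a b)).toReal ≤ (μh (Icc a b)).toReal :=
          ENNReal.toReal_mono (by rw [hIcc]; exact ENNReal.ofReal_ne_top)
            (measure_mono Ioo_subset_Icc_self)
      _ = h b - h a := by rw [hIcc, ENNReal.toReal_ofReal (by linarith [hmono hab])]
  have h3 : ∫ x in Ioo a b, ((L : ℝ) - φ x) ∂volume ≤ ∫ x in Ioo a b, r x ∂volume :=
    integral_mono_ae ((integrable_const _).sub hφ) hrint hle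
  have h4 : ∫ x in Ioo a b, ((L : ℝ) - φ x) ∂volume
      = (L : ℝ) * (b - a) - ∫ x in Ioo a b, φ x := by
    rw [integral_sub (integrable_const _) hφ, setIntegral_const, Real.volume_real_Ioo_of_le hab, smul_eq_mul, mul_comm]
  have : (L : ℝ) * (b - a) - ∫ x in Ioo a b, φ x ≤ h b - h a := by
    calc (L : ℝ) * (b - a) - ∫ x in Ioo a b, φ x
        = ∫ x in Ioo a b, ((L : ℝ) - φ x) ∂volume := h4.symm
      _ ≤ ∫ x in Ioo a b, r x ∂volume := h3
      _ ≤ (μh (Ioo a b)).toReal := h1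
      _ ≤ h b - h a := h2
  simp only [hh] at this
  linarith

/-- Key integral inequality in the proof of Proposition 7.3: under
`M' ≤ β K - (β/2) M²` a.e. on `(0,T*)` and `M(0) < -√(2K)`, one has
`1/M(t) - 1/M(0) ≥ (1/2 - K/M(0)²) ∫₀ᵗ β(s) ds` for all `t ∈ [0,T*)`. -/
theorem riccati_reciprocal_integral_bound
    (Tstar : EReal) (hT : 0 < Tstar) (K : ℝ) (hK : 0 < K)
    (β M : ℝ → ℝ)
    (hβc : ContinuousOn β {t : ℝ | 0 ≤ t ∧ (t : EReal) < Tstar})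
    (hβpos : ∀ t : ℝ, 0 ≤ t → (t : EReal) < Tstar → 0 < β t)
    (hMlip : ∀ a b : ℝ, 0 ≤ a → (b : EReal) < Tstar →
      ∃ L : NNReal, LipschitzOnWith L M (Set.Icc a b))
    (hineq : ∀ᵐ (t : ℝ) ∂volume, 0 < t → (t : EReal) < Tstar →
      DifferentiableAt ℝ M t ∧ deriv M t ≤ β t * K - β t / 2 * (M t) ^ 2)
    (hM0 : M 0 < -Real.sqrt (2 * K)) :
    ∀ t : ℝ, 0 ≤ t → (t : EReal) < Tstar →
      (1 / 2 - K / (M 0) ^ 2) * ∫ s in (0 : ℝ)..t, β s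
        ≤ 1 / M t - 1 / M 0 := by
  intro t ht htT
  set c : ℝ := -Real.sqrt (2 * K) with hc
  have hcneg : c < 0 := by
    rw [hc]
    have : 0 < Real.sqrt (2 * K) := Real.sqrt_pos.2 (by linarith)
    linarith
  have hM0neg : M 0 < 0 := lt_trans hM0 hcneg
  have hc2 : c ^ 2 = 2 * K := by
    rw [hc, neg_sq]
    exact Real.sq_sqrt (by linarith : (0:ℝ) ≤ 2 * K)
  have hM0sq : 2 * K < (M 0) ^ 2 := by nlinarith
  have hsub : ∀ s : ℝ, s ≤ t → (s : EReal) < Tstar :=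
    fun s hs => lt_of_le_of_lt (EReal.coe_le_coe_iff.2 hs) htT
  obtain ⟨L, hL⟩ := hMlip 0 t le_rfl htT
  have hMcont : ContinuousOn M (Icc 0 t) := hL.continuousOn
  obtain ⟨g, hgL, hgEq⟩ := hL.extend_real
  -- useful: near any x ∈ Ioo 0 t, g = M
  have hgM : ∀ x ∈ Ioo 0 t, g =ᶠ[nhds x] M := by
    intro x hx
    exact Filter.eventuallyEq_of_mem (Ioo_mem_nhds hx.1 hx.2)
      (fun y hy => (hgEq (Ioo_subset_Icc_self hy)).symm)
  -- Step 1: barrier, M s ≤ M 0 on [0, t]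
  have hbar : ∀ s ∈ Icc 0 t, M s ≤ M 0 := by
    have hA : ∀ ε : ℝ, 0 < ε → M 0 + ε < c → ∀ s ∈ Icc 0 t, M s ≤ M 0 + ε := by
      intro ε hε hεc
      by_contra hcon
      push_neg at hcon
      obtain ⟨s₀, hs₀, hMs₀⟩ := hcon
      set S : Set ℝ := Icc 0 t ∩ M ⁻¹' Ici (M 0 + ε) with hS
      have hSclosed : IsClosed S :=
        hMcont.preimage_isClosed_of_isClosed isClosed_Icc isClosed_Ici
      have hSne : S.Nonempty := ⟨s₀, hs₀, le_of_lt hMs₀⟩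
      have hSbdd : BddBelow S := ⟨0, fun x hx => hx.1.1⟩
      set u := sInf S with hu
      have huS : u ∈ S := hSclosed.csInf_mem hSne hSbdd
      have huIcc : u ∈ Icc 0 t := huS.1
      have hMu : M 0 + ε ≤ M u := huS.2
      have hupos : 0 < u := by
        rcases lt_or_eq_of_le huIcc.1 with h | h
        · exact h
        · exfalso; rw [← h] at hMu; linarith
      have hlt : ∀ s ∈ Ico 0 u, M s < M 0 + ε := by
        intro s hs
        by_contra hcon2
        push_neg at hcon2
        have : s ∈ S := ⟨⟨hs.1, le_trans hs.2.le huIcc.2⟩, hcon2⟩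
        exact absurd (csInf_le hSbdd this) (not_le.2 hs.2)
      -- apply key lemma on [0, u] with φ = 0
      have hkey := lipschitz_sub_le_integral g (fun _ => (0:ℝ)) L 0 u hupos.le hgL
        (integrableOn_const (by rw [Real.volume_Ioo]; exact ENNReal.ofReal_ne_top))
        ?_
      · rw [integral_zero] at hkey
        rw [← hgEq huIcc, ← hgEq (left_mem_Icc.2 ht)] at hkey
        linarith
      · filter_upwards [hineq] with x hx hmem
        have hx0 : 0 < x := hmem.1
        have hxu : x < u := hmem.2
        have hxt : x < t := lt_of_lt_of_le hxu huIcc.2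
        obtain ⟨hdiff, hbound⟩ := hx (hx0) (hsub x hxt.le)
        have heq := hgM x ⟨hx0, hxt⟩
        constructor
        · exact heq.differentiableAt_iff.2 hdiff
        · rw [heq.deriv_eq]
          have hMx : M x < c := lt_trans (hlt x ⟨hx0.le, hxu⟩) hεc
          have hMx2 : 2 * K < (M x) ^ 2 := by nlinarith
          have hβx : 0 < β x := hβpos x hx0.le (hsub x hxt.le)
          nlinarith
    intro s hs
    refine le_of_forall_pos_le_add fun δ hδ => ?_
    have hεd : 0 < min δ ((c - M 0) / 2) := lt_min hδ (by linarith)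
    have := hA (min δ ((c - M 0) / 2)) hεd
      (by have := min_le_right δ ((c - M 0) / 2); linarith) s hs
    have := min_le_left δ ((c - M 0) / 2)
    linarith
  -- consequences of the barrier
  have hMneg : ∀ s ∈ Icc 0 t, M s < 0 := fun s hs => lt_of_le_of_lt (hbar s hs) hM0neg
  have hMne : ∀ s ∈ Icc 0 t, M s ≠ 0 := fun s hs => ne_of_lt (hMneg s hs)
  have hMsq : ∀ s ∈ Icc 0 t, (M 0) ^ 2 ≤ (M s) ^ 2 := by
    intro s hs
    nlinarith [hbar s hs, hMneg s hs]
  have hM0sqpos : 0 < (M 0) ^ 2 := by nlinarith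
  -- Step 2: the function 1/M is Lipschitz on [0, t]
  set L' : NNReal := L * Real.toNNReal (((M 0) ^ 2)⁻¹) with hL'
  have hL'coe : (L' : ℝ) = (L : ℝ) * ((M 0) ^ 2)⁻¹ := by
    rw [hL', NNReal.coe_mul, Real.coe_toNNReal _ (by positivity)]
  have hinvLip : LipschitzOnWith L' (fun s => (M s)⁻¹) (Icc 0 t) := by
    rw [lipschitzOnWith_iff_dist_le_mul]
    intro x hx y hy
    rw [Real.dist_eq, Real.dist_eq]
    have hMx := hMneg x hx
    have hMy := hMneg y hy
    have hdiff : (M x)⁻¹ - (M y)⁻¹ = (M y - M x) / (M x * M y) :=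
      inv_sub_inv hMx.ne hMy.ne
    rw [hdiff, abs_div]
    have hMxy : (M 0) ^ 2 ≤ M x * M y := by
      nlinarith [hbar x hx, hbar y hy]
    have habs : |M x * M y| = M x * M y := abs_of_pos (by nlinarith)
    rw [habs]
    have hnum : |M y - M x| ≤ (L : ℝ) * |x - y| := by
      have := (lipschitzOnWith_iff_dist_le_mul.1 hL) y hy x hx
      rw [Real.dist_eq, Real.dist_eq] at this
      rwa [abs_sub_comm x y]
    rw [hL'coe]
    rw [div_le_iff₀ (by nlinarith)]
    have h1 : 1 ≤ ((M 0) ^ 2)⁻¹ * (M x * M y) := by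
      rw [inv_mul_eq_div, le_div_iff₀ hM0sqpos]
      linarith
    calc |M y - M x| ≤ (L : ℝ) * |x - y| := hnum
      _ ≤ (L : ℝ) * |x - y| * (((M 0) ^ 2)⁻¹ * (M x * M y)) := by
          nlinarith [h1, mul_nonneg (NNReal.coe_nonneg L) (abs_nonneg (x - y))]
      _ = (L : ℝ) * ((M 0) ^ 2)⁻¹ * |x - y| * (M x * M y) := by ring
  obtain ⟨G, hGL, hGEq⟩ := hinvLip.extend_real
  have hGM : ∀ x ∈ Ioo 0 t, G =ᶠ[nhds x] (fun s => (M s)⁻¹) := by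
    intro x hx
    exact Filter.eventuallyEq_of_mem (Ioo_mem_nhds hx.1 hx.2)
      (fun y hy => (hGEq (Ioo_subset_Icc_self hy)).symm)
  -- β is integrable on Ioo 0 t
  have hβint : IntegrableOn β (Ioo 0 t) volume := by
    have hIccsub : Icc 0 t ⊆ {s : ℝ | 0 ≤ s ∧ (s : EReal) < Tstar} :=
      fun s hs => ⟨hs.1, hsub s hs.2⟩
    exact ((hβc.mono hIccsub).integrableOn_Icc).mono_set Ioo_subset_Icc_self
  -- apply key lemma to -G with φ = -(1/2 - K/M0²)β
  set ψ : ℝ → ℝ := fun x => (1 / 2 - K / (M 0) ^ 2) * β x with hψ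
  have hkey := lipschitz_sub_le_integral (fun x => -G x) (fun x => -ψ x) L' 0 t ht hGL.neg
    ((hβint.const_mul _).neg) ?_
  · -- conclude
    have hInt : ∫ x in Ioo 0 t, -ψ x = -((1 / 2 - K / (M 0) ^ 2) * ∫ s in Ioo 0 t, β s) := by
      rw [integral_neg, hψ]
      congr 1
      exact integral_const_mul _ _
    rw [hInt] at hkey
    have hGt : G t = (M t)⁻¹ := (hGEq (right_mem_Icc.2 ht)).symm
    have hG0 : G 0 = (M 0)⁻¹ := (hGEq (left_mem_Icc.2 ht)).symm
    have hIoc : ∫ s in (0:ℝ)..t, β s = ∫ s in Ioo 0 t, β s := by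
      rw [intervalIntegral.integral_of_le ht, integral_Ioc_eq_integral_Ioo]
    rw [hIoc]
    simp only [hGt, hG0] at hkey
    simp only [one_div] at hkey ⊢
    linarith
  · filter_upwards [hineq] with x hx hmem
    have hx0 : 0 < x := hmem.1
    have hxt : x < t := hmem.2
    obtain ⟨hdiff, hbound⟩ := hx hx0 (hsub x hxt.le)
    have hxIcc : x ∈ Icc 0 t := ⟨hx0.le, hxt.le⟩
    have hMx : M x ≠ 0 := hMne x hxIcc
    have hDinv : HasDerivAt (fun y => (M y)⁻¹) (-deriv M x / (M x) ^ 2) x :=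
      hdiff.hasDerivAt.inv hMx
    have heq : (fun y => -G y) =ᶠ[nhds x] (fun y => -(M y)⁻¹) := (hGM x ⟨hx0, hxt⟩).neg
    have hDG : HasDerivAt (fun y => -G y) (deriv M x / (M x) ^ 2) x := by
      have : HasDerivAt (fun y => -(M y)⁻¹) (deriv M x / (M x) ^ 2) x := by
        have := hDinv.neg
        rw [neg_div, neg_neg] at this
        exact this
      exact this.congr_of_eventuallyEq heq
    refine ⟨hDG.differentiableAt, ?_⟩
    rw [hDG.deriv]
    have hβx : 0 < β x := hβpos x hx0.le (hsub x hxt.le)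
    have hMx2pos : 0 < (M x) ^ 2 := by positivity
    have hMx2 : (M 0) ^ 2 ≤ (M x) ^ 2 := hMsq x hxIcc
    have e1 : deriv M x / (M x) ^ 2 ≤ (β x * K - β x / 2 * (M x) ^ 2) / (M x) ^ 2 :=
      div_le_div_of_nonneg_right hbound hMx2pos.le
    have e2 : (β x * K - β x / 2 * (M x) ^ 2) / (M x) ^ 2
        = β x * K / (M x) ^ 2 - β x / 2 := by
      field_simp
    have e3 : β x * K / (M x) ^ 2 ≤ β x * K / (M 0) ^ 2 :=
      div_le_div_of_nonneg_left (mul_nonneg hβx.le hK.le) hM0sqpos hMx2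
    have : -ψ x = β x * K / (M 0) ^ 2 - β x / 2 := by
      rw [hψ]; field_simp; ring
    rw [this]
    calc deriv M x / (M x) ^ 2 ≤ β x * K / (M x) ^ 2 - β x / 2 := by rw [← e2]; exact e1
      _ ≤ β x * K / (M 0) ^ 2 - β x / 2 := by linarith
end

section
/- Let K, c, b* > 0 and let β : [0,∞) → (0,∞) be continuous with β(t) ≥ c·e^{−b*·t/2} for all t ≥ 0. Then there is no locally Lipschitz function M : [0,∞) → ℝ satisfying both M(0) < −(1/2)·√((b*)²/c² + 8K) − b*/(2c) and M'(t) ≤ β(t) K − (β(t)/2) M(t)² for almost every t > 0. -/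
open MeasureTheory Filter intervalIntegral Set


/-- Difference quotients along `1/(n+1)` converge to the derivative. -/
lemma tendsto_quot {ψ : ℝ → ℝ} {x d : ℝ} (hψ : HasDerivAt ψ d x) :
    Tendsto (fun n : ℕ => (ψ (x + 1/(n+1)) - ψ x) / (1/(n+1))) atTop (nhds d) := by
  have hh : Tendsto (fun n : ℕ => (1:ℝ)/(n+1)) atTop (nhds 0) :=
    tendsto_one_div_add_atTop_nhds_zero_nat
  have hseq : Tendsto (fun n : ℕ => x + 1/(n+1)) atTop (nhdsWithin x {x}ᶜ) := by
    rw [tendsto_nhdsWithin_iff]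
    constructor
    · simpa using tendsto_const_nhds.add hh
    · refine Eventually.of_forall fun n => ?_
      have : (0:ℝ) < 1/(n+1) := by positivity
      simp only [Set.mem_compl_iff, Set.mem_singleton_iff]
      intro h
      nlinarith [h]
  have h2 := (hasDerivAt_iff_tendsto_slope.1 hψ).comp hseq
  convert h2 using 2 with n
  simp [Function.comp, slope_def_field]

/-- FTC for globally Lipschitz functions: `F b - F a = ∫ deriv F`. -/
lemma lipschitz_sub_eq_integral_deriv {F : ℝ → ℝ} {L : NNReal}
    (hF : LipschitzWith L F) {a b : ℝ} (hab : a ≤ b) :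
    F b - F a = ∫ t in a..b, deriv F t := by
  have hc : Continuous F := hF.continuous
  have hFi : ∀ u v : ℝ, IntervalIntegrable F volume u v := fun u v =>
    hc.intervalIntegrable u v
  set h : ℕ → ℝ := fun n => 1/(n+1) with hdef
  have hpos : ∀ n : ℕ, (0:ℝ) < h n := fun n => by positivity
  set Q : ℕ → ℝ → ℝ := fun n t => (F (t + h n) - F t) / h n with hQ
  -- the integral identity
  have key : ∀ n : ℕ, ∫ t in a..b, Q n t
      = ((∫ t in b..(b + h n), F t) - ∫ t in a..(a + h n), F t) / h n := by
    intro n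
    have hsh : IntervalIntegrable (fun t => F (t + h n)) volume a b :=
      (hc.comp (continuous_id.add continuous_const)).intervalIntegrable a b
    have e0 : ∫ t in a..b, Q n t
        = ((∫ t in a..b, F (t + h n)) - ∫ t in a..b, F t) / h n := by
      rw [← intervalIntegral.integral_sub hsh (hFi a b), ← intervalIntegral.integral_div]
    have e1 : (∫ t in a..b, F (t + h n)) = ∫ t in (a + h n)..(b + h n), F t :=
      intervalIntegral.integral_comp_add_right _ _
    have A1 := intervalIntegral.integral_add_adjacent_intervals
      (hFi a (a + h n)) (hFi (a + h n) (b + h n))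
    have A2 := intervalIntegral.integral_add_adjacent_intervals
      (hFi a b) (hFi b (b + h n))
    rw [e0, e1]
    have : (∫ t in (a + h n)..(b + h n), F t) - ∫ t in a..b, F t
        = (∫ t in b..(b + h n), F t) - ∫ t in a..(a + h n), F t := by linarith
    rw [this]
  -- limit of the right-hand side
  have hRlim : Tendsto (fun n => ((∫ t in b..(b + h n), F t) - ∫ t in a..(a + h n), F t) / h n)
      atTop (nhds (F b - F a)) := by
    have hb' : HasDerivAt (fun u => ∫ t in b..u, F t) (F b) b :=
      intervalIntegral.integral_hasDerivAt_right (hFi b b)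
        (hc.aestronglyMeasurable.stronglyMeasurableAtFilter) hc.continuousAt
    have ha' : HasDerivAt (fun u => ∫ t in a..u, F t) (F a) a :=
      intervalIntegral.integral_hasDerivAt_right (hFi a a)
        (hc.aestronglyMeasurable.stronglyMeasurableAtFilter) hc.continuousAt
    have hb2 := tendsto_quot hb'
    have ha2 := tendsto_quot ha'
    simp only [intervalIntegral.integral_same, sub_zero] at hb2 ha2
    exact (hb2.sub ha2).congr fun n => div_sub_div_same _ _ _
  -- limit of the left-hand side via dominated convergence
  have hLlim : Tendsto (fun n => ∫ t in Set.Ioc a b, Q n t) atTop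
      (nhds (∫ t in Set.Ioc a b, deriv F t)) := by
    apply MeasureTheory.tendsto_integral_of_dominated_convergence (fun _ => (L:ℝ))
    · intro n
      exact (((hc.comp (continuous_id.add continuous_const)).sub hc).div_const _).aestronglyMeasurable
    · exact integrableOn_const measure_Ioc_lt_top.ne
    · intro n
      refine Eventually.of_forall fun t => ?_
      have hd : dist (F (t + h n)) (F t) ≤ (L:ℝ) * dist (t + h n) t := hF.dist_le_mul _ _
      rw [Real.dist_eq, Real.dist_eq] at hd
      have h1 : |t + h n - t| = h n := by
        rw [add_sub_cancel_left, abs_of_pos (hpos n)]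
      rw [h1] at hd
      have : ‖Q n t‖ = |F (t + h n) - F t| / h n := by
        rw [hQ]; simp [Real.norm_eq_abs, abs_div, abs_of_pos (hpos n)]
      rw [this, div_le_iff₀ (hpos n)]
      exact hd
    · have hae : ∀ᵐ t ∂(volume : Measure ℝ), DifferentiableAt ℝ F t :=
        hF.ae_differentiableAt
      filter_upwards [MeasureTheory.ae_restrict_of_ae hae] with t ht
      exact tendsto_quot ht.hasDerivAt
  have hLlim' : Tendsto (fun n => ∫ t in a..b, Q n t) atTop
      (nhds (∫ t in a..b, deriv F t)) := by
    simpa [intervalIntegral.integral_of_le hab] using hLlim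
  rw [funext key] at hLlim'
  exact tendsto_nhds_unique hRlim hLlim'

/-- FTC inequality: a function Lipschitz on `[a,b]` whose derivative is a.e. bounded
by an interval-integrable `g` on `(a,b)` satisfies `f b - f a ≤ ∫ g`. -/
lemma sub_le_integral_of_ae_deriv_le {f g : ℝ → ℝ} {L : NNReal} {a b : ℝ} (hab : a ≤ b)
    (hf : LipschitzOnWith L f (Set.Icc a b))
    (hd : ∀ᵐ t ∂(volume : Measure ℝ), t ∈ Set.Ioo a b → DifferentiableAt ℝ f t ∧ deriv f t ≤ g t)
    (hgi : IntervalIntegrable g volume a b) :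
    f b - f a ≤ ∫ t in a..b, g t := by
  obtain ⟨F, hF, hEq⟩ := hf.extend_real
  have hFa : f a = F a := hEq ⟨le_refl a, hab⟩
  have hFb : f b = F b := hEq ⟨hab, le_refl b⟩
  -- deriv F is bounded by L
  have hbd : ∀ t : ℝ, ‖deriv F t‖ ≤ (L : ℝ) := by
    intro t
    have h1 : ‖fderiv ℝ F t‖ ≤ (L : ℝ) := norm_fderiv_le_of_lipschitz ℝ hF
    have h2 : deriv F t = fderiv ℝ F t 1 := (fderiv_apply_one_eq_deriv).symm
    rw [h2]
    calc ‖fderiv ℝ F t 1‖ ≤ ‖fderiv ℝ F t‖ * ‖(1:ℝ)‖ := (fderiv ℝ F t).le_opNorm 1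
      _ ≤ (L : ℝ) := by simpa using h1
  -- deriv F is interval integrable
  have hFi : IntervalIntegrable (deriv F) volume a b := by
    rw [intervalIntegrable_iff]
    have hconst : IntegrableOn (fun _ : ℝ => (L:ℝ)) (Set.uIoc a b) volume := by
      refine integrableOn_const (ne_of_lt ?_)
      rw [Set.uIoc]
      exact measure_Ioc_lt_top
    exact hconst.mono' ((measurable_deriv F).aestronglyMeasurable)
      (Filter.Eventually.of_forall fun t => hbd t)
  -- a.e. bound on Icc
  have hae : ∀ᵐ t ∂(volume : Measure ℝ).restrict (Set.Icc a b), deriv F t ≤ g t := by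
    have hone : ∀ᵐ t ∂(volume : Measure ℝ), t ≠ a ∧ t ≠ b := by
      have h1 : ∀ᵐ t ∂(volume : Measure ℝ), t ≠ a := by
        rw [MeasureTheory.ae_iff]; simpa using Real.volume_singleton
      have h2 : ∀ᵐ t ∂(volume : Measure ℝ), t ≠ b := by
        rw [MeasureTheory.ae_iff]; simpa using Real.volume_singleton
      exact h1.and h2
    rw [MeasureTheory.ae_restrict_iff' measurableSet_Icc]
    filter_upwards [hd, hone] with t ht hne htmem
    have htIoo : t ∈ Set.Ioo a b :=
      ⟨lt_of_le_of_ne htmem.1 (Ne.symm hne.1), lt_of_le_of_ne htmem.2 hne.2⟩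
    obtain ⟨hdiff, hle⟩ := ht htIoo
    have hFf : F =ᶠ[nhds t] f := by
      filter_upwards [Ioo_mem_nhds htIoo.1 htIoo.2] with x hx
      exact (hEq (Set.Ioo_subset_Icc_self hx)).symm
    rw [Filter.EventuallyEq.deriv_eq hFf]
    exact hle
  calc f b - f a = F b - F a := by rw [hFa, hFb]
    _ = ∫ t in a..b, deriv F t := lipschitz_sub_eq_integral_deriv hF hab
    _ ≤ ∫ t in a..b, g t := intervalIntegral.integral_mono_ae_restrict hab hFi hgi hae

set_option maxHeartbeats 1000000 in
/-- Deterministic core of Proposition 7.3 (finite-time wave breaking): if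
`β(t) ≥ c e^{-b* t/2}` on `[0,∞)`, there is no locally Lipschitz `M` on `[0,∞)`
with `M(0) < -(1/2)√((b*)²/c² + 8K) - b*/(2c)` satisfying
`M' ≤ β K - (β/2) M²` a.e. on `(0,∞)`. -/
theorem riccati_no_global_solution
    (K c bstar : ℝ) (hK : 0 < K) (hc : 0 < c) (hb : 0 < bstar)
    (β : ℝ → ℝ)
    (hβc : ContinuousOn β (Set.Ici (0 : ℝ)))
    (hβpos : ∀ t : ℝ, 0 ≤ t → 0 < β t)
    (hβlb : ∀ t : ℝ, 0 ≤ t → c * Real.exp (-bstar * t / 2) ≤ β t) :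
    ¬ ∃ M : ℝ → ℝ,
      (∀ a b : ℝ, 0 ≤ a → ∃ L : NNReal, LipschitzOnWith L M (Set.Icc a b)) ∧
      M 0 < -(1 / 2) * Real.sqrt (bstar ^ 2 / c ^ 2 + 8 * K) - bstar / (2 * c) ∧
      (∀ᵐ (t : ℝ) ∂volume, 0 < t →
        DifferentiableAt ℝ M t ∧ deriv M t ≤ β t * K - β t / 2 * (M t) ^ 2) := by
  rintro ⟨M, hLip, hM0lt, hae⟩
  set M0 := M 0 with hM0def
  have hs8 : (0:ℝ) ≤ bstar ^ 2 / c ^ 2 + 8 * K := by positivity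
  set s := Real.sqrt (bstar ^ 2 / c ^ 2 + 8 * K) with hsdef
  have hs2 : s ^ 2 = bstar ^ 2 / c ^ 2 + 8 * K := Real.sq_sqrt hs8
  have hs0 : 0 ≤ s := Real.sqrt_nonneg _
  have h1 : s / 2 + bstar / (2 * c) < -M0 := by
    have h := hM0lt
    have e : -(1/2) * s - bstar / (2*c) = -(s/2 + bstar/(2*c)) := by ring
    rw [e] at h
    linarith
  have hM0neg : M0 < 0 := by
    have hp : 0 < s / 2 + bstar / (2 * c) := by positivity
    linarith
  -- the quadratic inequality: bstar * (-M0) + 2*K*c < c * M0^2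
  have hquad : bstar * (-M0) + 2 * K * c < c * M0 ^ 2 := by
    have h2 : c * s < 2 * c * (-M0) - bstar := by
      have := mul_lt_mul_of_pos_left h1 (by linarith : (0:ℝ) < 2 * c)
      have he : 2 * c * (s / 2 + bstar / (2 * c)) = c * s + bstar := by field_simp
      linarith [he ▸ this]
    have hcs : 0 ≤ c * s := by positivity
    have h3 : (c * s) ^ 2 < (2 * c * (-M0) - bstar) ^ 2 := by nlinarith
    have h4 : (c * s) ^ 2 = bstar ^ 2 + 8 * K * c ^ 2 := by
      have : (c * s) ^ 2 = c ^ 2 * s ^ 2 := by ring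
      rw [this, hs2]
      field_simp
    nlinarith
  have h2K : 2 * K < M0 ^ 2 := by nlinarith
  have hM0sq : 0 < M0 ^ 2 := by nlinarith [mul_pos_of_neg_of_neg hM0neg hM0neg]
  have hM0sqrt : M0 < -Real.sqrt (2 * K) := by
    have h := (Real.sqrt_lt' (by linarith : (0:ℝ) < -M0)).2
      (by nlinarith : 2 * K < (-M0) ^ 2)
    linarith
  -- Step 1: M t ≤ M0 for all t ≥ 0
  have H1 : ∀ t : ℝ, 0 ≤ t → M t ≤ M0 := by
    by_contra hcon
    push_neg at hcon
    obtain ⟨t1, ht1, hMt1⟩ := hcon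
    have ht1pos : 0 < t1 := by
      rcases lt_or_eq_of_le ht1 with h | h
      · exact h
      · exact absurd (h ▸ hMt1) (lt_irrefl _)
    obtain ⟨L1, hL1⟩ := hLip 0 t1 le_rfl
    have hcontM : ContinuousOn M (Set.Icc 0 t1) := hL1.continuousOn
    set S := {t : ℝ | t ∈ Set.Icc (0:ℝ) t1 ∧ M t ≤ M0} with hSdef
    have hS0 : (0:ℝ) ∈ S := ⟨⟨le_rfl, ht1⟩, le_rfl⟩
    have hSne : S.Nonempty := ⟨0, hS0⟩
    have hSbdd : BddAbove S := ⟨t1, fun x hx => hx.1.2⟩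
    have hScl : IsClosed S := by
      have : S = Set.Icc 0 t1 ∩ M ⁻¹' Set.Iic M0 := rfl
      rw [this]
      exact hcontM.preimage_isClosed_of_isClosed isClosed_Icc isClosed_Iic
    set σ := sSup S with hσdef
    have hσS : σ ∈ S := hScl.csSup_mem hSne hSbdd
    have hσ0 : 0 ≤ σ := hσS.1.1
    have hσt1 : σ ≤ t1 := hσS.1.2
    have hMσ : M σ ≤ M0 := hσS.2
    have hσlt : σ < t1 := by
      rcases lt_or_eq_of_le hσt1 with h | h
      · exact h
      · exact absurd (h ▸ hMσ) (not_le.2 hMt1)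
    have hafter : ∀ t : ℝ, t ∈ Set.Ioc σ t1 → M0 < M t := by
      intro t ht
      by_contra hle
      push_neg at hle
      have : t ∈ S := ⟨⟨le_trans hσ0 ht.1.le, ht.2⟩, hle⟩
      exact absurd (le_csSup hSbdd this) (not_le.2 ht.1)
    -- pick u > σ with M < -√(2K) on [σ, u]
    have hMσlt : M σ < -Real.sqrt (2 * K) := lt_of_le_of_lt hMσ hM0sqrt
    have hcw : ContinuousWithinAt M (Set.Icc 0 t1) σ := hcontM σ ⟨hσ0, hσt1⟩
    have hev : M ⁻¹' Set.Iio (-Real.sqrt (2 * K)) ∈ nhdsWithin σ (Set.Icc 0 t1) :=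
      hcw (Iio_mem_nhds hMσlt)
    rw [Metric.mem_nhdsWithin_iff] at hev
    obtain ⟨ε, hε, hball⟩ := hev
    set u := min (σ + ε / 2) t1 with hudef
    have hσu : σ < u := lt_min (by linarith) hσlt
    have hut1 : u ≤ t1 := min_le_right _ _
    have hmem : ∀ r : ℝ, r ∈ Set.Icc σ u → M r < -Real.sqrt (2 * K) := by
      intro r hr
      apply hball
      constructor
      · rw [Metric.mem_ball, Real.dist_eq, abs_lt]
        have : r ≤ σ + ε / 2 := le_trans hr.2 (min_le_left _ _)
        constructor <;> [linarith [hr.1]; linarith [hr.1]]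
      · exact ⟨le_trans hσ0 hr.1, le_trans hr.2 hut1⟩
    obtain ⟨L2, hL2⟩ := hLip σ u hσ0
    have hstep : M u - M σ ≤ ∫ t in σ..u, (0:ℝ) := by
      apply sub_le_integral_of_ae_deriv_le hσu.le hL2 _ intervalIntegrable_const
      filter_upwards [hae] with t ht htIoo
      have ht0 : 0 < t := lt_of_le_of_lt hσ0 htIoo.1
      obtain ⟨hdiff, hineq⟩ := ht ht0
      refine ⟨hdiff, ?_⟩
      have hMt : M t < -Real.sqrt (2 * K) := hmem t ⟨htIoo.1.le, htIoo.2.le⟩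
      have hMt2 : 2 * K < M t ^ 2 := by
        have hr : 0 < Real.sqrt (2*K) := Real.sqrt_pos.2 (by linarith)
        have hr2 : Real.sqrt (2*K) ^ 2 = 2*K := Real.sq_sqrt (by linarith)
        nlinarith [mul_pos hr (by linarith : (0:ℝ) < -M t - Real.sqrt (2*K)),
          sq_nonneg (M t + Real.sqrt (2*K))]
      have hβt : 0 < β t := hβpos t ht0.le
      linarith [mul_pos hβt (by linarith : (0:ℝ) < M t ^ 2 - 2 * K), hineq,
        mul_pos hβt hβt]
    rw [intervalIntegral.integral_const, smul_zero] at hstep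
    have := hafter u ⟨hσu, hut1⟩
    linarith
  -- basic consequences
  have hMneg : ∀ t : ℝ, 0 ≤ t → M t < 0 := fun t ht => lt_of_le_of_lt (H1 t ht) hM0neg
  have hMsq : ∀ t : ℝ, 0 ≤ t → M0 ^ 2 ≤ M t ^ 2 := by
    intro t ht
    nlinarith [H1 t ht, hMneg t ht]
  -- Step 2: the quantity δ and the target time T
  set δ : ℝ := 1/2 - K / M0 ^ 2 with hδdef
  have hδpos : 0 < δ := by
    rw [hδdef, sub_pos, div_lt_iff₀ hM0sq]
    linarith
  set y0 : ℝ := -(M0)⁻¹ with hy0def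
  have hy0pos : 0 < y0 := by
    rw [hy0def]
    have : M0⁻¹ < 0 := inv_lt_zero.mpr hM0neg
    linarith
  have hy0lt : y0 < 2 * δ * c / bstar := by
    rw [lt_div_iff₀ hb]
    have hM0ne : M0 ≠ 0 := ne_of_lt hM0neg
    have e1 : y0 * bstar * M0 ^ 2 < (2 * δ * c) * M0 ^ 2 := by
      have e2 : y0 * bstar * M0 ^ 2 = bstar * (-M0) := by
        rw [hy0def]; field_simp
      have e3 : (2 * δ * c) * M0 ^ 2 = c * M0 ^ 2 - 2 * K * c := by
        rw [hδdef]; field_simp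
      rw [e2, e3]; linarith
    exact lt_of_mul_lt_mul_right e1 (le_of_lt hM0sq)
  have h2δc : 0 < 2 * δ * c / bstar := by positivity
  set ε0 : ℝ := 1 - y0 * bstar / (2 * δ * c) with hε0def
  have hε0pos : 0 < ε0 := by
    rw [hε0def, sub_pos, div_lt_one (by positivity)]
    rw [lt_div_iff₀ hb] at hy0lt
    linarith
  have hε0le : ε0 ≤ 1 := by
    rw [hε0def]
    have : 0 ≤ y0 * bstar / (2 * δ * c) := by positivity
    linarith
  set T : ℝ := (2 / bstar) * (1 - Real.log ε0) with hTdef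
  have hlogε0 : Real.log ε0 ≤ 0 := Real.log_nonpos hε0pos.le hε0le
  have hTpos : 0 < T := by
    rw [hTdef]
    have : 0 < 1 - Real.log ε0 := by linarith
    positivity
  have hexpT : Real.exp (-bstar * T / 2) < ε0 := by
    have he : -bstar * T / 2 = Real.log ε0 - 1 := by
      rw [hTdef]; field_simp; ring
    rw [he]
    calc Real.exp (Real.log ε0 - 1) < Real.exp (Real.log ε0) := by
          apply Real.exp_lt_exp.2; linarith
      _ = ε0 := Real.exp_log hε0pos
  -- Step 3: the function y = -1/M on [0, T]
  set y : ℝ → ℝ := fun t => -(M t)⁻¹ with hydef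
  obtain ⟨L3, hL3⟩ := hLip 0 T le_rfl
  have hyLip : LipschitzOnWith ((L3:ℝ) / M0 ^ 2).toNNReal y (Set.Icc 0 T) := by
    apply LipschitzOnWith.of_dist_le_mul
    intro p hp q hq
    have hMp := H1 p hp.1
    have hMq := H1 q hq.1
    have hMpne : M p ≠ 0 := ne_of_lt (hMneg p hp.1)
    have hMqne : M q ≠ 0 := ne_of_lt (hMneg q hq.1)
    have hd : dist (M p) (M q) ≤ (L3:ℝ) * dist p q := hL3.dist_le_mul p hp q hq
    rw [Real.dist_eq, Real.dist_eq] at hd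
    rw [Real.dist_eq, Real.dist_eq]
    have e1 : y p - y q = (M p - M q) / (M p * M q) := by
      rw [hydef]; field_simp; ring
    have habs : |M p * M q| = |M p| * |M q| := abs_mul _ _
    have hp1 : -M0 ≤ |M p| := by rw [abs_of_neg (hMneg p hp.1)]; linarith
    have hq1 : -M0 ≤ |M q| := by rw [abs_of_neg (hMneg q hq.1)]; linarith
    have hden : M0 ^ 2 ≤ |M p * M q| := by
      rw [habs]
      nlinarith
    have e2 : |y p - y q| = |M p - M q| / |M p * M q| := by rw [e1, abs_div]
    rw [e2]
    have hcoe : (((L3:ℝ) / M0 ^ 2).toNNReal : ℝ) = (L3:ℝ) / M0 ^ 2 :=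
      Real.coe_toNNReal _ (by positivity)
    rw [hcoe]
    calc |M p - M q| / |M p * M q| ≤ ((L3:ℝ) * |p - q|) / M0 ^ 2 := by
          apply div_le_div₀ (by positivity) hd hM0sq hden
      _ = (L3:ℝ) / M0 ^ 2 * |p - q| := by ring
  -- the comparison function
  have hΦ : ∀ t : ℝ, HasDerivAt (fun u => (2 * δ * c / bstar) * Real.exp (-bstar * u / 2))
      (-(δ * c) * Real.exp (-bstar * t / 2)) t := by
    intro t
    have h1 : HasDerivAt (fun u : ℝ => -bstar * u / 2) (-bstar / 2) t := by
      simpa using ((hasDerivAt_id t).const_mul (-bstar)).div_const 2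
    have h2 := h1.exp
    have h3 := h2.const_mul (2 * δ * c / bstar)
    refine h3.congr_deriv ?_
    field_simp
  have hgcont : Continuous (fun t : ℝ => -(δ * c) * Real.exp (-bstar * t / 2)) := by
    continuity
  have hstep : y T - y 0 ≤ ∫ t in (0:ℝ)..T, -(δ * c) * Real.exp (-bstar * t / 2) := by
    apply sub_le_integral_of_ae_deriv_le hTpos.le hyLip _
      (hgcont.intervalIntegrable 0 T)
    filter_upwards [hae] with t ht htIoo
    have ht0 : 0 < t := htIoo.1
    obtain ⟨hdiff, hineq⟩ := ht ht0
    have hMt : M t ≤ M0 := H1 t ht0.le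
    have hMtneg : M t < 0 := hMneg t ht0.le
    have hMtne : M t ≠ 0 := ne_of_lt hMtneg
    have hy' : HasDerivAt y (deriv M t / (M t) ^ 2) t := by
      have hinv := (hdiff.hasDerivAt).inv hMtne
      have := hinv.neg
      refine this.congr_deriv ?_
      ring
    refine ⟨hy'.differentiableAt, ?_⟩
    rw [hy'.deriv]
    have hMt2 : M0 ^ 2 ≤ M t ^ 2 := hMsq t ht0.le
    have hβt : 0 < β t := hβpos t ht0.le
    have hβlbt : c * Real.exp (-bstar * t / 2) ≤ β t := hβlb t ht0.le
    have hEpos : 0 < Real.exp (-bstar * t / 2) := Real.exp_pos _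
    rw [div_le_iff₀ (by positivity : (0:ℝ) < M t ^ 2)]
    have hhalf : K / M0 ^ 2 = 1/2 - δ := by rw [hδdef]; ring
    have fact1 : K ≤ K / M0 ^ 2 * M t ^ 2 := by
      calc K = K / M0 ^ 2 * M0 ^ 2 := by rw [div_mul_cancel₀ _ hM0sq.ne']
        _ ≤ K / M0 ^ 2 * M t ^ 2 := by
            apply mul_le_mul_of_nonneg_left hMt2 (by positivity)
    have fact2 : δ * (c * Real.exp (-bstar * t / 2)) * M t ^ 2 ≤ δ * β t * M t ^ 2 := by
      apply mul_le_mul_of_nonneg_right _ (by positivity)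
      exact mul_le_mul_of_nonneg_left hβlbt hδpos.le
    have fact3 : β t * K ≤ β t * ((1/2 - δ) * M t ^ 2) := by
      rw [← hhalf]
      exact mul_le_mul_of_nonneg_left (hhalf ▸ fact1) hβt.le
    calc deriv M t ≤ β t * K - β t / 2 * M t ^ 2 := hineq
      _ ≤ -(δ * c) * Real.exp (-bstar * t / 2) * M t ^ 2 := by nlinarith
  -- evaluate the integral
  have hint : ∫ t in (0:ℝ)..T, -(δ * c) * Real.exp (-bstar * t / 2)
      = (2 * δ * c / bstar) * Real.exp (-bstar * T / 2)
        - (2 * δ * c / bstar) * Real.exp (-bstar * 0 / 2) := by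
    exact intervalIntegral.integral_eq_sub_of_hasDerivAt (fun t _ => hΦ t)
      (hgcont.intervalIntegrable 0 T)
  have hyT : 0 < y T := by
    have : (M T)⁻¹ < 0 := inv_lt_zero.mpr (hMneg T hTpos.le)
    simp only [hydef]
    linarith
  have hy00 : y 0 = y0 := rfl
  have hfinal : (2 * δ * c / bstar) * Real.exp (-bstar * T / 2) < (2 * δ * c / bstar) * ε0 :=
    mul_lt_mul_of_pos_left hexpT h2δc
  have hε0eq : (2 * δ * c / bstar) * ε0 = 2 * δ * c / bstar - y0 := by
    rw [hε0def]
    field_simp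
  have hexp0 : Real.exp (-bstar * 0 / 2) = 1 := by norm_num
  rw [hint, hy00, hexp0] at hstep
  rw [hε0eq] at hfinal
  rw [mul_one] at hstep
  clear_value y0 δ ε0 T y
  linarith
end

section
/- Let T* ∈ (0,∞), N > 0, let β : [0,T*] → (0,∞) be continuous, and let M : [0,T*) → ℝ be locally Lipschitz with |M'(t) + (β(t)/2) M(t)²| ≤ β(t) N for almost every t ∈ (0,T*), and suppose liminf_{t→T*} M(t) = −∞. Then for every ε ∈ (0,1/2) there exists t₀ ∈ (0,T*) such that for all t ∈ (t₀,T*): M(t) < 0 and (1/2 + ε) ∫_t^{T*} β(s) ds ≥ −1/M(t) ≥ (1/2 − ε) ∫_t^{T*} β(s) ds. -/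
open MeasureTheory Filter

open Set intervalIntegral


set_option maxHeartbeats 1000000 in
/-- FTC for Lipschitz functions that are a.e. differentiable, via difference
quotients and dominated convergence. -/
lemma lipschitz_ftc {f : ℝ → ℝ} {L : NNReal} {a' a b c : ℝ}
    (h1 : a' < a) (hab : a ≤ b) (h2 : b < c)
    (hf : LipschitzOnWith L f (Set.Icc a' c))
    (hdiff : ∀ᵐ x ∂volume, x ∈ Set.Ioo a b → DifferentiableAt ℝ f x) :
    ∫ x in a..b, deriv f x = f b - f a := by
  rcases eq_or_lt_of_le hab with rfl | hab'
  · simp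
  set h : ℕ → ℝ := fun n => (c - b) / (n + 1) with hh
  have hcb : (0:ℝ) < c - b := by linarith
  have hpos : ∀ n, 0 < h n := fun n => by
    apply div_pos hcb; positivity
  have hle : ∀ n, h n ≤ c - b := fun n => by
    rw [hh]
    rw [div_le_iff₀ (by positivity)]
    nlinarith [hpos n]
  have htend : Tendsto h atTop (nhds 0) := by
    simpa [hh, div_eq_mul_inv] using
      (tendsto_one_div_add_atTop_nhds_zero_nat.const_mul (c - b))
  have fcont : ContinuousOn f (Set.Icc a' c) := hf.continuousOn
  have fint : ∀ u v, u ∈ Set.Icc a' c → v ∈ Set.Icc a' c →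
      IntervalIntegrable f volume u v := by
    intro u v hu hv
    apply (fcont.mono ?_).intervalIntegrable
    exact Set.uIcc_subset_Icc hu hv
  -- limits of averaged integrals at the endpoints
  have key : ∀ p ∈ Set.Ioo a' c, Tendsto (fun n => (∫ x in p..(p + h n), f x) / h n)
      atTop (nhds (f p)) := by
    intro p hp
    have hD : HasDerivAt (fun u => ∫ x in p..u, f x) (f p) p := by
      apply intervalIntegral.integral_hasDerivAt_right
      · exact fint p p ⟨hp.1.le, hp.2.le⟩ ⟨hp.1.le, hp.2.le⟩
      · exact ⟨Set.Icc a' c, Icc_mem_nhds hp.1 hp.2,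
          fcont.aestronglyMeasurable measurableSet_Icc⟩
      · exact fcont.continuousAt (Icc_mem_nhds hp.1 hp.2)
    rw [hasDerivAt_iff_tendsto_slope] at hD
    have hcomp : Tendsto (fun n => p + h n) atTop (nhdsWithin p {p}ᶜ) := by
      apply tendsto_nhdsWithin_of_tendsto_nhds_of_eventually_within
      · simpa using (tendsto_const_nhds.add htend)
      · filter_upwards with n
        simp only [Set.mem_compl_iff, Set.mem_singleton_iff]
        intro hcontra
        nlinarith [hpos n, hcontra]
    have := hD.comp hcomp
    simp only [Function.comp_def, slope_def_field] at this
    convert this using 2 with n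
    rw [intervalIntegral.integral_same]
    ring_nf
  have limB := key b ⟨lt_of_lt_of_le h1 hab, h2⟩
  have limA := key a ⟨h1, lt_of_le_of_lt hab h2⟩
  -- membership facts
  have hmema : a ∈ Set.Icc a' c := ⟨h1.le, (hab.trans h2.le)⟩
  have hmemb : b ∈ Set.Icc a' c := ⟨h1.le.trans hab, h2.le⟩
  have hmeman : ∀ n, a + h n ∈ Set.Icc a' c := fun n =>
    ⟨by nlinarith [hpos n], by nlinarith [hle n]⟩
  have hmembn : ∀ n, b + h n ∈ Set.Icc a' c := fun n =>
    ⟨by nlinarith [hpos n], by nlinarith [hle n]⟩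
  -- the difference quotients
  set g : ℕ → ℝ → ℝ := fun n x => (f (x + h n) - f x) / h n with hg
  have gcont : ∀ n, ContinuousOn (g n) (Set.Icc a' b) := by
    intro n
    apply ContinuousOn.div_const
    apply ContinuousOn.sub
    · apply fcont.comp (Continuous.continuousOn (by continuity))
      intro x hx
      simp only [Set.mem_Icc] at hx ⊢
      constructor <;> nlinarith [hpos n, hle n]
    · exact fcont.mono (Set.Icc_subset_Icc le_rfl h2.le)
  have hsub : Set.uIcc a b ⊆ Set.Icc a' b := by
    rw [Set.uIcc_of_le hab]
    exact Set.Icc_subset_Icc h1.le le_rfl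
  have gint : ∀ n, IntervalIntegrable (g n) volume a b := fun n =>
    ((gcont n).mono hsub).intervalIntegrable
  -- Chasles computation of ∫ g n
  have hInt : ∀ n, (∫ x in a..b, g n x)
      = (∫ x in b..(b + h n), f x) / h n - (∫ x in a..(a + h n), f x) / h n := by
    intro n
    have icomp : IntervalIntegrable (fun x => f (x + h n)) volume a b := by
      apply ContinuousOn.intervalIntegrable
      apply fcont.comp (Continuous.continuousOn (by continuity))
      intro x hx
      have hx' := hsub hx
      simp only [Set.mem_Icc] at hx' ⊢
      constructor <;> nlinarith [hpos n, hle n]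
    have e1 : (∫ x in a..b, f (x + h n)) = ∫ x in (a + h n)..(b + h n), f x :=
      intervalIntegral.integral_comp_add_right (fun x => f x) (h n)
    have c1 : (∫ x in a..(a + h n), f x) + (∫ x in (a + h n)..(b + h n), f x)
        = ∫ x in a..(b + h n), f x :=
      intervalIntegral.integral_add_adjacent_intervals
        (fint _ _ hmema (hmeman n)) (fint _ _ (hmeman n) (hmembn n))
    have c2 : (∫ x in a..b, f x) + (∫ x in b..(b + h n), f x)
        = ∫ x in a..(b + h n), f x :=
      intervalIntegral.integral_add_adjacent_intervals
        (fint _ _ hmema hmemb) (fint _ _ hmemb (hmembn n))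
    have e2 : (∫ x in a..b, g n x)
        = ((∫ x in a..b, f (x + h n)) - ∫ x in a..b, f x) / h n := by
      rw [hg]
      simp only
      rw [intervalIntegral.integral_div, intervalIntegral.integral_sub icomp
        (fint _ _ hmema hmemb)]
    rw [e2, e1]
    have := hpos n
    field_simp
    linarith
  -- dominated convergence
  have hconv : Tendsto (fun n => ∫ x in Set.Ioo a b, g n x) atTop
      (nhds (∫ x in Set.Ioo a b, deriv f x)) := by
    apply MeasureTheory.tendsto_integral_of_dominated_convergence
      (fun _ => (L : ℝ))
    · intro n
      exact ((gcont n).mono (Set.Ioo_subset_Icc_self.trans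
        (Set.Icc_subset_Icc h1.le le_rfl))).aestronglyMeasurable measurableSet_Ioo
    · exact MeasureTheory.integrable_const _
    · intro n
      rw [MeasureTheory.ae_restrict_iff' measurableSet_Ioo]
      filter_upwards with x hx
      have hx1 : x ∈ Set.Icc a' c := ⟨h1.le.trans hx.1.le, hx.2.le.trans h2.le⟩
      have hx2 : x + h n ∈ Set.Icc a' c :=
        ⟨by nlinarith [hpos n, hx.1], by nlinarith [hle n, hx.2]⟩
      have hd := hf.dist_le_mul _ hx2 _ hx1
      rw [Real.dist_eq, Real.dist_eq] at hd
      have : |x + h n - x| = h n := by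
        rw [show x + h n - x = h n by ring, abs_of_pos (hpos n)]
      rw [this] at hd
      rw [hg]
      simp only [Real.norm_eq_abs, abs_div, abs_of_pos (hpos n)]
      rw [div_le_iff₀ (hpos n)]
      exact hd
    · rw [MeasureTheory.ae_restrict_iff' measurableSet_Ioo]
      filter_upwards [hdiff] with x hx hmem
      have hD := (hx hmem).hasDerivAt
      rw [hasDerivAt_iff_tendsto_slope] at hD
      have hcomp : Tendsto (fun n => x + h n) atTop (nhdsWithin x {x}ᶜ) := by
        apply tendsto_nhdsWithin_of_tendsto_nhds_of_eventually_within
        · simpa using (tendsto_const_nhds.add htend)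
        · filter_upwards with n
          simp only [Set.mem_compl_iff, Set.mem_singleton_iff]
          intro hcontra
          nlinarith [hpos n, hcontra]
      have := hD.comp hcomp
      simp only [Function.comp_def, slope_def_field] at this
      convert this using 2 with n
      rw [hg]
      ring_nf
  -- put everything together
  have hIoc1 : ∀ n, (∫ x in a..b, g n x) = ∫ x in Set.Ioo a b, g n x := by
    intro n
    rw [intervalIntegral.integral_of_le hab, MeasureTheory.integral_Ioc_eq_integral_Ioo]
  have hIoc2 : (∫ x in a..b, deriv f x) = ∫ x in Set.Ioo a b, deriv f x := by
    rw [intervalIntegral.integral_of_le hab, MeasureTheory.integral_Ioc_eq_integral_Ioo]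
  rw [hIoc2]
  have hlim2 : Tendsto (fun n => ∫ x in Set.Ioo a b, g n x) atTop (nhds (f b - f a)) := by
    have : (fun n => ∫ x in Set.Ioo a b, g n x)
        = fun n => (∫ x in b..(b + h n), f x) / h n - (∫ x in a..(a + h n), f x) / h n := by
      funext n; rw [← hIoc1, hInt]
    rw [this]
    exact limB.sub limA
  exact tendsto_nhds_unique hconv hlim2

/-- The derivative of a Lipschitz function is interval integrable. -/
lemma lipschitz_deriv_intervalIntegrable {f : ℝ → ℝ} {L : NNReal} {a' a b c : ℝ}
    (h1 : a' < a) (hab : a ≤ b) (h2 : b < c)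
    (hf : LipschitzOnWith L f (Set.Icc a' c)) :
    IntervalIntegrable (deriv f) volume a b := by
  rw [intervalIntegrable_iff_integrableOn_Ioc_of_le hab]
  apply (MeasureTheory.integrable_const (L : ℝ)).mono'
    ((measurable_deriv f).aestronglyMeasurable)
  rw [MeasureTheory.ae_restrict_iff' measurableSet_Ioc]
  filter_upwards with x hx
  rcases em (DifferentiableAt ℝ f x) with hd | hd
  · have hnb : Set.Icc a' c ∈ nhds x :=
      Icc_mem_nhds (lt_of_lt_of_le h1 hx.1.le) (lt_of_le_of_lt hx.2 h2)
    have := hd.hasDerivAt.hasFDerivAt.le_of_lipschitzOn hnb hf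
    simpa using this
  · simp [deriv_zero_of_not_differentiableAt hd]

set_option maxHeartbeats 1000000 in

/-- The two-sided bound on `-1/M` near the blow-up time, from the proof of the
blow-up rate in Theorem 1.5: if `|M' + (β/2)M²| ≤ β N` a.e. on `(0,T*)` and
`liminf_{t→T*} M(t) = -∞`, then for every `ε ∈ (0,1/2)` there is `t₀ ∈ (0,T*)`
such that for `t ∈ (t₀,T*)`, `M(t) < 0` and
`(1/2+ε)∫ₜ^{T*} β ≥ -1/M(t) ≥ (1/2-ε)∫ₜ^{T*} β`. -/
theorem blow_up_rate_two_sided_bound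
    (Tstar N : ℝ) (hT : 0 < Tstar) (hN : 0 < N)
    (β M : ℝ → ℝ)
    (hβc : ContinuousOn β (Set.Icc 0 Tstar))
    (hβpos : ∀ t ∈ Set.Icc (0 : ℝ) Tstar, 0 < β t)
    (hMlip : ∀ a b : ℝ, 0 ≤ a → b < Tstar →
      ∃ L : NNReal, LipschitzOnWith L M (Set.Icc a b))
    (hineq : ∀ᵐ (t : ℝ) ∂volume, t ∈ Set.Ioo 0 Tstar →
      DifferentiableAt ℝ M t ∧ |deriv M t + β t / 2 * (M t) ^ 2| ≤ β t * N)
    (hblow : Filter.liminf (fun t => (M t : EReal))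
      (nhdsWithin Tstar (Set.Iio Tstar)) = ⊥)
    (ε : ℝ) (hε0 : 0 < ε) (hε : ε < 1 / 2) :
    ∃ t₀ ∈ Set.Ioo (0 : ℝ) Tstar, ∀ t ∈ Set.Ioo t₀ Tstar,
      M t < 0 ∧
      -(1 / M t) ≤ (1 / 2 + ε) * ∫ s in t..Tstar, β s ∧
      (1 / 2 - ε) * (∫ s in t..Tstar, β s) ≤ -(1 / M t) := by

  -- Step 0: from the liminf hypothesis, find points where `M` is very negative.
  have hexists : ∀ (C u : ℝ), u < Tstar → ∃ v, u < v ∧ v < Tstar ∧ M v < C := by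
    intro C u hu
    by_contra hcon
    push_neg at hcon
    have hev : ∀ᶠ t in nhdsWithin Tstar (Set.Iio Tstar), (C : EReal) ≤ (M t : EReal) := by
      filter_upwards [Ioo_mem_nhdsLT_of_mem (Set.mem_Ioc.mpr ⟨hu, le_rfl⟩)] with t ht
      exact_mod_cast hcon t ht.1 ht.2
    have hle : (C : EReal) ≤ Filter.liminf (fun t => (M t : EReal))
        (nhdsWithin Tstar (Set.Iio Tstar)) := Filter.le_liminf_of_le (by isBoundedDefault) hev
    rw [hblow, le_bot_iff] at hle
    exact EReal.coe_ne_bot C hle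
  -- the threshold K
  set K : ℝ := Real.sqrt (N / ε) + 1 with hK
  have hK0 : 0 < K := by
    have := Real.sqrt_nonneg (N / ε); rw [hK]; linarith
  have hKsq : N / ε ≤ K ^ 2 := by
    have h1 := Real.sq_sqrt (by positivity : (0:ℝ) ≤ N / ε)
    have h2 := Real.sqrt_nonneg (N / ε)
    rw [hK]; nlinarith
  have hNK : N ≤ ε * K ^ 2 := by
    rw [div_le_iff₀ hε0] at hKsq; linarith [hKsq]
  have h2N : 2 * N < K ^ 2 := by nlinarith [sq_nonneg K]
  -- square bound
  have hsq : ∀ x : ℝ, M x < -K → K ^ 2 < (M x) ^ 2 := by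
    intro x hx; nlinarith
  -- the trapping time t₁
  obtain ⟨t₁, ht₁pos, ht₁lt, ht₁M⟩ := hexists (-K) 0 hT
  -- Step 1: trapping: M stays below -K after t₁
  have htrap : ∀ t, t₁ ≤ t → t < Tstar → M t < -K := by
    intro t htt hts
    by_contra hge
    push_neg at hge
    have htt₁ : t₁ < t :=
      lt_of_le_of_ne htt fun h => by rw [← h] at hge; linarith
    set c : ℝ := (t + Tstar) / 2 with hc
    have htc : t < c := by rw [hc]; linarith
    have hcT : c < Tstar := by rw [hc]; linarith
    obtain ⟨L, hL⟩ := hMlip 0 c le_rfl hcT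
    have hMcont : ContinuousOn M (Set.Icc t₁ t) :=
      hL.continuousOn.mono (Set.Icc_subset_Icc ht₁pos.le htc.le)
    set S : Set ℝ := Set.Icc t₁ t ∩ M ⁻¹' (Set.Ici (-K)) with hS
    have hScl : IsClosed S :=
      hMcont.preimage_isClosed_of_isClosed isClosed_Icc isClosed_Ici
    have hSne : S.Nonempty := ⟨t, ⟨htt, le_rfl⟩, hge⟩
    have hSbdd : BddBelow S := ⟨t₁, fun s hs => hs.1.1⟩
    set t₂ : ℝ := sInf S with ht₂
    have ht₂S : t₂ ∈ S := hScl.csInf_mem hSne hSbdd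
    have ht₂M : -K ≤ M t₂ := ht₂S.2
    have ht₁t₂ : t₁ < t₂ := by
      rcases eq_or_lt_of_le ht₂S.1.1 with h | h
      · exfalso; rw [h] at ht₁M; linarith
      · exact h
    have hbelow : ∀ s, t₁ ≤ s → s < t₂ → M s < -K := by
      intro s hs1 hs2
      by_contra hge'
      push_neg at hge'
      have hsS : s ∈ S := ⟨⟨hs1, by linarith [ht₂S.1.2]⟩, hge'⟩
      exact absurd (csInf_le hSbdd hsS) (by rw [← ht₂]; linarith)
    have hftc : ∫ x in t₁..t₂, deriv M x = M t₂ - M t₁ :=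
      lipschitz_ftc ht₁pos ht₁t₂.le (lt_of_le_of_lt ht₂S.1.2 htc) hL
        (by filter_upwards [hineq] with x hx hmem
            exact (hx ⟨by linarith [hmem.1], by linarith [hmem.2, ht₂S.1.2, hts]⟩).1)
    have hint : (∫ x in t₁..t₂, deriv M x) ≤ 0 := by
      rw [intervalIntegral.integral_of_le ht₁t₂.le,
        MeasureTheory.integral_Ioc_eq_integral_Ioo]
      apply MeasureTheory.integral_nonpos_of_ae
      have hae0 : ∀ᵐ x ∂(volume.restrict (Set.Ioo t₁ t₂)), deriv M x ≤ 0 := by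
        rw [MeasureTheory.ae_restrict_iff' measurableSet_Ioo]
        filter_upwards [hineq] with x hx hmem
        have hxio : x ∈ Set.Ioo 0 Tstar :=
          ⟨by linarith [hmem.1], by linarith [hmem.2, ht₂S.1.2, hts]⟩
        have habs := (abs_le.mp (hx hxio).2).2
        have hMx : M x < -K := hbelow x hmem.1.le hmem.2
        have hβx : 0 < β x := hβpos x ⟨hxio.1.le, hxio.2.le⟩
        have hsqx := hsq x hMx
        nlinarith
      exact hae0
    linarith
  -- the auxiliary function G = -1/M
  set G : ℝ → ℝ := fun x => -(M x)⁻¹ with hGdef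
  have hGpos : ∀ v, t₁ ≤ v → v < Tstar → 0 < G v := by
    intro v h1 h2
    have := htrap v h1 h2
    show (0:ℝ) < -(M v)⁻¹
    rw [neg_pos]
    exact inv_lt_zero.mpr (by linarith)
  -- Step 2: two-sided integral estimate for G
  have Gident : ∀ u v, t₁ < u → u ≤ v → v < Tstar →
      (1 / 2 - ε) * (∫ s in u..v, β s) ≤ G u - G v ∧
        G u - G v ≤ (1 / 2 + ε) * ∫ s in u..v, β s := by
    intro u v huv1 huv2 huv3
    set c : ℝ := (v + Tstar) / 2 with hc
    have hvc : v < c := by rw [hc]; linarith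
    have hcT : c < Tstar := by rw [hc]; linarith
    obtain ⟨L, hL⟩ := hMlip 0 c le_rfl hcT
    -- G is Lipschitz on [t₁, c]
    have hGlip : LipschitzOnWith ((L : ℝ) / K ^ 2).toNNReal G (Set.Icc t₁ c) := by
      apply LipschitzOnWith.of_dist_le_mul
      intro x hx y hy
      have hMx := htrap x hx.1 (lt_of_le_of_lt hx.2 hcT)
      have hMy := htrap y hy.1 (lt_of_le_of_lt hy.2 hcT)
      have hxne : M x ≠ 0 := by intro h; rw [h] at hMx; linarith
      have hyne : M y ≠ 0 := by intro h; rw [h] at hMy; linarith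
      have hdist := hL.dist_le_mul x ⟨by linarith [hx.1], hx.2⟩
        y ⟨by linarith [hy.1], hy.2⟩
      rw [Real.dist_eq, Real.dist_eq] at hdist ⊢
      have hGsub : G x - G y = (M x - M y) / (M x * M y) := by
        show -(M x)⁻¹ - -(M y)⁻¹ = (M x - M y) / (M x * M y)
        field_simp
        ring
      rw [Real.coe_toNNReal _ (by positivity), hGsub, abs_div, abs_mul]
      have hKx : K ≤ |M x| := by rw [abs_of_neg (by linarith)]; linarith
      have hKy : K ≤ |M y| := by rw [abs_of_neg (by linarith)]; linarith
      have hKK : K ^ 2 ≤ |M x| * |M y| := by nlinarith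
      rw [div_le_iff₀ (by nlinarith [abs_nonneg (M x), abs_nonneg (M y)])]
      have h3 : (1:ℝ) ≤ (|M x| * |M y|) / K ^ 2 := by
        rw [le_div_iff₀ (by positivity)]; linarith
      calc |M x - M y| ≤ (L : ℝ) * |x - y| := hdist
        _ = (L : ℝ) * |x - y| * 1 := by ring
        _ ≤ (L : ℝ) * |x - y| * ((|M x| * |M y|) / K ^ 2) :=
            mul_le_mul_of_nonneg_left h3 (by positivity)
        _ = (L : ℝ) / K ^ 2 * |x - y| * (|M x| * |M y|) := by ring
    -- G is differentiable a.e.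
    have hGdiff : ∀ᵐ x ∂volume, x ∈ Set.Ioo u v → DifferentiableAt ℝ G x := by
      filter_upwards [hineq] with x hx hmem
      have hxio : x ∈ Set.Ioo 0 Tstar := ⟨by linarith [hmem.1], by linarith [hmem.2]⟩
      have hMx := htrap x (by linarith [hmem.1]) hxio.2
      have hxne : M x ≠ 0 := by intro h; rw [h] at hMx; linarith
      exact ((hx hxio).1.inv hxne).neg
    have hftc : ∫ x in u..v, deriv G x = G v - G u :=
      lipschitz_ftc huv1 huv2 hvc hGlip hGdiff
    have hGint : IntervalIntegrable (deriv G) volume u v :=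
      lipschitz_deriv_intervalIntegrable huv1 huv2 hvc hGlip
    have hβint : IntervalIntegrable β volume u v := by
      apply (hβc.mono ?_).intervalIntegrable
      rw [Set.uIcc_of_le huv2]
      exact Set.Icc_subset_Icc (by linarith) (by linarith)
    -- pointwise a.e. bounds on deriv G
    have hae : ∀ᵐ x ∂(volume.restrict (Set.Icc u v)),
        -((1/2 + ε) * β x) ≤ deriv G x ∧ deriv G x ≤ -((1/2 - ε) * β x) := by
      rw [MeasureTheory.Measure.restrict_congr_set (MeasureTheory.Ioo_ae_eq_Icc).symm,
        MeasureTheory.ae_restrict_iff' measurableSet_Ioo]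
      filter_upwards [hineq] with x hx hmem
      have hxio : x ∈ Set.Ioo 0 Tstar := ⟨by linarith [hmem.1], by linarith [hmem.2]⟩
      have hMx := htrap x (by linarith [hmem.1]) hxio.2
      have hxne : M x ≠ 0 := by intro h; rw [h] at hMx; linarith
      obtain ⟨hdM, habs⟩ := hx hxio
      have habs1 := (abs_le.mp habs).1
      have habs2 := (abs_le.mp habs).2
      have hβx : 0 < β x := hβpos x ⟨hxio.1.le, hxio.2.le⟩
      have hsqx := hsq x hMx
      have hsqpos : 0 < (M x) ^ 2 := by nlinarith
      have hNx : N ≤ ε * (M x) ^ 2 := by nlinarith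
      have hD : HasDerivAt G (-(-deriv M x / M x ^ 2)) x := (hdM.hasDerivAt.inv hxne).neg
      have hDG : deriv G x = deriv M x / M x ^ 2 := by
        rw [hD.deriv]; field_simp
      rw [hDG]
      constructor
      · rw [neg_le, ← neg_div, div_le_iff₀ hsqpos]
        nlinarith [mul_le_mul_of_nonneg_left hNx hβx.le]
      · rw [div_le_iff₀ hsqpos]
        nlinarith [mul_le_mul_of_nonneg_left hNx hβx.le]
    have hg1 : IntervalIntegrable (fun x => -((1/2 + ε) * β x)) volume u v := by
      exact (hβint.const_mul (1/2 + ε)).neg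
    have hg2 : IntervalIntegrable (fun x => -((1/2 - ε) * β x)) volume u v := by
      exact (hβint.const_mul (1/2 - ε)).neg
    have hlow : -((1/2 + ε) * ∫ s in u..v, β s) ≤ ∫ x in u..v, deriv G x := by
      have h := intervalIntegral.integral_mono_ae_restrict huv2 hg1 hGint
        (by filter_upwards [hae] with x hx; exact hx.1)
      simp only [intervalIntegral.integral_neg, intervalIntegral.integral_const_mul] at h
      exact h
    have hhigh : (∫ x in u..v, deriv G x) ≤ -((1/2 - ε) * ∫ s in u..v, β s) := by
      have h := intervalIntegral.integral_mono_ae_restrict huv2 hGint hg2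
        (by filter_upwards [hae] with x hx; exact hx.2)
      simp only [intervalIntegral.integral_neg, intervalIntegral.integral_const_mul] at h
      exact h
    rw [hftc] at hlow hhigh
    constructor <;> linarith
  -- bound on β
  obtain ⟨Cb, hCb⟩ := IsCompact.exists_bound_of_continuousOn isCompact_Icc hβc
  have hCb0 : 0 ≤ Cb := le_trans (norm_nonneg _) (hCb 0 ⟨le_rfl, hT.le⟩)
  have hβle : ∀ x ∈ Set.Icc (0:ℝ) Tstar, β x ≤ Cb := fun x hx =>
    le_trans (le_abs_self _) (hCb x hx)
  -- integrability of β on subintervals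
  have hβii : ∀ u v : ℝ, 0 ≤ u → u ≤ v → v ≤ Tstar →
      IntervalIntegrable β volume u v := by
    intro u v h1 h2 h3
    apply (hβc.mono ?_).intervalIntegrable
    rw [Set.uIcc_of_le h2]
    exact Set.Icc_subset_Icc h1 h3
  -- conclusion
  refine ⟨t₁, ⟨ht₁pos, ht₁lt⟩, ?_⟩
  intro t ht
  have hMt : M t < -K := htrap t ht.1.le ht.2
  have ht0 : 0 < t := lt_trans ht₁pos ht.1
  have hGt : -(1 / M t) = G t := by
    show -(1 / M t) = -(M t)⁻¹; rw [one_div]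
  refine ⟨by linarith, ?_, ?_⟩
  · -- upper bound
    rw [hGt]
    apply le_of_forall_pos_le_add
    intro δ hδ
    obtain ⟨v, htv, hvT, hMv⟩ := hexists (-(1/δ)) t ht.2
    obtain ⟨_, hup⟩ := Gident t v ht.1 htv.le hvT
    have hsplit : (∫ s in t..v, β s) + (∫ s in v..Tstar, β s) = ∫ s in t..Tstar, β s :=
      intervalIntegral.integral_add_adjacent_intervals
        (hβii t v ht0.le htv.le hvT.le) (hβii v Tstar (by linarith) hvT.le le_rfl)
    have hnn : 0 ≤ ∫ s in v..Tstar, β s :=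
      intervalIntegral.integral_nonneg hvT.le
        (fun x hx => (hβpos x ⟨by linarith [hx.1, ht0], hx.2⟩).le)
    have hI2 : (∫ s in t..v, β s) ≤ ∫ s in t..Tstar, β s := by linarith
    have hGv : G v ≤ δ := by
      have h1 : 1/δ < -M v := by linarith
      have h2 : G v = 1 / (-M v) := by
        show -(M v)⁻¹ = 1 / (-M v); rw [one_div, inv_neg]
      rw [h2]
      calc 1 / (-M v) ≤ 1 / (1/δ) :=
            one_div_le_one_div_of_le (by positivity) h1.le
        _ = δ := one_div_one_div δ
    have hmul : (1/2 + ε) * (∫ s in t..v, β s) ≤ (1/2 + ε) * ∫ s in t..Tstar, β s :=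
      mul_le_mul_of_nonneg_left hI2 (by linarith)
    calc G t ≤ ((1/2 + ε) * ∫ s in t..v, β s) + G v := by linarith [hup]
      _ ≤ ((1/2 + ε) * ∫ s in t..Tstar, β s) + δ := add_le_add hmul hGv
  · -- lower bound
    rw [hGt]
    apply le_of_forall_pos_le_add
    intro δ hδ
    set δ' : ℝ := δ / (Cb + 1) with hδ'
    have hδ'pos : 0 < δ' := by rw [hδ']; positivity
    set v : ℝ := max t (Tstar - δ') with hv
    have htv : t ≤ v := le_max_left _ _
    have hvT : v < Tstar := by
      rw [hv]
      apply max_lt ht.2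
      linarith
    have hTv : Tstar - v ≤ δ' := by
      rw [hv]; have := le_max_right t (Tstar - δ'); linarith [le_max_right t (Tstar - δ')]
    obtain ⟨hlo, _⟩ := Gident t v ht.1 htv hvT
    have hGv : 0 < G v := hGpos v (le_trans ht.1.le htv) hvT
    have hsplit : (∫ s in t..v, β s) + (∫ s in v..Tstar, β s) = ∫ s in t..Tstar, β s :=
      intervalIntegral.integral_add_adjacent_intervals
        (hβii t v ht0.le htv hvT.le) (hβii v Tstar (by linarith) hvT.le le_rfl)
    have htail : (∫ s in v..Tstar, β s) ≤ Cb * (Tstar - v) := by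
      have := intervalIntegral.integral_mono_on hvT.le
        (hβii v Tstar (by linarith) hvT.le le_rfl)
        intervalIntegrable_const
        (fun x hx => hβle x ⟨by linarith [hx.1, ht0], hx.2⟩)
      rwa [intervalIntegral.integral_const, smul_eq_mul, mul_comm] at this
    have htail2 : (1/2 - ε) * (∫ s in v..Tstar, β s) ≤ δ := by
      have h1 : (∫ s in v..Tstar, β s) ≤ Cb * δ' := by nlinarith
      have h2 : Cb * δ' ≤ (Cb + 1) * δ' := by nlinarith
      have h3 : (Cb + 1) * δ' = δ := by rw [hδ']; field_simp
      have hnn : 0 ≤ ∫ s in v..Tstar, β s :=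
        intervalIntegral.integral_nonneg hvT.le
          (fun x hx => (hβpos x ⟨by linarith [hx.1, ht0], hx.2⟩).le)
      nlinarith
    have hexp : (1/2 - ε) * (∫ s in t..Tstar, β s)
        = (1/2 - ε) * (∫ s in t..v, β s) + (1/2 - ε) * ∫ s in v..Tstar, β s := by
      rw [← hsplit]; ring
    calc (1/2 - ε) * ∫ s in t..Tstar, β s
        = ((1/2 - ε) * ∫ s in t..v, β s) + (1/2 - ε) * ∫ s in v..Tstar, β s := hexp
      _ ≤ (G t - G v) + δ := add_le_add hlo htail2
      _ ≤ G t + δ := by linarith [hGv]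
end

section
/- Let T* ∈ (0,∞), N > 0, let β : [0,T*] → (0,∞) be continuous, and let M : [0,T*) → ℝ be locally Lipschitz with |M'(t) + (β(t)/2) M(t)²| ≤ β(t) N for almost every t ∈ (0,T*), and suppose liminf_{t→T*} M(t) = −∞. Then lim_{t→T*} ( M(t) · ∫_t^{T*} β(s) ds ) = −2. -/
open MeasureTheory Filter Set intervalIntegral

/-- FTC for globally Lipschitz functions on ℝ: the integral of the (a.e. defined)
derivative recovers the increment. -/
theorem lipschitz_ftc_s13 (G : ℝ → ℝ) (L : NNReal) (hG : LipschitzWith L G)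
    (a b : ℝ) (hab : a ≤ b) :
    ∫ t in a..b, deriv G t = G b - G a := by
  have hGc : Continuous G := hG.continuous
  set h : ℕ → ℝ := fun n => ((n : ℝ) + 1)⁻¹ with hh
  have hpos : ∀ n, 0 < h n := fun n => by positivity
  have hto : Tendsto h atTop (nhds 0) := by
    simpa [hh] using tendsto_one_div_add_atTop_nhds_zero_nat.comp (tendsto_id (α := ℕ)) |>.congr (by intro n; simp [hh, one_div])
  set F : ℕ → ℝ → ℝ := fun n x => (G (x + h n) - G x) / h n with hF
  -- a.e. convergence of difference quotients
  have haediff : ∀ᵐ x : ℝ ∂volume, DifferentiableAt ℝ G x := hG.ae_differentiableAt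
  have haetend : ∀ᵐ x : ℝ ∂volume,
      Tendsto (fun n => F n x) atTop (nhds (deriv G x)) := by
    filter_upwards [haediff] with x hx
    have hd : HasDerivAt G (deriv G x) x := hx.hasDerivAt
    have hslope := hasDerivAt_iff_tendsto_slope.1 hd
    have hxs : Tendsto (fun n => x + h n) atTop (nhdsWithin x ({x}ᶜ)) := by
      apply tendsto_nhdsWithin_of_tendsto_nhds_of_eventually_within
      · simpa using (tendsto_const_nhds.add hto)
      · exact Eventually.of_forall fun n => by
          simp [ne_of_gt, (hpos n).ne']
    have := hslope.comp hxs
    refine this.congr fun n => ?_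
    simp [slope, F, hF, div_eq_inv_mul]
  -- bound
  have hbd : ∀ n x, |F n x| ≤ (L : ℝ) := by
    intro n x
    have := hG.dist_le_mul (x + h n) x
    rw [Real.dist_eq, Real.dist_eq] at this
    simp only [add_sub_cancel_left] at this
    rw [hF, abs_div, abs_of_pos (hpos n)]
    rw [div_le_iff₀ (hpos n)]
    simpa [abs_of_pos (hpos n)] using this
  -- dominated convergence on Ioc a b
  have hmeas : Measurable (deriv G) := measurable_deriv G
  have hconv : Tendsto (fun n => ∫ x in Ioc a b, F n x) atTop
      (nhds (∫ x in Ioc a b, deriv G x)) := by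
    apply tendsto_integral_of_dominated_convergence (fun _ => (L : ℝ))
    · intro n
      have : Continuous (F n) := by
        rw [hF]; fun_prop
      exact this.aestronglyMeasurable
    · exact integrableOn_const (by simp [Real.volume_Ioc])
    · intro n
      exact Eventually.of_forall fun x => by simpa [Real.norm_eq_abs] using hbd n x
    · exact ae_restrict_of_ae haetend
  -- helper: sequential difference quotients converge for differentiable functions
  have hquot : ∀ (f : ℝ → ℝ) (u d : ℝ), HasDerivAt f d u →
      Tendsto (fun n => (f (u + h n) - f u) / h n) atTop (nhds d) := by
    intro f u d hd
    have hslope := hasDerivAt_iff_tendsto_slope.1 hd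
    have hxs : Tendsto (fun n => u + h n) atTop (nhdsWithin u ({u}ᶜ)) := by
      apply tendsto_nhdsWithin_of_tendsto_nhds_of_eventually_within
      · simpa using (tendsto_const_nhds.add hto)
      · exact Eventually.of_forall fun n => by simp [ne_of_gt, (hpos n).ne']
    refine (hslope.comp hxs).congr fun n => ?_
    simp [slope, div_eq_inv_mul]
  -- compute the integral of F n explicitly using a primitive of G
  set Φ : ℝ → ℝ := fun u => ∫ x in a..u, G x with hΦ
  have hGint : ∀ u v : ℝ, IntervalIntegrable G volume u v := fun u v =>
    hGc.intervalIntegrable u v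
  have hFval : ∀ n, ∫ x in Ioc a b, F n x
      = ((Φ (b + h n) - Φ (a + h n)) - (Φ b - Φ a)) / h n := by
    intro n
    rw [← intervalIntegral.integral_of_le hab]
    have h1 : (∫ x in a..b, F n x) = (∫ x in a..b, G (x + h n) - G x) / h n := by
      rw [← intervalIntegral.integral_div]
    have hc1 : Continuous (fun x => G (x + h n)) := by fun_prop
    rw [h1, intervalIntegral.integral_sub (hc1.intervalIntegrable a b) (hGint a b)]
    have h2 : (∫ x in a..b, G (x + h n)) = ∫ x in (a + h n)..(b + h n), G x :=
      intervalIntegral.integral_comp_add_right G (h n)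
    have h3 : (∫ x in (a + h n)..(b + h n), G x) = Φ (b + h n) - Φ (a + h n) :=
      (intervalIntegral.integral_interval_sub_left (hGint a (b + h n))
        (hGint a (a + h n))).symm
    have h4 : (∫ x in a..b, G x) = Φ b - Φ a := by
      simp [hΦ]
    rw [h2, h3, h4]
  -- the explicit expression tends to G b - G a
  have hΦd : ∀ u : ℝ, HasDerivAt Φ (G u) u := fun u =>
    intervalIntegral.integral_hasDerivAt_right (hGint a u)
      (hGc.stronglyMeasurable.stronglyMeasurableAtFilter) hGc.continuousAt
  have hlim2 : Tendsto (fun n => ∫ x in Ioc a b, F n x) atTop (nhds (G b - G a)) := by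
    have hb' := hquot Φ b (G b) (hΦd b)
    have ha' := hquot Φ a (G a) (hΦd a)
    have := hb'.sub ha'
    refine this.congr fun n => ?_
    rw [hFval n]
    field_simp
    ring
  have := tendsto_nhds_unique hconv hlim2
  rw [intervalIntegral.integral_of_le hab]
  simpa using this

/-- Two-sided FTC bounds from an a.e. differential inequality for a Lipschitz function. -/
theorem lip_deriv_bounds (g φ ψ : ℝ → ℝ) (a b : ℝ) (hab : a ≤ b) (L : NNReal)
    (hg : LipschitzOnWith L g (Set.Icc a b))
    (hφ : IntegrableOn φ (Set.Icc a b) volume) (hψ : IntegrableOn ψ (Set.Icc a b) volume)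
    (hae : ∀ᵐ t ∂volume, t ∈ Set.Ioo a b →
      DifferentiableAt ℝ g t ∧ φ t ≤ deriv g t ∧ deriv g t ≤ ψ t) :
    (∫ t in a..b, φ t) ≤ g b - g a ∧ g b - g a ≤ ∫ t in a..b, ψ t := by
  obtain ⟨G, hGL, hEq⟩ := hg.extend_real
  have hga : g a = G a := hEq (Set.left_mem_Icc.2 hab)
  have hgb : g b = G b := hEq (Set.right_mem_Icc.2 hab)
  have hftc := lipschitz_ftc_s13 G L hGL a b hab
  -- on Ioo, deriv G = deriv g
  have hderiveq : ∀ t ∈ Set.Ioo a b, deriv G t = deriv g t := by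
    intro t ht
    apply Filter.EventuallyEq.deriv_eq
    filter_upwards [Icc_mem_nhds ht.1 ht.2] with x hx
    exact (hEq hx).symm
  -- deriv G is bounded by L
  have hbd : ∀ t, |deriv G t| ≤ (L : ℝ) := by
    intro t
    by_cases hd : DifferentiableAt ℝ G t
    · have h1 : deriv G t = fderiv ℝ G t 1 := by
        rw [fderiv_apply_one_eq_deriv]
      have h2 : ‖fderiv ℝ G t‖ ≤ (L : ℝ) := norm_fderiv_le_of_lipschitz ℝ hGL
      calc |deriv G t| = ‖fderiv ℝ G t 1‖ := by rw [h1]; rfl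
        _ ≤ ‖fderiv ℝ G t‖ * ‖(1 : ℝ)‖ := (fderiv ℝ G t).le_opNorm 1
        _ ≤ (L : ℝ) := by simpa using h2
    · simp [deriv_zero_of_not_differentiableAt hd]
  have hint : IntervalIntegrable (deriv G) volume a b := by
    rw [intervalIntegrable_iff_integrableOn_Ioc_of_le hab]
    have : IntegrableOn (fun _ : ℝ => (L : ℝ)) (Set.Ioc a b) volume :=
      integrableOn_const (by simp [Real.volume_Ioc])
    exact Integrable.mono this ((measurable_deriv G).aestronglyMeasurable.restrict)
      (Filter.Eventually.of_forall fun t => by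
        simpa [Real.norm_eq_abs] using hbd t)
  -- a.e. points of Icc lie in Ioo
  have haeIoo : ∀ᵐ t ∂(volume.restrict (Set.Icc a b)), t ∈ Set.Ioo a b := by
    have h1 : (Set.Icc a b : Set ℝ) =ᵐ[volume] Set.Ioo a b := by
      exact (MeasureTheory.Ioo_ae_eq_Icc (μ := volume) (a := a) (b := b)).symm
    rw [MeasureTheory.Measure.restrict_congr_set h1]
    exact MeasureTheory.ae_restrict_mem measurableSet_Ioo
  have haer := MeasureTheory.ae_restrict_of_ae (μ := volume) (s := Set.Icc a b) hae
  have hφi : IntervalIntegrable φ volume a b := by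
    rw [intervalIntegrable_iff_integrableOn_Ioc_of_le hab]
    exact hφ.mono_set Set.Ioc_subset_Icc_self
  have hψi : IntervalIntegrable ψ volume a b := by
    rw [intervalIntegrable_iff_integrableOn_Ioc_of_le hab]
    exact hψ.mono_set Set.Ioc_subset_Icc_self
  constructor
  · have hmono : φ ≤ᵐ[volume.restrict (Set.Icc a b)] deriv G := by
      filter_upwards [haeIoo, haer] with t ht hineq
      obtain ⟨_, h1, _⟩ := hineq ht
      rw [hderiveq t ht]; exact h1
    have := intervalIntegral.integral_mono_ae_restrict hab hφi hint hmono
    rw [hftc] at this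
    rw [hga, hgb]; exact this
  · have hmono : deriv G ≤ᵐ[volume.restrict (Set.Icc a b)] ψ := by
      filter_upwards [haeIoo, haer] with t ht hineq
      obtain ⟨_, _, h2⟩ := hineq ht
      rw [hderiveq t ht]; exact h2
    have := intervalIntegral.integral_mono_ae_restrict hab hint hψi hmono
    rw [hftc] at this
    rw [hga, hgb]; exact this

section Aux
variable (Tstar N : ℝ) (β M : ℝ → ℝ)

/-- One-sided integral bound for the increment of `M`. -/
theorem M_upper
    (hT : 0 < Tstar)
    (hβc : ContinuousOn β (Set.Icc 0 Tstar))
    (hβpos : ∀ t ∈ Set.Icc (0 : ℝ) Tstar, 0 < β t)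
    (hMlip : ∀ a b : ℝ, 0 ≤ a → b < Tstar →
      ∃ L : NNReal, LipschitzOnWith L M (Set.Icc a b))
    (hineq : ∀ᵐ (t : ℝ) ∂volume, t ∈ Set.Ioo 0 Tstar →
      DifferentiableAt ℝ M t ∧ |deriv M t + β t / 2 * (M t) ^ 2| ≤ β t * N)
    (a b : ℝ) (ha : 0 < a) (hab : a ≤ b) (hb : b < Tstar) :
    M b - M a ≤ ∫ s in a..b, (β s * N - β s / 2 * M s ^ 2) := by
  obtain ⟨L, hL⟩ := hMlip a b ha.le hb
  have hsub : Set.Icc a b ⊆ Set.Icc 0 Tstar := Set.Icc_subset_Icc ha.le hb.le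
  have hMc : ContinuousOn M (Set.Icc a b) := hL.continuousOn
  have hβc' : ContinuousOn β (Set.Icc a b) := hβc.mono hsub
  have hψc : ContinuousOn (fun s => β s * N - β s / 2 * M s ^ 2) (Set.Icc a b) := by
    fun_prop
  have hφc : ContinuousOn (fun s => -(β s * N) - β s / 2 * M s ^ 2) (Set.Icc a b) := by
    fun_prop
  have hae : ∀ᵐ t ∂volume, t ∈ Set.Ioo a b →
      DifferentiableAt ℝ M t ∧ (-(β t * N) - β t / 2 * M t ^ 2) ≤ deriv M t ∧
        deriv M t ≤ β t * N - β t / 2 * M t ^ 2 := by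
    filter_upwards [hineq] with t ht htab
    have ht' : t ∈ Set.Ioo 0 Tstar := ⟨ha.trans htab.1, htab.2.trans hb⟩
    obtain ⟨hd, habs⟩ := ht ht'
    obtain ⟨h1, h2⟩ := abs_le.1 habs
    exact ⟨hd, by linarith, by linarith⟩
  exact (lip_deriv_bounds M _ _ a b hab L hL (hφc.integrableOn_Icc)
    (hψc.integrableOn_Icc) hae).2

/-- Once `M` drops below `-K` with `K² > 2N`, it stays below `-K`. -/
theorem stay_below
    (hT : 0 < Tstar) (hN : 0 < N)
    (hβc : ContinuousOn β (Set.Icc 0 Tstar))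
    (hβpos : ∀ t ∈ Set.Icc (0 : ℝ) Tstar, 0 < β t)
    (hMlip : ∀ a b : ℝ, 0 ≤ a → b < Tstar →
      ∃ L : NNReal, LipschitzOnWith L M (Set.Icc a b))
    (hineq : ∀ᵐ (t : ℝ) ∂volume, t ∈ Set.Ioo 0 Tstar →
      DifferentiableAt ℝ M t ∧ |deriv M t + β t / 2 * (M t) ^ 2| ≤ β t * N)
    (K : ℝ) (hK0 : 0 < K) (hK2 : 2 * N < K ^ 2)
    (t₀ : ℝ) (ht₀ : t₀ ∈ Set.Ioo 0 Tstar) (hM0 : M t₀ ≤ -K) :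
    ∀ t ∈ Set.Ico t₀ Tstar, M t ≤ -K := by
  intro t ht
  -- intermediate level c with 2N < c² < K²
  set c : ℝ := Real.sqrt ((2 * N + K ^ 2) / 2) with hc
  have hc2 : c ^ 2 = (2 * N + K ^ 2) / 2 := Real.sq_sqrt (by positivity)
  have hcpos : 0 < c := Real.sqrt_pos.2 (by positivity)
  have hcK : c < K := by
    nlinarith [hc2, hcpos]
  have h2Nc : 2 * N < c ^ 2 := by nlinarith [hc2]
  obtain ⟨L, hL⟩ := hMlip 0 t (le_refl 0) ht.2
  have hMc : ContinuousOn M (Set.Icc 0 t) := hL.continuousOn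
  have ht₀t : t₀ ≤ t := ht.1
  have ht₀0 : (0:ℝ) < t₀ := ht₀.1
  -- real induction
  have key : Set.Icc t₀ t ⊆ {u | M u ≤ -K} := by
    apply IsClosed.Icc_subset_of_forall_exists_gt
    · have : IsClosed {u ∈ Set.Icc t₀ t | M u ∈ Set.Iic (-K)} := by
        apply ContinuousOn.preimage_isClosed_of_isClosed
          (hMc.mono (Set.Icc_subset_Icc ht₀0.le le_rfl)) isClosed_Icc isClosed_Iic
      convert this using 1
      ext u; simp [Set.mem_setOf_eq, and_comm]
    · exact hM0
    · rintro x ⟨hxs, hx⟩ v hv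
      -- continuity of M at x: find δ so that M < -c on [x, x+δ] ∩ [0,t]
      have hxt : x ∈ Set.Icc 0 t := ⟨ht₀0.le.trans hx.1, hx.2.le⟩
      have hMx : M x < -c := lt_of_le_of_lt hxs (by linarith)
      have hcw : ContinuousWithinAt M (Set.Icc 0 t) x := hMc.continuousWithinAt hxt
      have hev : ∀ᶠ y in nhdsWithin x (Set.Icc 0 t), M y < -c :=
        Filter.Tendsto.eventually_lt_const hMx hcw
      rw [Filter.eventually_iff, Metric.mem_nhdsWithin_iff] at hev
      obtain ⟨ε, hε, hball⟩ := hev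
      set u : ℝ := min (x + ε / 2) (min v t) with hu
      have hxu : x < u := by
        simp only [hu, lt_min_iff]
        exact ⟨by linarith, hv, lt_of_lt_of_le hx.2 le_rfl⟩
      have hut : u ≤ t := (min_le_right _ _).trans (min_le_right _ _)
      have huv : u ≤ v := (min_le_right _ _).trans (min_le_left _ _)
      have hMneg : ∀ s ∈ Set.Icc x u, M s ≤ -c := by
        intro s hs
        have hs0t : s ∈ Set.Icc 0 t := ⟨(ht₀0.le.trans hx.1).trans hs.1, hs.2.trans hut⟩
        have : dist s x < ε := by
          rw [Real.dist_eq, abs_of_nonneg (by linarith [hs.1])]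
          have : s ≤ x + ε / 2 := hs.2.trans (min_le_left _ _)
          linarith
        exact (hball ⟨Metric.mem_ball.2 this, hs0t⟩).le
      -- integral inequality on [x, u]
      have hx0 : 0 < x := lt_of_lt_of_le ht₀0 hx.1
      have huT : u < Tstar := lt_of_le_of_lt hut ht.2
      have hup := M_upper Tstar N β M hT hβc hβpos hMlip hineq x u hx0 hxu.le huT
      have hint0 : (∫ s in x..u, (β s * N - β s / 2 * M s ^ 2)) ≤ 0 := by
        have hβc' : ContinuousOn β (Set.Icc x u) :=
          hβc.mono (Set.Icc_subset_Icc hx0.le huT.le)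
        have hMc' : ContinuousOn M (Set.Icc x u) :=
          hMc.mono (Set.Icc_subset_Icc hx0.le hut)
        have hψc : ContinuousOn (fun s => β s * N - β s / 2 * M s ^ 2) (Set.Icc x u) := by
          fun_prop
        have hψi : IntervalIntegrable (fun s => β s * N - β s / 2 * M s ^ 2) volume x u := by
          rw [intervalIntegrable_iff_integrableOn_Ioc_of_le hxu.le]
          exact hψc.integrableOn_Icc.mono_set Set.Ioc_subset_Icc_self
        have h0 : (∫ s in x..u, (0:ℝ)) = 0 := by simp
        rw [← h0]
        apply intervalIntegral.integral_mono_on hxu.le hψi (intervalIntegrable_const)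
        intro s hs
        have hβs : 0 < β s := hβpos s ⟨hx0.le.trans hs.1, hs.2.trans huT.le⟩
        have hMs : M s ≤ -c := hMneg s hs
        nlinarith [mul_nonneg (neg_nonneg.2 (by linarith : M s + c ≤ 0))
          (neg_nonneg.2 (by linarith : M s - c ≤ 0))]
      refine ⟨u, ?_, hxu, huv⟩
      have hMxK : M x ≤ -K := hxs
      simp only [Set.mem_setOf_eq]
      linarith
  exact key ⟨ht.1, le_rfl⟩

/-- Integral bounds for the increment of `1/M` on intervals where `M ≤ -K`. -/
theorem inv_bounds
    (hN : 0 < N)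
    (hβc : ContinuousOn β (Set.Icc 0 Tstar))
    (hβpos : ∀ t ∈ Set.Icc (0 : ℝ) Tstar, 0 < β t)
    (hMlip : ∀ a b : ℝ, 0 ≤ a → b < Tstar →
      ∃ L : NNReal, LipschitzOnWith L M (Set.Icc a b))
    (hineq : ∀ᵐ (t : ℝ) ∂volume, t ∈ Set.Ioo 0 Tstar →
      DifferentiableAt ℝ M t ∧ |deriv M t + β t / 2 * (M t) ^ 2| ≤ β t * N)
    (K : ℝ) (hK1 : 1 ≤ K)
    (a b : ℝ) (ha : 0 < a) (hab : a ≤ b) (hb : b < Tstar)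
    (hM : ∀ s ∈ Set.Icc a b, M s ≤ -K) :
    (∫ s in a..b, (1/2 - N/K^2) * β s) ≤ (M b)⁻¹ - (M a)⁻¹ ∧
      (M b)⁻¹ - (M a)⁻¹ ≤ ∫ s in a..b, (1/2 + N/K^2) * β s := by
  have hK0 : (0:ℝ) < K := lt_of_lt_of_le one_pos hK1
  obtain ⟨L, hL⟩ := hMlip a b ha.le hb
  have habs2 : ∀ s ∈ Set.Icc a b, K ≤ |M s| := by
    intro s hs
    have := hM s hs
    rw [abs_of_nonpos (by linarith)]
    linarith
  have hMne : ∀ s ∈ Set.Icc a b, M s ≠ 0 := by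
    intro s hs
    have := hM s hs
    exact ne_of_lt (by linarith)
  -- Lipschitz bound for 1/M
  have hLip : LipschitzOnWith (Real.toNNReal ((L : ℝ) / K ^ 2))
      (fun s => (M s)⁻¹) (Set.Icc a b) := by
    rw [lipschitzOnWith_iff_dist_le_mul]
    intro x hx y hy
    have hx0 := hMne x hx
    have hy0 := hMne y hy
    rw [Real.dist_eq, Real.dist_eq, Real.coe_toNNReal _ (by positivity)]
    rw [inv_sub_inv hx0 hy0, abs_div, abs_mul]
    have hnum : |M y - M x| ≤ (L : ℝ) * |x - y| := by
      have := hL.dist_le_mul y hy x hx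
      rw [Real.dist_eq, Real.dist_eq] at this
      calc |M y - M x| ≤ (L : ℝ) * |y - x| := this
        _ = (L : ℝ) * |x - y| := by rw [abs_sub_comm]
    have hden : K ^ 2 ≤ |M x| * |M y| := by
      have h1 := habs2 x hx
      have h2 := habs2 y hy
      nlinarith [abs_nonneg (M x)]
    calc |M y - M x| / (|M x| * |M y|) ≤ ((L : ℝ) * |x - y|) / K ^ 2 :=
          div_le_div₀ (by positivity) hnum (by positivity) hden
      _ = (L : ℝ) / K ^ 2 * |x - y| := by ring
  -- a.e. derivative bounds for 1/M
  have hae : ∀ᵐ t ∂volume, t ∈ Set.Ioo a b →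
      DifferentiableAt ℝ (fun s => (M s)⁻¹) t ∧
        (1/2 - N/K^2) * β t ≤ deriv (fun s => (M s)⁻¹) t ∧
        deriv (fun s => (M s)⁻¹) t ≤ (1/2 + N/K^2) * β t := by
    filter_upwards [hineq] with t ht htab
    have ht' : t ∈ Set.Ioo 0 Tstar := ⟨ha.trans htab.1, htab.2.trans hb⟩
    obtain ⟨hd, habs⟩ := ht ht'
    have htIcc : t ∈ Set.Icc a b := ⟨htab.1.le, htab.2.le⟩
    have hMt : M t ≤ -K := hM t htIcc
    have hMt0 : M t ≠ 0 := hMne t htIcc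
    have hMt2 : K ^ 2 ≤ M t ^ 2 := by nlinarith
    have hM2pos : (0:ℝ) < M t ^ 2 := by positivity
    have hβt : 0 < β t := hβpos t ⟨ht'.1.le, ht'.2.le⟩
    have hdg : HasDerivAt (fun s => (M s)⁻¹) (-(deriv M t) / M t ^ 2) t :=
      hd.hasDerivAt.inv hMt0
    have hderivg : deriv (fun s => (M s)⁻¹) t = -(deriv M t) / M t ^ 2 := hdg.deriv
    have hkey : |(-(deriv M t) / M t ^ 2) - β t / 2| ≤ β t * N / K ^ 2 := by
      have heq : -(deriv M t) / M t ^ 2 - β t / 2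
          = -((deriv M t + β t / 2 * M t ^ 2) / M t ^ 2) := by
        field_simp
        ring
      rw [heq, abs_neg, abs_div, abs_of_pos hM2pos]
      calc |deriv M t + β t / 2 * M t ^ 2| / M t ^ 2 ≤ (β t * N) / M t ^ 2 := by
            gcongr
        _ ≤ β t * N / K ^ 2 :=
          div_le_div_of_nonneg_left (mul_nonneg hβt.le hN.le) (pow_pos hK0 2) hMt2
    obtain ⟨hlo, hhi⟩ := abs_le.1 hkey
    refine ⟨hdg.differentiableAt, ?_, ?_⟩ <;> rw [hderivg]
    · have hh : (1/2 - N/K^2) * β t = β t / 2 - β t * N / K ^ 2 := by ring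
      rw [hh]; linarith
    · have hh : (1/2 + N/K^2) * β t = β t / 2 + β t * N / K ^ 2 := by ring
      rw [hh]; linarith
  have hβc' : ContinuousOn β (Set.Icc a b) := hβc.mono (Set.Icc_subset_Icc ha.le hb.le)
  have hφint : IntegrableOn (fun s => (1/2 - N/K^2) * β s) (Set.Icc a b) volume :=
    (continuousOn_const.mul hβc').integrableOn_Icc
  have hψint : IntegrableOn (fun s => (1/2 + N/K^2) * β s) (Set.Icc a b) volume :=
    (continuousOn_const.mul hβc').integrableOn_Icc
  exact lip_deriv_bounds (fun s => (M s)⁻¹) _ _ a b hab _ hLip hφint hψint hae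
end Aux

set_option maxHeartbeats 1000000 in
/-- The deterministic core of the blow-up rate in Theorem 1.5: if
`|M' + (β/2)M²| ≤ β N` a.e. on `(0,T*)` with `M` locally Lipschitz,
`β : [0,T*] → (0,∞)` continuous, and `liminf_{t→T*} M(t) = -∞`, then
`M(t) · ∫ₜ^{T*} β(s) ds → -2` as `t → T*⁻`. -/
theorem blow_up_rate
    (Tstar N : ℝ) (hT : 0 < Tstar) (hN : 0 < N)
    (β M : ℝ → ℝ)
    (hβc : ContinuousOn β (Set.Icc 0 Tstar))
    (hβpos : ∀ t ∈ Set.Icc (0 : ℝ) Tstar, 0 < β t)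
    (hMlip : ∀ a b : ℝ, 0 ≤ a → b < Tstar →
      ∃ L : NNReal, LipschitzOnWith L M (Set.Icc a b))
    (hineq : ∀ᵐ (t : ℝ) ∂volume, t ∈ Set.Ioo 0 Tstar →
      DifferentiableAt ℝ M t ∧ |deriv M t + β t / 2 * (M t) ^ 2| ≤ β t * N)
    (hblow : Filter.liminf (fun t => (M t : EReal))
      (nhdsWithin Tstar (Set.Iio Tstar)) = ⊥) :
    Tendsto (fun t => M t * ∫ s in t..Tstar, β s)
      (nhdsWithin Tstar (Set.Iio Tstar)) (nhds (-2)) := by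
  -- Step 1: find points where M is very negative, and M stays below afterwards
  have hpt : ∀ K : ℝ, ∃ t₀ ∈ Set.Ioo 0 Tstar, M t₀ ≤ -K := by
    intro K
    by_contra hcon
    push_neg at hcon
    have hev : ∀ᶠ t in nhdsWithin Tstar (Set.Iio Tstar), ((-K : ℝ) : EReal) ≤ (M t : EReal) := by
      filter_upwards [Ioo_mem_nhdsLT_of_mem (⟨hT, le_rfl⟩ : Tstar ∈ Set.Ioc 0 Tstar)] with t ht
      exact_mod_cast (hcon t ht).le
    have hle := le_liminf_of_le (by isBoundedDefault) hev
    rw [hblow] at hle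
    exact (EReal.coe_ne_bot (-K)) (le_bot_iff.1 hle)
  have hstay : ∀ K : ℝ, 0 < K → 2 * N < K ^ 2 →
      ∃ t₀ ∈ Set.Ioo 0 Tstar, ∀ t ∈ Set.Ico t₀ Tstar, M t ≤ -K := by
    intro K hK0 hK2
    obtain ⟨t₀, ht₀, hM0⟩ := hpt K
    exact ⟨t₀, ht₀, stay_below Tstar N β M hT hN hβc hβpos hMlip hineq K hK0 hK2 t₀ ht₀ hM0⟩
  -- Step 2: M tends to -∞
  have hMatBot : Tendsto M (nhdsWithin Tstar (Set.Iio Tstar)) atBot := by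
    rw [tendsto_atBot]
    intro C
    set K : ℝ := max (1 + Real.sqrt (2 * N)) (-C) with hKdef
    have hs2N : Real.sqrt (2 * N) ^ 2 = 2 * N := Real.sq_sqrt (by positivity)
    have hsnn : 0 ≤ Real.sqrt (2 * N) := Real.sqrt_nonneg _
    have hK0 : 0 < K := lt_of_lt_of_le (by linarith) (le_max_left _ _)
    have hK2 : 2 * N < K ^ 2 := by
      have h1 : 1 + Real.sqrt (2 * N) ≤ K := le_max_left _ _
      nlinarith
    obtain ⟨t₀, ht₀, hst⟩ := hstay K hK0 hK2
    filter_upwards [Ioo_mem_nhdsLT_of_mem (⟨ht₀.2, le_rfl⟩ : Tstar ∈ Set.Ioc t₀ Tstar)] with t ht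
    have h2 := hst t ⟨ht.1.le, ht.2⟩
    have hKC : -K ≤ C := by
      have := le_max_right (1 + Real.sqrt (2 * N)) (-C)
      linarith
    linarith
  -- Step 3: the blow-up rate
  rw [Metric.tendsto_nhds]
  intro ε hε
  obtain ⟨θ, hθdef⟩ : ∃ x : ℝ, x = min (ε / 12) (1 / 8) := ⟨_, rfl⟩
  have hθ0 : 0 < θ := hθdef ▸ lt_min (by linarith) (by norm_num)
  have hθ8 : θ ≤ 1 / 8 := hθdef ▸ min_le_right _ _
  have hθε : θ ≤ ε / 12 := hθdef ▸ min_le_left _ _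
  obtain ⟨K, hKdef⟩ : ∃ x : ℝ, x = 1 + Real.sqrt (2 * N) + Real.sqrt (N / θ) := ⟨_, rfl⟩
  have hs2N : Real.sqrt (2 * N) ^ 2 = 2 * N := Real.sq_sqrt (by positivity)
  have hsnn : 0 ≤ Real.sqrt (2 * N) := Real.sqrt_nonneg _
  have hsNθ : Real.sqrt (N / θ) ^ 2 = N / θ := Real.sq_sqrt (by positivity)
  have hsNθnn : 0 ≤ Real.sqrt (N / θ) := Real.sqrt_nonneg _
  have hK1 : 1 ≤ K := by rw [hKdef]; linarith
  have hK0 : 0 < K := by linarith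
  have hK2 : 2 * N < K ^ 2 := by rw [hKdef]; nlinarith
  have hθK : N / K ^ 2 ≤ θ := by
    have h1 : N / θ ≤ K ^ 2 := by rw [hKdef]; nlinarith
    rw [div_le_iff₀ (pow_pos hK0 2)]
    have h2 : θ * (N / θ) ≤ θ * K ^ 2 := mul_le_mul_of_nonneg_left h1 hθ0.le
    rw [mul_comm θ (N / θ), div_mul_cancel₀ _ hθ0.ne'] at h2
    linarith
  obtain ⟨θK, hθKdef⟩ : ∃ x : ℝ, x = N / K ^ 2 := ⟨_, rfl⟩
  have hθKθ : θK ≤ θ := hθKdef ▸ hθK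
  have hθKnn : 0 ≤ θK := by rw [hθKdef]; positivity
  obtain ⟨t₀, ht₀, hst⟩ := hstay K hK0 hK2
  filter_upwards [Ioo_mem_nhdsLT_of_mem (⟨ht₀.2, le_rfl⟩ : Tstar ∈ Set.Ioc t₀ Tstar)] with t htm
  have ht0 : 0 < t := ht₀.1.trans htm.1
  have htT : t < Tstar := htm.2
  obtain ⟨B, hBdef⟩ : ∃ x : ℝ, x = ∫ s in t..Tstar, β s := ⟨_, rfl⟩
  -- bounds for each b < Tstar
  have hbnd : ∀ b ∈ Set.Ioo t Tstar,
      ((∫ s in t..b, (1/2 - θK) * β s) ≤ (M b)⁻¹ - (M t)⁻¹ ∧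
        (M b)⁻¹ - (M t)⁻¹ ≤ ∫ s in t..b, (1/2 + θK) * β s) := by
    intro b hb
    rw [hθKdef]
    apply inv_bounds Tstar N β M hN hβc hβpos hMlip hineq K hK1 t b ht0 hb.1.le hb.2
    intro s hs
    exact hst s ⟨htm.1.le.trans hs.1, lt_of_le_of_lt hs.2 hb.2⟩
  -- limits as b → Tstar⁻
  have hlim1 : Tendsto (fun b => (M b)⁻¹ - (M t)⁻¹)
      (nhdsWithin Tstar (Set.Iio Tstar)) (nhds (0 - (M t)⁻¹)) := by
    apply Tendsto.sub_const
    have h1 : Tendsto (fun b => -M b) (nhdsWithin Tstar (Set.Iio Tstar)) atTop :=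
      tendsto_neg_atBot_atTop.comp hMatBot
    have h2 : Tendsto (fun b => (-M b)⁻¹) (nhdsWithin Tstar (Set.Iio Tstar)) (nhds 0) :=
      Filter.Tendsto.inv_tendsto_atTop h1
    have h3 := h2.neg
    simp only [neg_zero] at h3
    refine h3.congr fun b => ?_
    rw [← inv_neg, neg_neg]
  have hlimI : ∀ c : ℝ, Tendsto (fun b => ∫ s in t..b, c * β s)
      (nhdsWithin Tstar (Set.Iio Tstar)) (nhds (∫ s in t..Tstar, c * β s)) := by
    intro c
    have hint : IntegrableOn (fun s => c * β s) (Set.uIcc t Tstar) volume := by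
      rw [Set.uIcc_of_le htT.le]
      exact (continuousOn_const.mul
        (hβc.mono (Set.Icc_subset_Icc ht0.le le_rfl))).integrableOn_Icc
    have hcont := intervalIntegral.continuousOn_primitive_interval hint
    have hmem : Tstar ∈ Set.uIcc t Tstar := by
      rw [Set.uIcc_of_le htT.le]; exact ⟨htT.le, le_rfl⟩
    have hcw : ContinuousWithinAt (fun x => ∫ s in t..x, c * β s)
        (Set.uIcc t Tstar) Tstar := hcont.continuousWithinAt hmem
    have hsub : Set.Ioo t Tstar ⊆ Set.uIcc t Tstar := by
      rw [Set.uIcc_of_le htT.le]; exact Set.Ioo_subset_Icc_self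
    have hcw2 := hcw.mono hsub
    rw [← nhdsWithin_Ioo_eq_nhdsLT htT]
    exact hcw2
  have hev1 : ∀ᶠ b in nhdsWithin Tstar (Set.Iio Tstar),
      (∫ s in t..b, (1/2 - θK) * β s) ≤ (M b)⁻¹ - (M t)⁻¹ := by
    filter_upwards [Ioo_mem_nhdsLT_of_mem (⟨htT, le_rfl⟩ : Tstar ∈ Set.Ioc t Tstar)] with b hb
    exact (hbnd b hb).1
  have hev2 : ∀ᶠ b in nhdsWithin Tstar (Set.Iio Tstar),
      (M b)⁻¹ - (M t)⁻¹ ≤ ∫ s in t..b, (1/2 + θK) * β s := by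
    filter_upwards [Ioo_mem_nhdsLT_of_mem (⟨htT, le_rfl⟩ : Tstar ∈ Set.Ioc t Tstar)] with b hb
    exact (hbnd b hb).2
  have hl := le_of_tendsto_of_tendsto (hlimI (1/2 - θK)) hlim1 hev1
  have hu := le_of_tendsto_of_tendsto hlim1 (hlimI (1/2 + θK)) hev2
  have hIc : ∀ c : ℝ, (∫ s in t..Tstar, c * β s) = c * B := fun c => by
    rw [intervalIntegral.integral_const_mul, hBdef]
  rw [hIc] at hl hu
  have hβint : IntervalIntegrable β volume t Tstar := by
    rw [intervalIntegrable_iff_integrableOn_Ioc_of_le htT.le]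
    exact ((hβc.mono (Set.Icc_subset_Icc ht0.le le_rfl)).integrableOn_Icc).mono_set
      Set.Ioc_subset_Icc_self
  have hBpos : 0 < B := by
    rw [hBdef]
    exact intervalIntegral.intervalIntegral_pos_of_pos_on hβint
      (fun s hs => hβpos s ⟨ht0.le.trans hs.1.le, hs.2.le⟩) htT
  -- final algebra
  obtain ⟨y, hydef⟩ : ∃ x : ℝ, x = -(M t)⁻¹ := ⟨_, rfl⟩
  have hl' : (1/2 - θK) * B ≤ y := by rw [hydef]; linarith
  have hu' : y ≤ (1/2 + θK) * B := by rw [hydef]; linarith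
  have hyl : (1/2 - θ) * B ≤ y := le_trans (by nlinarith) hl'
  have hyu : y ≤ (1/2 + θ) * B := hu'.trans (by nlinarith)
  have hy0 : 0 < y := lt_of_lt_of_le (by nlinarith) hyl
  have hMt : M t ≤ -K := hst t ⟨htm.1.le, htT⟩
  have hMt0 : M t ≠ 0 := ne_of_lt (by linarith)
  have hMy : M t * y = -1 := by
    rw [hydef, mul_neg, mul_inv_cancel₀ hMt0]
  rw [Real.dist_eq, ← hBdef]
  have hMtB : (M t * B) * y = -B := by
    calc (M t * B) * y = (M t * y) * B := by ring
      _ = -B := by rw [hMy]; ring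
  have habs : |M t * B + 2| ≤ 6 * θ := by
    rw [abs_le]
    have hp1 := mul_le_mul_of_nonneg_left hyl (show (0:ℝ) ≤ 2 + 6 * θ by linarith)
    have hp2 := mul_le_mul_of_nonneg_left hyu (show (0:ℝ) ≤ 2 by norm_num)
    constructor
    · nlinarith [mul_pos hθ0 hBpos, mul_pos hy0 hBpos]
    · nlinarith [mul_pos hθ0 hBpos, mul_pos hy0 hBpos]
  calc |M t * B - (-2)| = |M t * B + 2| := by ring_nf
    _ ≤ 6 * θ := habs
    _ < ε := by linarith
end

section
/- Let T ∈ (0,∞], let β : [0,T) → ℝ be continuous, and let v : [0,T) × ℝ → ℝ be smooth and 2π-periodic in its spatial variable, satisfying v_t − v_{txx} + 3β(t) v v_x = 2β(t) v_x v_{xx} + β(t) v v_{xxx} at every point of [0,T) × ℝ. Then the energy E(t) := ∫₀^{2π} ( v(t,x)² + v_x(t,x)² ) dx is constant in time: E(t) = E(0) for every t ∈ [0,T). -/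
open MeasureTheory Set

/-- The time interval `[0,T)`, where `T ∈ (0,∞]` is encoded as an `EReal`. -/
def timeInt (T : EReal) : Set ℝ := {t : ℝ | 0 ≤ t ∧ (t : EReal) < T}

/-- Conservation of the `H¹` energy `E(t) = ∫₀^{2π} (v² + v_x²) dx` for smooth
`2π`-periodic solutions of the rescaled Camassa–Holm equation
`v_t - v_{txx} + 3β v v_x = 2β v_x v_{xx} + β v v_{xxx}` on `[0,T) × ℝ`.
The partial derivatives `v_x, v_{xx}, v_{xxx}, v_t, v_{tx}, v_{txx}` are given
as functions together with the corresponding derivative facts and continuity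
(this is the meaning of "smooth" here). -/
theorem rescaled_CH_energy_conservation
    (T : EReal) (hT : 0 < T) (β : ℝ → ℝ)
    (v vt vx vxx vxxx vtx vtxx : ℝ → ℝ → ℝ)
    (hβ : ContinuousOn β (timeInt T))
    (hper : ∀ t ∈ timeInt T, ∀ x : ℝ, v t (x + 2 * Real.pi) = v t x)
    (hvx : ∀ t ∈ timeInt T, ∀ x : ℝ, HasDerivAt (fun y => v t y) (vx t x) x)
    (hvxx : ∀ t ∈ timeInt T, ∀ x : ℝ, HasDerivAt (fun y => vx t y) (vxx t x) x)
    (hvxxx : ∀ t ∈ timeInt T, ∀ x : ℝ, HasDerivAt (fun y => vxx t y) (vxxx t x) x)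
    (hvt : ∀ x : ℝ, ∀ t ∈ timeInt T,
      HasDerivWithinAt (fun s => v s x) (vt t x) (timeInt T) t)
    (hvtx : ∀ x : ℝ, ∀ t ∈ timeInt T,
      HasDerivWithinAt (fun s => vx s x) (vtx t x) (timeInt T) t)
    (hvtxx : ∀ x : ℝ, ∀ t ∈ timeInt T,
      HasDerivWithinAt (fun s => vxx s x) (vtxx t x) (timeInt T) t)
    (hcont : ∀ f ∈ [v, vt, vx, vxx, vxxx, vtx, vtxx],
      ContinuousOn (fun p : ℝ × ℝ => f p.1 p.2) {p : ℝ × ℝ | p.1 ∈ timeInt T})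
    (hPDE : ∀ t ∈ timeInt T, ∀ x : ℝ,
      vt t x - vtxx t x + 3 * β t * v t x * vx t x
        = 2 * β t * vx t x * vxx t x + β t * v t x * vxxx t x) :
    ∀ t ∈ timeInt T,
      (∫ x in (0 : ℝ)..(2 * Real.pi), ((v t x) ^ 2 + (vx t x) ^ 2))
        = ∫ x in (0 : ℝ)..(2 * Real.pi), ((v 0 x) ^ 2 + (vx 0 x) ^ 2) := by
  have h0S : (0:ℝ) ∈ timeInt T := ⟨le_refl 0, by exact_mod_cast hT⟩
  -- basic structure of the time interval
  have hup : ∀ t ∈ timeInt T, ∃ t', t' ∈ timeInt T ∧ t < t' := by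
    intro t ht
    obtain ⟨y, hy1, hy2⟩ := EReal.exists_between_coe_real ht.2
    have hty : t < y := by exact_mod_cast hy1
    exact ⟨y, ⟨le_trans ht.1 hty.le, hy2⟩, hty⟩
  have hIcc : ∀ t' ∈ timeInt T, Icc (0:ℝ) t' ⊆ timeInt T := by
    intro t' ht' s hs
    exact ⟨hs.1, lt_of_le_of_lt (by exact_mod_cast hs.2) ht'.2⟩
  have hIco : ∀ t ∈ timeInt T, ∀ t', t' ∈ timeInt T → t < t' → Ico t t' ⊆ timeInt T := by
    intro t ht t' ht' htt' s hs
    exact ⟨le_trans ht.1 hs.1, lt_of_le_of_lt (by exact_mod_cast hs.2.le) ht'.2⟩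
  have hnhds : ∀ t ∈ timeInt T, ∀ s : ℝ, 0 < s → s < t → timeInt T ∈ nhds s := by
    intro t ht s hs1 hs2
    exact Filter.mem_of_superset (Ioo_mem_nhds hs1 hs2)
      (fun u hu => ⟨hu.1.le, lt_trans (by exact_mod_cast hu.2) ht.2⟩)
  have hudiff : ∀ t ∈ timeInt T, UniqueDiffWithinAt ℝ (timeInt T) t := by
    intro t ht
    obtain ⟨t', ht', htt'⟩ := hup t ht
    exact ((uniqueDiffOn_Ico t t') t (left_mem_Ico.2 htt')).mono (hIco t ht t' ht' htt')
  -- continuity of the individual functions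
  have hcv := hcont v (by simp)
  have hcvt := hcont vt (by simp)
  have hcvx := hcont vx (by simp)
  have hcvxx := hcont vxx (by simp)
  have hcvxxx := hcont vxxx (by simp)
  have hcvtx := hcont vtx (by simp)
  have hcvtxx := hcont vtxx (by simp)
  -- continuity along horizontal / vertical lines
  have hlineX : ∀ f : ℝ → ℝ → ℝ,
      ContinuousOn (fun p : ℝ × ℝ => f p.1 p.2) {p : ℝ × ℝ | p.1 ∈ timeInt T} →
      ∀ t ∈ timeInt T, Continuous (fun x => f t x) := by
    intro f hf t ht
    rw [← continuousOn_univ]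
    exact hf.comp (continuous_const.prodMk continuous_id).continuousOn (fun x _ => ht)
  have hlineT : ∀ f : ℝ → ℝ → ℝ,
      ContinuousOn (fun p : ℝ × ℝ => f p.1 p.2) {p : ℝ × ℝ | p.1 ∈ timeInt T} →
      ∀ x : ℝ, ContinuousOn (fun s => f s x) (timeInt T) := by
    intro f hf x
    exact hf.comp (continuous_id.prodMk continuous_const).continuousOn (fun s hs => hs)
  -- FTC in time
  have ftcT : ∀ f ft : ℝ → ℝ → ℝ,
      (∀ x : ℝ, ∀ s ∈ timeInt T, HasDerivWithinAt (fun u => f u x) (ft s x) (timeInt T) s) →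
      ContinuousOn (fun p : ℝ × ℝ => f p.1 p.2) {p : ℝ × ℝ | p.1 ∈ timeInt T} →
      ContinuousOn (fun p : ℝ × ℝ => ft p.1 p.2) {p : ℝ × ℝ | p.1 ∈ timeInt T} →
      ∀ x : ℝ, ∀ t ∈ timeInt T, f t x - f 0 x = ∫ s in (0:ℝ)..t, ft s x := by
    intro f ft hderiv hf hft x t ht
    refine (intervalIntegral.integral_eq_sub_of_hasDeriv_right_of_le (E := ℝ)
      (f := fun u => f u x) (f' := fun s => ft s x) ht.1 ?_ ?_ ?_).symm
    · exact (hlineT f hf x).mono (hIcc t ht)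
    · intro s hs
      have hsS : s ∈ timeInt T := hIcc t ht ⟨hs.1.le, hs.2.le⟩
      exact ((hderiv x s hsS).hasDerivAt (hnhds t ht s hs.1 hs.2)).hasDerivWithinAt
    · exact ContinuousOn.intervalIntegrable_of_Icc ht.1 ((hlineT ft hft x).mono (hIcc t ht))
  -- FTC in space
  have ftcX : ∀ g gx : ℝ → ℝ, (∀ x, HasDerivAt g (gx x) x) → Continuous gx →
      ∀ a b : ℝ, ∫ y in a..b, gx y = g b - g a := by
    intro g gx hg hgx a b
    exact intervalIntegral.integral_eq_sub_of_hasDerivAt (fun y _ => hg y)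
      (hgx.intervalIntegrable a b)
  -- spatial periodicity of derivatives
  have per : ∀ (g gx : ℝ → ℝ) (c : ℝ), (∀ x, HasDerivAt g (gx x) x) →
      (∀ x, g (x + c) = g x) → ∀ x, gx (x + c) = gx x := by
    intro g gx c hg hper x
    have h1 : HasDerivAt (fun y => g (y + c)) (gx (x + c)) x := by
      exact (by simpa using (hg (x + c)).comp x ((hasDerivAt_id x).add_const c) :
        HasDerivAt (g ∘ fun x => x + c) (gx (x + c)) x)
    have h2 : HasDerivAt (fun y => g (y + c)) (gx x) x := by
      have he : (fun y => g (y + c)) = g := funext hper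
      rw [he]; exact hg x
    exact h1.unique h2
  have hperx : ∀ t ∈ timeInt T, ∀ x, vx t (x + 2 * Real.pi) = vx t x := fun t ht =>
    per (v t) (vx t) _ (hvx t ht) (hper t ht)
  have hperxx : ∀ t ∈ timeInt T, ∀ x, vxx t (x + 2 * Real.pi) = vxx t x := fun t ht =>
    per (vx t) (vxx t) _ (hvxx t ht) (hperx t ht)
  have hpertx : ∀ t ∈ timeInt T, ∀ x, vtx t (x + 2 * Real.pi) = vtx t x := by
    intro t ht x
    have h1 : HasDerivWithinAt (fun s => vx s (x + 2 * Real.pi)) (vtx t (x + 2 * Real.pi))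
        (timeInt T) t := hvtx _ t ht
    have h2 : HasDerivWithinAt (fun s => vx s (x + 2 * Real.pi)) (vtx t x) (timeInt T) t :=
      (hvtx x t ht).congr (fun s hs => hperx s hs x) (hperx t ht x)
    rw [← h1.derivWithin (hudiff t ht), ← h2.derivWithin (hudiff t ht)]
  -- Fubini on rectangles
  have fub : ∀ F : ℝ → ℝ → ℝ,
      ContinuousOn (fun p : ℝ × ℝ => F p.1 p.2) {p : ℝ × ℝ | p.1 ∈ timeInt T} →
      ∀ t ∈ timeInt T, ∀ a b : ℝ, a ≤ b →
      (∫ y in a..b, ∫ s in (0:ℝ)..t, F s y) = ∫ s in (0:ℝ)..t, ∫ y in a..b, F s y := by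
    intro F hF t ht a b hab
    simp only [intervalIntegral.integral_of_le hab, intervalIntegral.integral_of_le ht.1]
    have hint : Integrable (Function.uncurry (fun y s => F s y))
        ((volume.restrict (Ioc a b)).prod (volume.restrict (Ioc (0:ℝ) t))) := by
      rw [Measure.prod_restrict]
      refine IntegrableOn.mono_set ?_ (Set.prod_mono Ioc_subset_Icc_self Ioc_subset_Icc_self)
      apply ContinuousOn.integrableOn_compact (isCompact_Icc.prod isCompact_Icc)
      exact hF.comp continuous_swap.continuousOn
        (fun p hp => hIcc t ht hp.2)
    exact MeasureTheory.integral_integral_swap hint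
  -- continuity in time of parametric spatial integrals of vtxx
  have hpsi_cont : ∀ x : ℝ, ∀ t ∈ timeInt T,
      ContinuousWithinAt (fun s => ∫ y in (0:ℝ)..x, vtxx s y) (timeInt T) t := by
    intro x t ht
    obtain ⟨t', ht', htt'⟩ := hup t ht
    obtain ⟨C, hC⟩ := (isCompact_Icc.prod isCompact_uIcc :
        IsCompact (Icc (0:ℝ) t' ×ˢ uIcc (0:ℝ) x)).exists_bound_of_continuousOn
      (hcvtxx.mono (fun p hp => hIcc t' ht' hp.1))
    refine intervalIntegral.continuousWithinAt_of_dominated_interval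
      (bound := fun _ => C) ?_ ?_ intervalIntegrable_const ?_
    · filter_upwards [self_mem_nhdsWithin] with s hs
      exact ((hlineX vtxx hcvtxx s hs)).aestronglyMeasurable
    · filter_upwards [self_mem_nhdsWithin,
        mem_nhdsWithin_of_mem_nhds (Iio_mem_nhds htt')] with s hs hs'
      refine Filter.Eventually.of_forall (fun y hy => ?_)
      exact hC (s, y) ⟨⟨hs.1, le_of_lt hs'⟩, uIoc_subset_uIcc hy⟩
    · exact Filter.Eventually.of_forall (fun y _ => (hlineT vtxx hcvtxx y) t ht)
  -- Clairaut: the spatial derivative of vtx is vtxx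
  have hvtxD : ∀ t ∈ timeInt T, ∀ x : ℝ, HasDerivAt (fun y => vtx t y) (vtxx t x) x := by
    have key : ∀ t ∈ timeInt T, ∀ x : ℝ, vtx t x - vtx t 0 = ∫ y in (0:ℝ)..x, vtxx t y := by
      intro t ht x
      obtain ⟨t', ht', htt'⟩ := hup t ht
      have hIcoS := hIco t ht t' ht' htt'
      -- step 1 : integral form of vx-differences
      have step1 : ∀ u ∈ timeInt T, (vx u x - vx u 0) - (vx 0 x - vx 0 0)
          = ∫ s in (0:ℝ)..u, ∫ y in (0:ℝ)..x, vtxx s y := by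
        intro u hu
        have e1 : ∀ w ∈ timeInt T, vx w x - vx w 0 = ∫ y in (0:ℝ)..x, vxx w y := by
          intro w hw
          exact (ftcX (vx w) (vxx w) (hvxx w hw) (hlineX vxx hcvxx w hw) 0 x).symm
        rw [e1 u hu, e1 0 h0S]
        have i1 : IntervalIntegrable (fun y => vxx u y) volume 0 x :=
          ((hlineX vxx hcvxx u hu)).intervalIntegrable 0 x
        have i2 : IntervalIntegrable (fun y => vxx 0 y) volume 0 x :=
          ((hlineX vxx hcvxx 0 h0S)).intervalIntegrable 0 x
        rw [← intervalIntegral.integral_sub i1 i2]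
        have e2 : ∀ y : ℝ, vxx u y - vxx 0 y = ∫ s in (0:ℝ)..u, vtxx s y :=
          fun y => ftcT vxx vtxx hvtxx hcvxx hcvtxx y u hu
        simp_rw [e2]
        rcases le_or_gt 0 x with hx | hx
        · exact fub vtxx hcvtxx u hu 0 x hx
        · have h := fub vtxx hcvtxx u hu x 0 hx.le
          calc (∫ y in (0:ℝ)..x, ∫ s in (0:ℝ)..u, vtxx s y)
              = -∫ y in x..(0:ℝ), ∫ s in (0:ℝ)..u, vtxx s y := by
                rw [← intervalIntegral.integral_symm]
            _ = -∫ s in (0:ℝ)..u, ∫ y in x..(0:ℝ), vtxx s y := by rw [h]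
            _ = ∫ s in (0:ℝ)..u, -∫ y in x..(0:ℝ), vtxx s y := by
                rw [intervalIntegral.integral_neg]
            _ = ∫ s in (0:ℝ)..u, ∫ y in (0:ℝ)..x, vtxx s y := by
                simp_rw [← intervalIntegral.integral_symm]
      -- derivative of the primitive of ψ on the right of t
      have hψS : ContinuousOn (fun s => ∫ y in (0:ℝ)..x, vtxx s y) (timeInt T) :=
        fun s hs => hpsi_cont x s hs
      have hSmem : timeInt T ∈ nhdsWithin t (Ioi t) := by
        refine mem_nhdsWithin.2 ⟨Iio t', isOpen_Iio, htt', ?_⟩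
        intro u hu
        exact ⟨le_trans ht.1 hu.2.le, lt_of_le_of_lt (by exact_mod_cast hu.1.le) ht'.2⟩
      have hΦψ : HasDerivWithinAt (fun u => ∫ s in (0:ℝ)..u, ∫ y in (0:ℝ)..x, vtxx s y)
          (∫ y in (0:ℝ)..x, vtxx t y) (Ici t) t := by
        refine intervalIntegral.integral_hasDerivWithinAt_right (t := Ioi t) ?_ ?_ ?_
        · exact ContinuousOn.intervalIntegrable_of_Icc ht.1 (hψS.mono (hIcc t ht))
        · refine ⟨Ioo t t', ?_, ?_⟩
          · exact mem_nhdsWithin.2 ⟨Iio t', isOpen_Iio, htt', fun u hu => ⟨hu.2, hu.1⟩⟩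
          · refine (hψS.mono ?_).aestronglyMeasurable measurableSet_Ioo
            intro u hu
            exact ⟨le_trans ht.1 hu.1.le, lt_of_le_of_lt (by exact_mod_cast hu.2.le) ht'.2⟩
        · exact (hpsi_cont x t ht).mono_of_mem_nhdsWithin hSmem
      -- compare the two derivatives of u ↦ vx u x - vx u 0 at t
      have hud : UniqueDiffWithinAt ℝ (Ico t t') t :=
        (uniqueDiffOn_Ico t t') t (left_mem_Ico.2 htt')
      have hA : HasDerivWithinAt (fun u => vx u x - vx u 0) (vtx t x - vtx t 0) (Ico t t') t :=
        ((hvtx x t ht).sub (hvtx 0 t ht)).mono hIcoS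
      have hA2 : HasDerivWithinAt (fun u => vx u x - vx u 0)
          (∫ y in (0:ℝ)..x, vtxx t y) (Ico t t') t := by
        have hconst : HasDerivWithinAt
            (fun u => (vx 0 x - vx 0 0) + ∫ s in (0:ℝ)..u, ∫ y in (0:ℝ)..x, vtxx s y)
            (∫ y in (0:ℝ)..x, vtxx t y) (Ico t t') t :=
          (hΦψ.mono Ico_subset_Ici_self).const_add _
        refine hconst.congr (fun u hu => ?_) ?_
        · have := step1 u (hIcoS hu); linarith
        · have := step1 t (hIcoS (left_mem_Ico.2 htt')); linarith
      exact (hA.derivWithin hud).symm.trans (hA2.derivWithin hud)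
    intro t ht x
    have contx := hlineX vtxx hcvtxx t ht
    have hD : HasDerivAt (fun y => vtx t 0 + ∫ z in (0:ℝ)..y, vtxx t z) (vtxx t x) x := by
      refine HasDerivAt.const_add _ ?_
      exact intervalIntegral.integral_hasDerivAt_right (contx.intervalIntegrable 0 x)
        (contx.stronglyMeasurableAtFilter volume (nhds x)) contx.continuousAt
    have heq : (fun y => vtx t 0 + ∫ z in (0:ℝ)..y, vtxx t z) = fun y => vtx t y := by
      funext y
      have := key t ht y
      linarith
    rwa [heq] at hD
  -- main argument
  intro t ht
  set L := 2 * Real.pi with hLdef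
  have hL0 : (0:ℝ) ≤ L := by positivity
  set ft : ℝ → ℝ → ℝ := fun s x => 2 * v s x * vt s x + 2 * vx s x * vtx s x with hftdef
  have hftcont : ContinuousOn (fun p : ℝ × ℝ => ft p.1 p.2) {p : ℝ × ℝ | p.1 ∈ timeInt T} :=
    ((continuousOn_const.mul hcv).mul hcvt).add ((continuousOn_const.mul hcvx).mul hcvtx)
  have hfcont : ContinuousOn (fun p : ℝ × ℝ => v p.1 p.2 ^ 2 + vx p.1 p.2 ^ 2)
      {p : ℝ × ℝ | p.1 ∈ timeInt T} := (hcv.pow 2).add (hcvx.pow 2)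
  have hfderiv : ∀ x : ℝ, ∀ s ∈ timeInt T,
      HasDerivWithinAt (fun u => v u x ^ 2 + vx u x ^ 2) (ft s x) (timeInt T) s := by
    intro x s hs
    have h := ((hvt x s hs).pow 2).add ((hvtx x s hs).pow 2)
    convert h using 1
    show 2 * v s x * vt s x + 2 * vx s x * vtx s x = _
    push_cast
    ring
    all_goals rfl
  have hInt1 : ∀ u ∈ timeInt T,
      IntervalIntegrable (fun x => v u x ^ 2 + vx u x ^ 2) volume 0 L := by
    intro u hu
    exact (((hlineX v hcv u hu).pow 2).add ((hlineX vx hcvx u hu).pow 2)).intervalIntegrable 0 L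
  have stepA : (∫ x in (0:ℝ)..L, (v t x ^ 2 + vx t x ^ 2))
      - ∫ x in (0:ℝ)..L, (v 0 x ^ 2 + vx 0 x ^ 2)
      = ∫ x in (0:ℝ)..L, ∫ s in (0:ℝ)..t, ft s x := by
    rw [← intervalIntegral.integral_sub (hInt1 t ht) (hInt1 0 h0S)]
    apply intervalIntegral.integral_congr
    intro x _
    exact ftcT (fun u y => v u y ^ 2 + vx u y ^ 2) ft hfderiv hfcont hftcont x t ht
  have stepB : (∫ x in (0:ℝ)..L, ∫ s in (0:ℝ)..t, ft s x)
      = ∫ s in (0:ℝ)..t, ∫ x in (0:ℝ)..L, ft s x :=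
    fub ft hftcont t ht 0 L hL0
  have stepC : ∀ s ∈ timeInt T, (∫ x in (0:ℝ)..L, ft s x) = 0 := by
    intro s hs
    set G : ℝ → ℝ := fun x =>
      2 * β s * (v s x ^ 2 * vxx s x) - 2 * β s * v s x ^ 3 + 2 * (v s x * vtx s x) with hGdef
    have hGderiv : ∀ x, HasDerivAt G (ft s x) x := by
      intro x
      have h1 := (((hvx s hs x).pow 2).mul (hvxxx s hs x)).const_mul (2 * β s)
      have h2 := ((hvx s hs x).pow 3).const_mul (2 * β s)
      have h3 := ((hvx s hs x).mul (hvtxD s hs x)).const_mul (2:ℝ)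
      have h := (h1.sub h2).add h3
      convert h using 1
      show 2 * v s x * vt s x + 2 * vx s x * vtx s x = _
      push_cast [Pi.pow_apply]
      linear_combination (2 * v s x) * hPDE s hs x
      all_goals rfl
    have hftline : Continuous (fun x => ft s x) := hlineX ft hftcont s hs
    rw [ftcX G (fun x => ft s x) hGderiv hftline 0 L]
    have e1 : v s L = v s 0 := by have := hper s hs 0; rwa [zero_add] at this
    have e2 : vxx s L = vxx s 0 := by have := hperxx s hs 0; rwa [zero_add] at this
    have e3 : vtx s L = vtx s 0 := by have := hpertx s hs 0; rwa [zero_add] at this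
    simp only [hGdef]
    rw [e1, e2, e3, sub_self]
  have stepD : (∫ s in (0:ℝ)..t, ∫ x in (0:ℝ)..L, ft s x) = 0 := by
    have hzero : ∀ s ∈ Set.uIcc (0:ℝ) t, (∫ x in (0:ℝ)..L, ft s x) = 0 := by
      intro s hs
      rw [Set.uIcc_of_le ht.1] at hs
      exact stepC s (hIcc t ht hs)
    rw [intervalIntegral.integral_congr hzero]
    simp
  have := stepA.trans (stepB.trans stepD)
  linarith
end

section
/- Let T ∈ (0,∞], let β : [0,T) → ℝ be continuous, and let v : [0,T) × ℝ → ℝ be smooth and 2π-periodic in its spatial variable, satisfying v_t − v_{txx} + 3β(t) v v_x = 2β(t) v_x v_{xx} + β(t) v v_{xxx} at every point of [0,T) × ℝ. Define V := v − v_{xx}. Then: (i) for every t ∈ [0,T), d/dt ∫₀^{2π} V(t,x)² dx = −3 β(t) ∫₀^{2π} V(t,x)² v_x(t,x) dx; and (ii) if K > 0 is such that β(t) v_x(t,x) ≥ −K for all (t,x) ∈ [0,T) × ℝ, then ∫₀^{2π} V(t,x)² dx ≤ e^{3Kt} ∫₀^{2π} V(0,x)² dx for all t ∈ [0,T). -/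
open MeasureTheory Set Filter Topology

lemma timeInt_zero {T : EReal} (hT : 0 < T) : (0:ℝ) ∈ timeInt T := by
  refine ⟨le_refl _, ?_⟩; simpa using hT

lemma timeInt_Icc {T : EReal} {t : ℝ} (ht : t ∈ timeInt T) : Set.Icc 0 t ⊆ timeInt T := by
  intro z hz
  exact ⟨hz.1, lt_of_le_of_lt (EReal.coe_le_coe_iff.2 hz.2) ht.2⟩

lemma timeInt_up {T : EReal} {t : ℝ} (ht : t ∈ timeInt T) : ∃ b ∈ timeInt T, t < b := by
  induction T with
  | bot => exact absurd ht.2 (by simp)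
  | coe c =>
      have h1 : t < c := EReal.coe_lt_coe_iff.1 ht.2
      refine ⟨(t + c) / 2, ⟨by linarith [ht.1], ?_⟩, by linarith⟩
      exact EReal.coe_lt_coe_iff.2 (by linarith)
  | top =>
      exact ⟨t + 1, ⟨by linarith [ht.1], EReal.coe_lt_top _⟩, by linarith⟩

lemma timeInt_nhds {T : EReal} {t : ℝ} (ht : t ∈ timeInt T) (h : 0 < t) : timeInt T ∈ 𝓝 t := by
  obtain ⟨b, hb, htb⟩ := timeInt_up ht
  exact Filter.mem_of_superset (Ioo_mem_nhds h htb)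
    (fun z hz => timeInt_Icc hb ⟨hz.1.le, hz.2.le⟩)

lemma timeInt_convex (T : EReal) : Convex ℝ (timeInt T) := by
  refine convex_iff_ordConnected.2 ⟨fun x hx y hy z hz => ?_⟩
  exact ⟨hx.1.trans hz.1, lt_of_le_of_lt (EReal.coe_le_coe_iff.2 hz.2) hy.2⟩

/-- For smooth `2π`-periodic solutions of the rescaled Camassa–Holm equation
`v_t - v_{txx} + 3β v v_x = 2β v_x v_{xx} + β v v_{xxx}` on `[0,T) × ℝ`, with
momentum `V = v - v_{xx}`:
(i) `d/dt ∫₀^{2π} V² dx = -3 β(t) ∫₀^{2π} V² v_x dx` on `[0,T)` (derivative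
within `[0,T)`), and
(ii) if `K > 0` and `β(t) v_x(t,x) ≥ -K` everywhere, then
`∫₀^{2π} V(t)² dx ≤ e^{3Kt} ∫₀^{2π} V(0)² dx` for all `t ∈ [0,T)`.
All the partial derivatives of `v` are given as functions together with the
corresponding derivative facts and continuity (the meaning of "smooth" here). -/
theorem rescaled_CH_momentum_L2_identity_and_gronwall
    (T : EReal) (hT : 0 < T) (β : ℝ → ℝ)
    (v vt vx vxx vxxx vtx vtxx : ℝ → ℝ → ℝ)
    (hβ : ContinuousOn β (timeInt T))
    (hper : ∀ t ∈ timeInt T, ∀ x : ℝ, v t (x + 2 * Real.pi) = v t x)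
    (hvx : ∀ t ∈ timeInt T, ∀ x : ℝ, HasDerivAt (fun y => v t y) (vx t x) x)
    (hvxx : ∀ t ∈ timeInt T, ∀ x : ℝ, HasDerivAt (fun y => vx t y) (vxx t x) x)
    (hvxxx : ∀ t ∈ timeInt T, ∀ x : ℝ, HasDerivAt (fun y => vxx t y) (vxxx t x) x)
    (hvt : ∀ x : ℝ, ∀ t ∈ timeInt T,
      HasDerivWithinAt (fun s => v s x) (vt t x) (timeInt T) t)
    (hvtx : ∀ x : ℝ, ∀ t ∈ timeInt T,
      HasDerivWithinAt (fun s => vx s x) (vtx t x) (timeInt T) t)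
    (hvtxx : ∀ x : ℝ, ∀ t ∈ timeInt T,
      HasDerivWithinAt (fun s => vxx s x) (vtxx t x) (timeInt T) t)
    (hcont : ∀ f ∈ [v, vt, vx, vxx, vxxx, vtx, vtxx],
      ContinuousOn (fun p : ℝ × ℝ => f p.1 p.2) {p : ℝ × ℝ | p.1 ∈ timeInt T})
    (hPDE : ∀ t ∈ timeInt T, ∀ x : ℝ,
      vt t x - vtxx t x + 3 * β t * v t x * vx t x
        = 2 * β t * vx t x * vxx t x + β t * v t x * vxxx t x) :
    (∀ t ∈ timeInt T,
      HasDerivWithinAt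
        (fun s => ∫ x in (0 : ℝ)..(2 * Real.pi), (v s x - vxx s x) ^ 2)
        (-3 * β t * ∫ x in (0 : ℝ)..(2 * Real.pi), (v t x - vxx t x) ^ 2 * vx t x)
        (timeInt T) t) ∧
    (∀ K : ℝ, 0 < K → (∀ t ∈ timeInt T, ∀ x : ℝ, -K ≤ β t * vx t x) →
      ∀ t ∈ timeInt T,
        (∫ x in (0 : ℝ)..(2 * Real.pi), (v t x - vxx t x) ^ 2)
          ≤ Real.exp (3 * K * t) *
              ∫ x in (0 : ℝ)..(2 * Real.pi), (v 0 x - vxx 0 x) ^ 2) := by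
  have h0S : (0:ℝ) ∈ timeInt T := timeInt_zero hT
  have hπ : (0:ℝ) ≤ 2 * Real.pi := by positivity
  -- continuity facts
  have hcv := hcont v (by simp)
  have hcvt := hcont vt (by simp)
  have hcvx := hcont vx (by simp)
  have hcvxx := hcont vxx (by simp)
  have hcvxxx := hcont vxxx (by simp)
  have hcvtxx := hcont vtxx (by simp)
  clear hcont
  -- fixed time / fixed space continuity
  have hfix_t : ∀ (f : ℝ → ℝ → ℝ),
      ContinuousOn (fun p : ℝ × ℝ => f p.1 p.2) {p : ℝ × ℝ | p.1 ∈ timeInt T} →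
      ∀ t ∈ timeInt T, Continuous (fun x => f t x) := by
    intro f hf t ht
    exact hf.comp_continuous (Continuous.prodMk_right t) (fun x => ht)
  have hfix_x : ∀ (f : ℝ → ℝ → ℝ),
      ContinuousOn (fun p : ℝ × ℝ => f p.1 p.2) {p : ℝ × ℝ | p.1 ∈ timeInt T} →
      ∀ x : ℝ, ContinuousOn (fun s => f s x) (timeInt T) := by
    intro f hf x
    exact hf.comp ((continuous_id.prodMk continuous_const).continuousOn) (fun s hs => hs)
  -- abbreviations
  set Φ : ℝ → ℝ := fun s => ∫ x in (0:ℝ)..(2*Real.pi), (v s x - vxx s x) ^ 2 with hΦdef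
  set φ : ℝ → ℝ :=
    fun s => ∫ x in (0:ℝ)..(2*Real.pi), 2*(v s x - vxx s x)*(vt s x - vtxx s x) with hφdef
  -- periodicity of vx, vxx
  have hperx : ∀ t ∈ timeInt T, ∀ x : ℝ, vx t (x + 2*Real.pi) = vx t x := by
    intro t ht x
    have h1 : HasDerivAt (fun y => v t (y + 2*Real.pi)) (vx t (x + 2*Real.pi)) x := by
      simpa [Function.comp_def] using (hvx t ht (x + 2*Real.pi)).comp x ((hasDerivAt_id x).add_const (2*Real.pi))
    have h2 : HasDerivAt (fun y => v t (y + 2*Real.pi)) (vx t x) x := by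
      have he : (fun y => v t (y + 2*Real.pi)) = fun y => v t y := funext (hper t ht)
      rw [he]; exact hvx t ht x
    exact h1.unique h2
  have hperxx : ∀ t ∈ timeInt T, ∀ x : ℝ, vxx t (x + 2*Real.pi) = vxx t x := by
    intro t ht x
    have h1 : HasDerivAt (fun y => vx t (y + 2*Real.pi)) (vxx t (x + 2*Real.pi)) x := by
      simpa [Function.comp_def] using (hvxx t ht (x + 2*Real.pi)).comp x ((hasDerivAt_id x).add_const (2*Real.pi))
    have h2 : HasDerivAt (fun y => vx t (y + 2*Real.pi)) (vxx t x) x := by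
      have he : (fun y => vx t (y + 2*Real.pi)) = fun y => vx t y := funext (hperx t ht)
      rw [he]; exact hvxx t ht x
    exact h1.unique h2
  -- Step A : spatial identity
  have hA : ∀ t ∈ timeInt T,
      φ t = -3 * β t * ∫ x in (0:ℝ)..(2*Real.pi), (v t x - vxx t x) ^ 2 * vx t x := by
    intro t ht
    have cv : Continuous fun x => v t x := hfix_t v hcv t ht
    have cvt : Continuous fun x => vt t x := hfix_t vt hcvt t ht
    have cvx : Continuous fun x => vx t x := hfix_t vx hcvx t ht
    have cvxx : Continuous fun x => vxx t x := hfix_t vxx hcvxx t ht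
    have cvxxx : Continuous fun x => vxxx t x := hfix_t vxxx hcvxxx t ht
    have cvtxx : Continuous fun x => vtxx t x := hfix_t vtxx hcvtxx t ht
    set b := β t with hb
    set G : ℝ → ℝ := fun y => -b * (v t y * (v t y - vxx t y) ^ 2) with hGdef
    set G' : ℝ → ℝ := fun y =>
      -b * (vx t y * (v t y - vxx t y) ^ 2
        + v t y * (2*(v t y - vxx t y)*(vx t y - vxxx t y))) with hG'def
    have hG : ∀ y : ℝ, HasDerivAt G (G' y) y := by
      intro y
      have hV : HasDerivAt (fun y => v t y - vxx t y) (vx t y - vxxx t y) y :=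
        (hvx t ht y).sub (hvxxx t ht y)
      have hV2 : HasDerivAt (fun y => (v t y - vxx t y) ^ 2)
          (2*(v t y - vxx t y)*(vx t y - vxxx t y)) y := by
        have := hV.pow 2
        refine this.congr_deriv ?_
        push_cast; ring
      exact (((hvx t ht y).mul hV2).const_mul (-b))
    have hkey : ∀ x : ℝ, 2*(v t x - vxx t x)*(vt t x - vtxx t x)
        = -3*b*((v t x - vxx t x) ^ 2 * vx t x) + G' x := by
      intro x
      have hp := hPDE t ht x
      simp only [hG'def]
      linear_combination (2*(v t x - vxx t x)) * hp
    have hGint : (∫ x in (0:ℝ)..(2*Real.pi), G' x) = G (2*Real.pi) - G 0 :=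
      intervalIntegral.integral_eq_sub_of_hasDerivAt (fun x _ => hG x)
        (by apply Continuous.intervalIntegrable; fun_prop)
    have hG0 : G (2*Real.pi) = G 0 := by
      rw [show (2*Real.pi) = 0 + 2*Real.pi by ring]
      simp only [hGdef]
      rw [hper t ht 0, hperxx t ht 0]
    have h1 : IntervalIntegrable (fun x => -3*b*((v t x - vxx t x) ^ 2 * vx t x))
        volume 0 (2*Real.pi) := by
      apply Continuous.intervalIntegrable; fun_prop
    have h2 : IntervalIntegrable G' volume 0 (2*Real.pi) := by
      apply Continuous.intervalIntegrable; fun_prop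
    calc φ t
        = ∫ x in (0:ℝ)..(2*Real.pi), (-3*b*((v t x - vxx t x) ^ 2 * vx t x) + G' x) := by
          apply intervalIntegral.integral_congr
          intro x _
          exact hkey x
      _ = (∫ x in (0:ℝ)..(2*Real.pi), -3*b*((v t x - vxx t x) ^ 2 * vx t x))
            + ∫ x in (0:ℝ)..(2*Real.pi), G' x := intervalIntegral.integral_add h1 h2
      _ = -3 * b * ∫ x in (0:ℝ)..(2*Real.pi), (v t x - vxx t x) ^ 2 * vx t x := by
          rw [hGint, hG0, sub_self, add_zero, intervalIntegral.integral_const_mul]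
  -- time derivative of the integrand
  have hWt : ∀ x : ℝ, ∀ t ∈ timeInt T,
      HasDerivWithinAt (fun s => (v s x - vxx s x) ^ 2)
        (2*(v t x - vxx t x)*(vt t x - vtxx t x)) (timeInt T) t := by
    intro x t ht
    have h := ((hvt x t ht).sub (hvtxx x t ht)).pow 2
    refine h.congr_deriv ?_
    push_cast [Pi.sub_apply]
    ring
  -- Step B : FTC in time for fixed x
  have hB : ∀ t ∈ timeInt T, ∀ x : ℝ,
      (∫ s in (0:ℝ)..t, 2*(v s x - vxx s x)*(vt s x - vtxx s x))
        = (v t x - vxx t x) ^ 2 - (v 0 x - vxx 0 x) ^ 2 := by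
    intro t ht x
    apply intervalIntegral.integral_eq_sub_of_hasDeriv_right_of_le ht.1
    · exact (((hfix_x v hcv x).sub (hfix_x vxx hcvxx x)).pow 2).mono (timeInt_Icc ht)
    · intro s hs
      have hsS : s ∈ timeInt T := timeInt_Icc ht ⟨hs.1.le, hs.2.le⟩
      exact (((hWt x s hsS).hasDerivAt (timeInt_nhds hsS hs.1)).hasDerivWithinAt)
    · apply ContinuousOn.intervalIntegrable
      rw [uIcc_of_le ht.1]
      exact ((continuousOn_const.mul ((hfix_x v hcv x).sub (hfix_x vxx hcvxx x))).mul
        ((hfix_x vt hcvt x).sub (hfix_x vtxx hcvtxx x))).mono (timeInt_Icc ht)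
  -- Step C : Fubini
  have hcontWtJ : ContinuousOn
      (fun p : ℝ × ℝ => 2*(v p.1 p.2 - vxx p.1 p.2)*(vt p.1 p.2 - vtxx p.1 p.2))
      {p : ℝ × ℝ | p.1 ∈ timeInt T} :=
    (continuousOn_const.mul (hcv.sub hcvxx)).mul (hcvt.sub hcvtxx)
  have hC : ∀ t ∈ timeInt T,
      (∫ x in (0:ℝ)..(2*Real.pi), ∫ s in (0:ℝ)..t, 2*(v s x - vxx s x)*(vt s x - vtxx s x))
        = ∫ s in (0:ℝ)..t, φ s := by
    intro t ht
    have hint : IntegrableOn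
        (fun p : ℝ × ℝ => 2*(v p.2 p.1 - vxx p.2 p.1)*(vt p.2 p.1 - vtxx p.2 p.1))
        (Set.Ioc 0 (2*Real.pi) ×ˢ Set.Ioc 0 t) (volume.prod volume) := by
      apply MeasureTheory.IntegrableOn.mono_set
        (t := Set.Icc 0 (2*Real.pi) ×ˢ Set.Icc 0 t) _
        (Set.prod_mono Set.Ioc_subset_Icc_self Set.Ioc_subset_Icc_self)
      apply ContinuousOn.integrableOn_compact (isCompact_Icc.prod isCompact_Icc)
      apply hcontWtJ.comp continuous_swap.continuousOn
      intro p hp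
      exact timeInt_Icc ht hp.2
    have hI : Integrable
        (Function.uncurry fun (x s : ℝ) => 2*(v s x - vxx s x)*(vt s x - vtxx s x))
        ((volume.restrict (Set.Ioc 0 (2*Real.pi))).prod (volume.restrict (Set.Ioc 0 t))) := by
      rw [Measure.prod_restrict]
      exact hint
    rw [intervalIntegral.integral_of_le hπ, intervalIntegral.integral_of_le ht.1]
    simp_rw [intervalIntegral.integral_of_le ht.1, hφdef, intervalIntegral.integral_of_le hπ]
    exact MeasureTheory.integral_integral_swap hI
  have hD : ∀ t ∈ timeInt T, Φ t = Φ 0 + ∫ s in (0:ℝ)..t, φ s := by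
    intro t ht
    have e1 : (∫ s in (0:ℝ)..t, φ s)
        = ∫ x in (0:ℝ)..(2*Real.pi), ((v t x - vxx t x)^2 - (v 0 x - vxx 0 x)^2) := by
      rw [← hC t ht]
      apply intervalIntegral.integral_congr
      intro x _
      exact hB t ht x
    have i1 : IntervalIntegrable (fun x => (v t x - vxx t x)^2) volume 0 (2*Real.pi) := by
      apply Continuous.intervalIntegrable
      exact ((hfix_t v hcv t ht).sub (hfix_t vxx hcvxx t ht)).pow 2
    have i0 : IntervalIntegrable (fun x => (v 0 x - vxx 0 x)^2) volume 0 (2*Real.pi) := by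
      apply Continuous.intervalIntegrable
      exact ((hfix_t v hcv 0 h0S).sub (hfix_t vxx hcvxx 0 h0S)).pow 2
    rw [e1, intervalIntegral.integral_sub i1 i0]
    simp only [hΦdef]
    ring
  have hφcont : ∀ b ∈ timeInt T, ContinuousOn φ (Set.Icc 0 b) := by
    intro b hb
    rw [continuousOn_iff_continuous_restrict]
    have hu : Continuous (Function.uncurry
        fun (s : Set.Icc (0:ℝ) b) (x : ℝ) =>
          2*(v s.1 x - vxx s.1 x)*(vt s.1 x - vtxx s.1 x)) := by
      apply hcontWtJ.comp_continuous (continuous_subtype_val.prodMap continuous_id)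
      intro q
      exact timeInt_Icc hb q.1.2
    exact intervalIntegral.continuous_parametric_intervalIntegral_of_continuous' hu 0 (2*Real.pi)
  -- derivative of Φ
  have key : ∀ t ∈ timeInt T, HasDerivWithinAt Φ (φ t) (timeInt T) t := by
    intro t ht
    obtain ⟨b, hbS, htb⟩ := timeInt_up ht
    have hφc := hφcont b hbS
    have hsubIcc : Set.Icc (0:ℝ) t ⊆ Set.Icc 0 b := Set.Icc_subset_Icc le_rfl htb.le
    have hint : IntervalIntegrable φ volume 0 t := by
      apply ContinuousOn.intervalIntegrable
      rw [uIcc_of_le ht.1]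
      exact hφc.mono hsubIcc
    have hP : HasDerivWithinAt (fun u => Φ 0 + ∫ s in (0:ℝ)..u, φ s) (φ t) (timeInt T) t := by
      rcases eq_or_lt_of_le ht.1 with h0 | h0
      · subst h0
        have hb0 : (0:ℝ) < b := htb
        have hmem : Set.Icc (0:ℝ) b ∈ 𝓝[Set.Ioi (0:ℝ)] 0 := by
          apply Filter.mem_of_superset
            (Filter.inter_mem self_mem_nhdsWithin
              (mem_nhdsWithin_of_mem_nhds (Iic_mem_nhds hb0)))
          exact fun z hz => ⟨le_of_lt hz.1, hz.2⟩
        have hmeas : StronglyMeasurableAtFilter φ (𝓝[Set.Ioi (0:ℝ)] 0) volume :=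
          ⟨Set.Icc 0 b, hmem, hφc.aestronglyMeasurable measurableSet_Icc⟩
        have hcw : ContinuousWithinAt φ (Set.Ioi (0:ℝ)) 0 := by
          have h1 : ContinuousWithinAt φ (Set.Icc (0:ℝ) b) 0 := hφc 0 ⟨le_rfl, hb0.le⟩
          exact h1.mono_of_mem_nhdsWithin hmem
        have base : HasDerivWithinAt (fun u => ∫ s in (0:ℝ)..u, φ s) (φ 0)
            (Set.Ici (0:ℝ)) 0 :=
          intervalIntegral.integral_hasDerivWithinAt_right hint
            (s := Set.Ici (0:ℝ)) (t := Set.Ioi (0:ℝ)) hmeas hcw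
        exact (base.mono (fun u hu => hu.1)).const_add (Φ 0)
      · have hmem : Set.Icc (0:ℝ) b ∈ 𝓝 t := Icc_mem_nhds h0 htb
        have hmeas : StronglyMeasurableAtFilter φ (𝓝 t) volume :=
          ⟨Set.Icc 0 b, hmem, hφc.aestronglyMeasurable measurableSet_Icc⟩
        have hca : ContinuousAt φ t := hφc.continuousAt hmem
        have base := (intervalIntegral.integral_hasDerivAt_right hint hmeas hca).hasDerivWithinAt
          (s := timeInt T)
        exact base.const_add (Φ 0)
    exact hP.congr (fun u hu => hD u hu) (hD t ht)
  refine ⟨fun t ht => by rw [← hA t ht]; exact key t ht, ?_⟩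
  intro K hK hbd t ht
  have hψle : ∀ s ∈ timeInt T, φ s ≤ 3*K*Φ s := by
    intro s hs
    have c1 := hfix_t v hcv s hs
    have c2 := hfix_t vxx hcvxx s hs
    have c3 := hfix_t vx hcvx s hs
    have hi1 : IntervalIntegrable (fun x => -3*β s*((v s x - vxx s x)^2 * vx s x))
        volume 0 (2*Real.pi) := by
      apply Continuous.intervalIntegrable; fun_prop
    have hi2 : IntervalIntegrable (fun x => 3*K*(v s x - vxx s x)^2) volume 0 (2*Real.pi) := by
      apply Continuous.intervalIntegrable; fun_prop
    calc φ s = -3*β s * ∫ x in (0:ℝ)..(2*Real.pi), (v s x - vxx s x)^2 * vx s x := hA s hs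
      _ = ∫ x in (0:ℝ)..(2*Real.pi), -3*β s*((v s x - vxx s x)^2 * vx s x) :=
          (intervalIntegral.integral_const_mul _ _).symm
      _ ≤ ∫ x in (0:ℝ)..(2*Real.pi), 3*K*(v s x - vxx s x)^2 := by
          apply intervalIntegral.integral_mono_on hπ hi1 hi2
          intro x _
          nlinarith [sq_nonneg (v s x - vxx s x), hbd s hs x]
      _ = 3*K*Φ s := by rw [intervalIntegral.integral_const_mul]
  set g : ℝ → ℝ := fun s => Real.exp (-(3*K)*s) * Φ s with hgdef
  have hg : ∀ s ∈ timeInt T,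
      HasDerivWithinAt g (Real.exp (-(3*K)*s) * (φ s - 3*K*Φ s)) (timeInt T) s := by
    intro s hs
    have he : HasDerivAt (fun u => Real.exp (-(3*K)*u)) (-(3*K) * Real.exp (-(3*K)*s)) s := by
      have h2 := ((hasDerivAt_id s).const_mul (-(3*K))).exp
      simp only [id_eq] at h2
      convert h2 using 1
      ring
    have h3 := he.hasDerivWithinAt.mul (key s hs)
    refine h3.congr_deriv ?_
    ring
  have hanti : AntitoneOn g (timeInt T) := by
    apply antitoneOn_of_hasDerivWithinAt_nonpos (timeInt_convex T)
      (fun s hs => (hg s hs).continuousWithinAt)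
      (f' := fun s => Real.exp (-(3*K)*s) * (φ s - 3*K*Φ s))
    · intro x hx
      exact (hg x (interior_subset hx)).mono interior_subset
    · intro x hx
      exact mul_nonpos_of_nonneg_of_nonpos (Real.exp_pos _).le
        (sub_nonpos.2 (hψle x (interior_subset hx)))
  have hg0 : g t ≤ g 0 := hanti h0S ht ht.1
  have hle : Real.exp (-(3*K)*t) * Φ t ≤ Φ 0 := by simpa [hgdef] using hg0
  calc Φ t = Real.exp (3*K*t) * (Real.exp (-(3*K)*t) * Φ t) := by
        rw [← mul_assoc, ← Real.exp_add, show 3*K*t + -(3*K)*t = 0 by ring,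
          Real.exp_zero, one_mul]
    _ ≤ Real.exp (3*K*t) * Φ 0 := mul_le_mul_of_nonneg_left hle (Real.exp_pos _).le
end
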